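/- arXiv:math/0702538 — 4 statements merged into one kernel-verified Lean document; each statement's English description precedes it below -/
import Mathlib

section
/- If two Banach spaces X and Y both have the weak Banach-Saks property, then their product X × Y (with the sup norm) also has the weak Banach-Saks property. -/
open Filter MeasureTheory Topology

/-- A normed space has the Banach-Saks property if every bounded sequence has a
subsequence whose Cesàro means converge in norm. -/
def HasBanachSaks (X : Type*) [NormedAddCommGroup X] [NormedSpace ℝ X] : Prop :=
  ∀ x : ℕ → X, (∃ C : ℝ, ∀ n, ‖x n‖ ≤ C) →
    ∃ φ : ℕ → ℕ, StrictMono φ ∧ ∃ y : X,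
      Tendsto (fun k : ℕ => (k : ℝ)⁻¹ • ∑ j ∈ Finset.range k, x (φ j)) atTop (𝓝 y)

/-- Weak convergence of a sequence: convergence under every continuous linear functional. -/
def WeakConvTo {X : Type*} [NormedAddCommGroup X] [NormedSpace ℝ X]
    (x : ℕ → X) (u : X) : Prop :=
  ∀ f : X →L[ℝ] ℝ, Tendsto (fun n => f (x n)) atTop (𝓝 (f u))

/-- A normed space has the weak Banach-Saks property if every weakly convergent
sequence has a subsequence whose Cesàro means converge in norm. -/
def HasWeakBanachSaks (X : Type*) [NormedAddCommGroup X] [NormedSpace ℝ X] : Prop :=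
  ∀ x : ℕ → X, ∀ u : X, WeakConvTo x u →
    ∃ φ : ℕ → ℕ, StrictMono φ ∧ ∃ y : X,
      Tendsto (fun k : ℕ => (k : ℝ)⁻¹ • ∑ j ∈ Finset.range k, x (φ j)) atTop (𝓝 y)

lemma inter_Ioi_infinite {V : Set ℕ} (hV : V.Infinite) (m : ℕ) : (V ∩ Set.Ioi m).Infinite := by
  have h : V \ Set.Iic m = V ∩ Set.Ioi m := by
    ext x; simp [Set.mem_diff, not_le]
  rw [← h]
  exact hV.diff (Set.finite_Iic m)

/-- One step of the Ramsey construction. -/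
lemma ramsey_step (r : ℕ)
    (IH : ∀ (p : Finset ℕ → Prop) (S : Set ℕ), S.Infinite →
      ∃ T ⊆ S, T.Infinite ∧
        ((∀ F : Finset ℕ, ↑F ⊆ T → F.card = r → p F) ∨
         (∀ F : Finset ℕ, ↑F ⊆ T → F.card = r → ¬ p F)))
    (p : Finset ℕ → Prop) (V : Set ℕ) (hV : V.Infinite) :
    ∃ W ⊆ V, W.Infinite ∧ (∀ x ∈ W, sInf V < x) ∧
      ((∀ F : Finset ℕ, ↑F ⊆ W → F.card = r → p (insert (sInf V) F)) ∨
       (∀ F : Finset ℕ, ↑F ⊆ W → F.card = r → ¬ p (insert (sInf V) F))) := by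
  obtain ⟨W, hWsub, hWinf, hmono⟩ :=
    IH (fun F => p (insert (sInf V) F)) _ (inter_Ioi_infinite hV (sInf V))
  exact ⟨W, fun x hx => (hWsub hx).1, hWinf, fun x hx => (hWsub hx).2, hmono⟩

/-- Finishing step: from an infinite monochromatic index set build the monochromatic set. -/
lemma ramsey_finish (r : ℕ) (q : Finset ℕ → Prop) (a : ℕ → ℕ) (ha : StrictMono a)
    (V : ℕ → Set ℕ) (hmem : ∀ m n : ℕ, n ≤ m → a m ∈ V n)
    (I : Set ℕ)
    (hgood : ∀ n ∈ I, ∀ F : Finset ℕ, ↑F ⊆ V (n+1) → F.card = r → q (insert (a n) F)) :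
    ∀ F : Finset ℕ, ↑F ⊆ a '' I → F.card = r + 1 → q F := by
  intro F hFsub hcard
  have hne : F.Nonempty := Finset.card_pos.mp (by omega)
  set m := F.min' hne with hmdef
  have hmF : m ∈ F := F.min'_mem hne
  obtain ⟨i, hiI, hai⟩ := hFsub hmF
  have herase : ((F.erase m : Finset ℕ) : Set ℕ) ⊆ V (i + 1) := by
    intro x hx
    simp only [Finset.coe_erase, Set.mem_diff, Set.mem_singleton_iff] at hx
    obtain ⟨i', hi'I, hai'⟩ := hFsub hx.1
    have hmx : m < x := lt_of_le_of_ne (F.min'_le x hx.1) (Ne.symm hx.2)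
    have : i < i' := by
      by_contra hcon
      push_neg at hcon
      have := ha.monotone hcon
      omega
    rw [← hai']
    exact hmem i' (i + 1) this
  have hcard' : (F.erase m).card = r := by
    rw [Finset.card_erase_of_mem hmF, hcard]; omega
  have := hgood i hiI (F.erase m) herase hcard'
  rw [hai, Finset.insert_erase hmF] at this
  exact this

theorem infinite_ramsey : ∀ (r : ℕ) (p : Finset ℕ → Prop) (S : Set ℕ), S.Infinite →
    ∃ T ⊆ S, T.Infinite ∧
      ((∀ F : Finset ℕ, ↑F ⊆ T → F.card = r → p F) ∨
       (∀ F : Finset ℕ, ↑F ⊆ T → F.card = r → ¬ p F)) := by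
  intro r
  induction r with
  | zero =>
    intro p S hS
    by_cases hp : p ∅
    · refine ⟨S, le_refl _, hS, Or.inl fun F _ hcard => ?_⟩
      rwa [Finset.card_eq_zero.mp hcard]
    · refine ⟨S, le_refl _, hS, Or.inr fun F _ hcard => ?_⟩
      rwa [Finset.card_eq_zero.mp hcard]
  | succ r IH =>
    intro p S hS
    have step := ramsey_step r IH p
    let Vrec : ℕ → {V : Set ℕ // V.Infinite ∧ V ⊆ S} := fun n =>
      Nat.rec ⟨S, hS, le_refl _⟩
        (fun _ prev =>
          ⟨Classical.choose (step prev.1 prev.2.1),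
            (Classical.choose_spec (step prev.1 prev.2.1)).2.1,
            fun x hx => prev.2.2 ((Classical.choose_spec (step prev.1 prev.2.1)).1 hx)⟩) n
    set V : ℕ → Set ℕ := fun n => (Vrec n).1 with hVdef
    have hVinf : ∀ n, (V n).Infinite := fun n => (Vrec n).2.1
    have hVS : ∀ n, V n ⊆ S := fun n => (Vrec n).2.2
    have hspec : ∀ n, V (n+1) ⊆ V n ∧ (∀ x ∈ V (n+1), sInf (V n) < x) ∧
        ((∀ F : Finset ℕ, ↑F ⊆ V (n+1) → F.card = r → p (insert (sInf (V n)) F)) ∨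
         (∀ F : Finset ℕ, ↑F ⊆ V (n+1) → F.card = r → ¬ p (insert (sInf (V n)) F))) := by
      intro n
      have h := Classical.choose_spec (step (V n) (hVinf n))
      exact ⟨h.1, h.2.2.1, h.2.2.2⟩
    set a : ℕ → ℕ := fun n => sInf (V n) with hadef
    have haMem : ∀ n, a n ∈ V n := fun n => Nat.sInf_mem (hVinf n).nonempty
    have hVmono : ∀ {n m : ℕ}, n ≤ m → V m ⊆ V n := by
      intro n m hnm
      induction hnm with
      | refl => exact le_refl _
      | step h ih => exact fun x hx => ih ((hspec _).1 hx)
    have hmem : ∀ m n : ℕ, n ≤ m → a m ∈ V n := fun m n h => hVmono h (haMem m)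
    have halt : ∀ {n m : ℕ}, n < m → a n < a m := by
      intro n m hnm
      exact (hspec n).2.1 _ (hVmono hnm (haMem m))
    have hamono : StrictMono a := fun n m h => halt h
    have hcases : {n | ∀ F : Finset ℕ, ↑F ⊆ V (n+1) → F.card = r → p (insert (a n) F)}.Infinite ∨
        {n | ∀ F : Finset ℕ, ↑F ⊆ V (n+1) → F.card = r → ¬ p (insert (a n) F)}.Infinite := by
      by_contra hcon
      push_neg at hcon
      have huniv : (Set.univ : Set ℕ).Finite := by
        refine Set.Finite.subset (hcon.1.union hcon.2) ?_
        intro n _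
        rcases (hspec n).2.2 with h | h
        · exact Or.inl h
        · exact Or.inr h
      exact Set.infinite_univ huniv
    have hTsub : ∀ I : Set ℕ, a '' I ⊆ S := by
      intro I x hx
      obtain ⟨i, _, rfl⟩ := hx
      exact hVS i (haMem i)
    rcases hcases with hI | hI
    · refine ⟨a '' _, hTsub _, hI.image (hamono.injective.injOn), Or.inl ?_⟩
      exact ramsey_finish r p a hamono V hmem _ (fun n hn => hn)
    · refine ⟨a '' _, hTsub _, hI.image (hamono.injective.injOn), Or.inr ?_⟩
      exact ramsey_finish r (fun F => ¬ p F) a hamono V hmem _ (fun n hn => hn)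


section FA
variable {X : Type*} [NormedAddCommGroup X] [NormedSpace ℝ X]

lemma weakConvTo_comp {x : ℕ → X} {u : X} (h : WeakConvTo x u) {d : ℕ → ℕ}
    (hd : StrictMono d) : WeakConvTo (fun n => x (d n)) u :=
  fun f => (h f).comp hd.tendsto_atTop

lemma weakConvTo_sub {x : ℕ → X} {u : X} (h : WeakConvTo x u) :
    WeakConvTo (fun n => x n - u) 0 := by
  intro f
  have := (h f).sub_const (f u)
  simpa [map_sub, map_zero] using this

lemma weakConvTo_bounded {x : ℕ → X} {u : X} (h : WeakConvTo x u) :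
    ∃ C : ℝ, 0 ≤ C ∧ ∀ n, ‖x n‖ ≤ C := by
  set g : ℕ → StrongDual ℝ X →L[ℝ] ℝ :=
    fun n => NormedSpace.inclusionInDoubleDual ℝ X (x n) with hg
  have hpt : ∀ f : StrongDual ℝ X, ∃ C, ∀ n, ‖g n f‖ ≤ C := by
    intro f
    have hb := ((h f).norm).bddAbove_range
    obtain ⟨C, hC⟩ := hb
    exact ⟨C, fun n => hC ⟨n, rfl⟩⟩
  obtain ⟨C', hC'⟩ := banach_steinhaus hpt
  refine ⟨max C' 0, le_max_right _ _, fun n => ?_⟩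
  have : ‖x n‖ = ‖g n‖ := ((NormedSpace.inclusionInDoubleDualLi ℝ).norm_map (x n)).symm
  rw [this]
  exact le_trans (hC' n) (le_max_left _ _)

lemma cesaro_limit_eq {x : ℕ → X} {u : X} (h : WeakConvTo x u) {y : X}
    (hy : Tendsto (fun k : ℕ => (k : ℝ)⁻¹ • ∑ j ∈ Finset.range k, x j) atTop (𝓝 y)) :
    y = u := by
  rw [NormedSpace.eq_iff_forall_dual_eq ℝ]
  intro g
  have h1 : Tendsto (fun k : ℕ => g ((k:ℝ)⁻¹ • ∑ j ∈ Finset.range k, x j)) atTop (𝓝 (g y)) :=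
    (g.continuous.tendsto y).comp hy
  have h2 : Tendsto (fun k : ℕ => (k:ℝ)⁻¹ • ∑ j ∈ Finset.range k, g (x j)) atTop (𝓝 (g u)) :=
    (h g).cesaro_smul
  have heq : (fun k : ℕ => g ((k:ℝ)⁻¹ • ∑ j ∈ Finset.range k, x j)) =
      fun k : ℕ => (k:ℝ)⁻¹ • ∑ j ∈ Finset.range k, g (x j) := by
    funext k; rw [_root_.map_smul, map_sum]
  rw [heq] at h1
  exact tendsto_nhds_unique h1 h2

lemma exists_cesaroNull (hX : HasWeakBanachSaks X) {a : ℕ → X} (h0 : WeakConvTo a 0) :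
    ∃ h : ℕ → ℕ, StrictMono h ∧
      Tendsto (fun k : ℕ => (k : ℝ)⁻¹ • ∑ j ∈ Finset.range k, a (h j)) atTop (𝓝 0) := by
  obtain ⟨h, hmono, y, hy⟩ := hX a 0 h0
  have hyz : y = 0 := cesaro_limit_eq (weakConvTo_comp h0 hmono) hy
  exact ⟨h, hmono, hyz ▸ hy⟩

end FA

-- decoding s = 2^j * (2t+1)
def jOf (s : ℕ) : ℕ := s.factorization 2
def tOf (s : ℕ) : ℕ := (s / 2 ^ jOf s - 1) / 2

lemma jOf_encode (t j : ℕ) : jOf (2 ^ j * (2 * t + 1)) = j := by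
  unfold jOf
  rw [Nat.factorization_mul (by positivity) (by omega)]
  have h1 : (2 ^ j : ℕ).factorization 2 = j := by
    rw [Nat.Prime.factorization_pow Nat.prime_two]
    simp [Nat.Prime.factorization_self Nat.prime_two]
  have h2 : (2 * t + 1 : ℕ).factorization 2 = 0 :=
    Nat.factorization_eq_zero_of_not_dvd (by omega)
  simp [h1, h2, Nat.Prime.factorization_self Nat.prime_two]

lemma tOf_encode (t j : ℕ) : tOf (2 ^ j * (2 * t + 1)) = t := by
  unfold tOf
  rw [jOf_encode, Nat.mul_div_cancel_left _ (by positivity)]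
  omega

lemma hereditary {X : Type*} [NormedAddCommGroup X] [NormedSpace ℝ X]
    (hX : HasWeakBanachSaks X) (a : ℕ → X) (h0 : WeakConvTo a 0) :
    ∃ e : ℕ → ℕ, StrictMono e ∧ ∀ h : ℕ → ℕ, StrictMono h →
      Tendsto (fun k : ℕ => (k : ℝ)⁻¹ • ∑ j ∈ Finset.range k, a (e (h j))) atTop (𝓝 0) := by
  classical
  obtain ⟨C, hC0, hC⟩ := weakConvTo_bounded h0
  set q : ℕ → Finset ℕ → Prop := fun s F =>
    ‖(F.card : ℝ)⁻¹ • ∑ n ∈ F, a n‖ < ((jOf s : ℝ) + 1)⁻¹ with hq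
  have step : ∀ (s : ℕ) (V : Set ℕ), V.Infinite → ∃ T ⊆ V, T.Infinite ∧
      ((∀ F : Finset ℕ, ↑F ⊆ T → F.card = tOf s → q s F) ∨
       (∀ F : Finset ℕ, ↑F ⊆ T → F.card = tOf s → ¬ q s F)) :=
    fun s V hV => infinite_ramsey (tOf s) (q s) V hV
  let Vrec : ℕ → {V : Set ℕ // V.Infinite} := fun s =>
    Nat.rec ⟨Set.univ, Set.infinite_univ⟩
      (fun s prev => ⟨Classical.choose (step s prev.1 prev.2),
        (Classical.choose_spec (step s prev.1 prev.2)).2.1⟩) s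
  set V : ℕ → Set ℕ := fun s => (Vrec s).1 with hV
  have hVinf : ∀ s, (V s).Infinite := fun s => (Vrec s).2
  have hstep : ∀ s, V (s+1) ⊆ V s ∧
      ((∀ F : Finset ℕ, ↑F ⊆ V (s+1) → F.card = tOf s → q s F) ∨
       (∀ F : Finset ℕ, ↑F ⊆ V (s+1) → F.card = tOf s → ¬ q s F)) := by
    intro s
    have h := Classical.choose_spec (step s (V s) (hVinf s))
    exact ⟨h.1, h.2.2⟩
  have hVmono : ∀ {n m : ℕ}, n ≤ m → V m ⊆ V n := by
    intro n m hnm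
    induction hnm with
    | refl => exact le_refl _
    | step h ih => exact fun x hx => ih ((hstep _).1 hx)
  -- the diagonal sequence
  let d : ℕ → ℕ := fun s =>
    Nat.rec (sInf (V 1)) (fun s prev => sInf (V (s+2) ∩ Set.Ioi prev)) s
  have hdsucc : ∀ s, d (s+1) = sInf (V (s+2) ∩ Set.Ioi (d s)) := fun s => rfl
  have hdmem : ∀ s, d s ∈ V (s+1) := by
    intro s
    cases s with
    | zero => exact Nat.sInf_mem (hVinf 1).nonempty
    | succ n =>
      have := Nat.sInf_mem (inter_Ioi_infinite (hVinf (n+2)) (d n)).nonempty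
      exact this.1
  have hdlt : ∀ s, d s < d (s+1) := by
    intro s
    have := Nat.sInf_mem (inter_Ioi_infinite (hVinf (s+2)) (d s)).nonempty
    exact this.2
  have hdmono : StrictMono d := strictMono_nat_of_lt_succ hdlt
  have hdin : ∀ {s r : ℕ}, s ≤ r → d r ∈ V (s+1) :=
    fun {s r} hsr => hVmono (Nat.succ_le_succ hsr) (hdmem r)
  -- key claim
  have key : ∀ j : ℕ, ∃ t : ℕ, 1 ≤ t ∧ ∃ s : ℕ, ∀ G : Finset ℕ, G.card = t →
      (∀ i ∈ G, s ≤ i) → ‖(t : ℝ)⁻¹ • ∑ i ∈ G, a (d i)‖ < ((j : ℝ) + 1)⁻¹ := by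
    intro j
    have had : WeakConvTo (fun n => a (d n)) 0 := weakConvTo_comp h0 hdmono
    obtain ⟨g, hg, hμ⟩ := exists_cesaroNull hX had
    set μ : ℕ → X := fun m => (m : ℝ)⁻¹ • ∑ i ∈ Finset.range m, a (d (g i)) with hμdef
    set δ : ℝ := ((j : ℝ) + 1)⁻¹ / (2 ^ (j + 3)) with hδ
    have hδpos : 0 < δ := by positivity
    obtain ⟨T, hT⟩ := Metric.tendsto_atTop.mp hμ δ hδpos
    have hT' : ∀ m, T ≤ m → ‖μ m‖ < δ := by
      intro m hm
      have := hT m hm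
      rwa [dist_zero_right] at this
    set t : ℕ := max T 1 with ht
    have ht1 : 1 ≤ t := le_max_right _ _
    set s : ℕ := 2 ^ j * (2 * t + 1) with hs
    have hst : t ≤ s := by
      have h1 : 1 ≤ 2 ^ j := Nat.one_le_two_pow
      calc t ≤ 2 * t + 1 := by omega
      _ ≤ 2 ^ j * (2 * t + 1) := Nat.le_mul_of_pos_left _ (by omega)
    have hsle : s ≤ 3 * 2 ^ j * t := by
      have : 2 * t + 1 ≤ 3 * t := by omega
      calc s = 2 ^ j * (2 * t + 1) := rfl
      _ ≤ 2 ^ j * (3 * t) := Nat.mul_le_mul_left _ this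
      _ = 3 * 2 ^ j * t := by ring
    refine ⟨t, ht1, s, ?_⟩
    have hts : tOf s = t := tOf_encode t j
    have hjs : jOf s = j := jOf_encode t j
    rcases (hstep s).2 with good | bad
    · -- good color: direct
      intro G hGcard hGmin
      set F : Finset ℕ := G.image d with hF
      have hFsub : ↑F ⊆ V (s+1) := by
        intro x hx
        simp only [hF, Finset.coe_image, Set.mem_image, Finset.mem_coe] at hx
        obtain ⟨i, hi, rfl⟩ := hx
        exact hdin (hGmin i hi)
      have hFcard : F.card = t := by
        rw [hF, Finset.card_image_of_injective _ hdmono.injective, hGcard]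
      have hqF := good F hFsub (by rw [hFcard, hts])
      rw [hq] at hqF
      simp only [hFcard, hjs] at hqF
      rwa [hF, Finset.sum_image (fun i _ i' _ hii' => hdmono.injective hii')] at hqF
    · -- bad color: contradiction via window
      exfalso
      set F : Finset ℕ := (Finset.Ico s (s+t)).image (fun i => d (g i)) with hF
      have hinj : Function.Injective (fun i => d (g i)) := fun i i' hii' =>
        hg.injective (hdmono.injective hii')
      have hFsub : ↑F ⊆ V (s+1) := by
        intro x hx
        simp only [hF, Finset.coe_image, Set.mem_image, Finset.mem_coe] at hx
        obtain ⟨i, hi, rfl⟩ := hx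
        have h1 : s ≤ i := (Finset.mem_Ico.mp hi).1
        exact hdin (le_trans h1 hg.le_apply)
      have hFcard : F.card = t := by
        rw [hF, Finset.card_image_of_injective _ hinj, Nat.card_Ico]
        omega
      have hbad := bad F hFsub (by rw [hFcard, hts])
      rw [hq] at hbad
      simp only [hFcard, hjs] at hbad
      rw [hF, Finset.sum_image (fun i _ i' _ hii' => hinj hii')] at hbad
      apply hbad
      -- now estimate the window
      have hm1 : ∀ m : ℕ, 1 ≤ m → ((m : ℕ) : ℝ) • μ m = ∑ i ∈ Finset.range m, a (d (g i)) := by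
        intro m hm
        have hm' : ((m : ℕ) : ℝ) ≠ 0 := by
          exact_mod_cast Nat.one_le_iff_ne_zero.mp hm
        rw [hμdef]
        exact smul_inv_smul₀ hm' _
      have hsum : ∑ i ∈ Finset.Ico s (s+t), a (d (g i)) =
          ((s+t : ℕ) : ℝ) • μ (s+t) - ((s : ℕ) : ℝ) • μ s := by
        rw [Finset.sum_Ico_eq_sub _ (by omega : s ≤ s + t), hm1 (s+t) (by omega),
          hm1 s (by omega)]
      have hs1 : (1:ℕ) ≤ s := by omega
      have htpos : (0:ℝ) < (t:ℝ) := by exact_mod_cast (by omega : 0 < t)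
      have hμs : ‖μ s‖ < δ := hT' s (by omega)
      have hμst : ‖μ (s+t)‖ < δ := hT' (s+t) (by omega)
      have h2j : (1:ℝ) ≤ 2 ^ j := one_le_pow₀ (by norm_num)
      have hsleR : (s:ℝ) ≤ 3 * 2 ^ j * (t:ℝ) := by exact_mod_cast hsle
      calc ‖(t : ℝ)⁻¹ • ∑ i ∈ Finset.Ico s (s+t), a (d (g i))‖
          = (t:ℝ)⁻¹ * ‖∑ i ∈ Finset.Ico s (s+t), a (d (g i))‖ := by
            rw [norm_smul, Real.norm_eq_abs, abs_of_pos (by positivity)]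
        _ ≤ (t:ℝ)⁻¹ * (((s:ℝ)+(t:ℝ)) * ‖μ (s+t)‖ + (s:ℝ) * ‖μ s‖) := by
            rw [hsum]
            have h1 : ‖((s+t : ℕ) : ℝ) • μ (s+t) - ((s : ℕ) : ℝ) • μ s‖ ≤
                ‖((s+t : ℕ) : ℝ) • μ (s+t)‖ + ‖((s : ℕ) : ℝ) • μ s‖ := norm_sub_le _ _
            have h2 : ‖((s+t : ℕ) : ℝ) • μ (s+t)‖ = ((s:ℝ)+(t:ℝ)) * ‖μ (s+t)‖ := by
              rw [norm_smul, Real.norm_eq_abs, abs_of_nonneg (by positivity)]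
              push_cast; ring
            have h3 : ‖((s : ℕ) : ℝ) • μ s‖ = (s:ℝ) * ‖μ s‖ := by
              rw [norm_smul, Real.norm_eq_abs, abs_of_nonneg (by positivity)]
            rw [h2, h3] at h1
            have := inv_nonneg.mpr (le_of_lt htpos)
            exact mul_le_mul_of_nonneg_left h1 this
        _ ≤ (t:ℝ)⁻¹ * (((s:ℝ)+(t:ℝ)) * δ + (s:ℝ) * δ) := by
            gcongr <;> positivity
        _ = (t:ℝ)⁻¹ * ((2*(s:ℝ) + (t:ℝ)) * δ) := by ring
        _ ≤ (t:ℝ)⁻¹ * ((2*(3 * 2 ^ j * (t:ℝ)) + (t:ℝ)) * δ) := by gcongr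
        _ = (6 * 2 ^ j + 1) * δ := by
            field_simp
            ring
        _ < 2 ^ (j+3) * δ := by
            have : (2:ℝ) ^ (j+3) = 8 * 2 ^ j := by rw [pow_add]; ring
            rw [this]
            have h8 : 6 * (2:ℝ) ^ j + 1 < 8 * 2 ^ j := by nlinarith
            exact mul_lt_mul_of_pos_right h8 hδpos
        _ = ((j : ℝ) + 1)⁻¹ := by
            rw [hδ]
            field_simp
  -- Part C : assembly
  refine ⟨d, hdmono, ?_⟩
  intro h hh
  rw [Metric.tendsto_atTop]
  intro ε hε
  have h2ε : 0 < ε/2 := by positivity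
  obtain ⟨j, hj⟩ : ∃ j : ℕ, ((j:ℝ)+1)⁻¹ < ε/2 := by
    obtain ⟨j, hj⟩ := exists_nat_gt (2/ε)
    refine ⟨j, ?_⟩
    have hj1 : (ε/2)⁻¹ < (j:ℝ)+1 := by
      rw [inv_div]
      calc 2/ε < (j:ℝ) := hj
      _ ≤ (j:ℝ) + 1 := by linarith
    calc ((j:ℝ)+1)⁻¹ < ((ε/2)⁻¹)⁻¹ := by
          apply inv_strictAnti₀ (by positivity) hj1
      _ = ε/2 := inv_inv _
  obtain ⟨t, ht1, s, hgood⟩ := key j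
  set v : ℕ → X := fun i => a (d (h i)) with hv
  have hvC : ∀ i, ‖v i‖ ≤ C := fun i => hC _
  have htpos : (0:ℝ) < (t:ℝ) := by exact_mod_cast (by omega : 0 < t)
  -- good windows
  have hwin : ∀ w : ℕ, s ≤ w → ‖∑ i ∈ Finset.Ico (w*t) (w*t+t), v i‖ ≤ (t:ℝ) * (ε/2) := by
    intro w hw
    set G : Finset ℕ := Finset.image h (Finset.Ico (w*t) (w*t+t)) with hG
    have hGcard : G.card = t := by
      rw [hG, Finset.card_image_of_injective _ hh.injective, Nat.card_Ico]
      omega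
    have hGmin : ∀ i ∈ G, s ≤ i := by
      intro i hi
      rw [hG, Finset.mem_image] at hi
      obtain ⟨i', hi', rfl⟩ := hi
      have h1 : w*t ≤ i' := (Finset.mem_Ico.mp hi').1
      have h2 : i' ≤ h i' := hh.le_apply
      have h3 : s ≤ w * t := by
        calc s ≤ w := hw
        _ = w * 1 := (mul_one w).symm
        _ ≤ w * t := Nat.mul_le_mul_left w ht1
      omega
    have hq := hgood G hGcard hGmin
    rw [hG, Finset.sum_image (fun i _ i' _ hii' => hh.injective hii')] at hq
    have hnorm : (t:ℝ)⁻¹ * ‖∑ i ∈ Finset.Ico (w*t) (w*t+t), v i‖ < ε/2 := by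
      have := lt_of_lt_of_le hq (le_of_lt hj)
      rwa [norm_smul, Real.norm_eq_abs, abs_of_pos (by positivity)] at this
    have heq : ‖∑ i ∈ Finset.Ico (w*t) (w*t+t), v i‖ =
        (t:ℝ) * ((t:ℝ)⁻¹ * ‖∑ i ∈ Finset.Ico (w*t) (w*t+t), v i‖) := by
      field_simp
    rw [heq]
    exact mul_le_mul_of_nonneg_left (le_of_lt hnorm) (le_of_lt htpos)
  -- crude bound for any window
  have hwinC : ∀ A B : ℕ, ‖∑ i ∈ Finset.Ico A B, v i‖ ≤ ((B - A : ℕ) : ℝ) * C := by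
    intro A B
    calc ‖∑ i ∈ Finset.Ico A B, v i‖ ≤ ∑ i ∈ Finset.Ico A B, ‖v i‖ := norm_sum_le _ _
      _ ≤ ∑ _i ∈ Finset.Ico A B, C := Finset.sum_le_sum (fun i _ => hvC i)
      _ = ((B - A : ℕ) : ℝ) * C := by
          rw [Finset.sum_const, Nat.card_Ico, nsmul_eq_mul]
  -- decomposition into windows
  have hdecomp : ∀ m : ℕ, ∑ i ∈ Finset.range (m*t), v i =
      ∑ w ∈ Finset.range m, ∑ i ∈ Finset.Ico (w*t) (w*t+t), v i := by
    intro m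
    induction m with
    | zero => simp
    | succ n ih =>
      have hmul : (n+1)*t = n*t + t := by ring
      rw [Finset.sum_range_succ, ← ih, hmul, Finset.range_eq_Ico,
        ← Finset.sum_Ico_consecutive v (Nat.zero_le (n*t)) (by omega : n*t ≤ n*t + t),
        ← Finset.range_eq_Ico]
  obtain ⟨K0, hK0⟩ := exists_nat_gt (((s:ℝ)*(t:ℝ)*C + (t:ℝ)*C)/(ε/2))
  refine ⟨max K0 1, fun k hk => ?_⟩
  have hk1 : 1 ≤ k := le_trans (le_max_right _ _) hk
  have hkK : K0 ≤ k := le_trans (le_max_left _ _) hk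
  have hkpos : (0:ℝ) < (k:ℝ) := by exact_mod_cast (by omega : 0 < k)
  set qq : ℕ := k / t with hqq
  have hqt : qq * t ≤ k := Nat.div_mul_le_self k t
  have hdm := Nat.div_add_mod k t
  have hmlt : k % t < t := Nat.mod_lt _ (by omega)
  have hrem : k - qq*t < t := by
    have h' : qq * t + k % t = k := by rw [Nat.mul_comm]; exact hdm
    omega
  have hsplit : ∑ i ∈ Finset.range k, v i =
      ∑ i ∈ Finset.range (qq*t), v i + ∑ i ∈ Finset.Ico (qq*t) k, v i := by
    rw [Finset.range_eq_Ico, ← Finset.sum_Ico_consecutive v (Nat.zero_le _) hqt,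
      ← Finset.range_eq_Ico]
  have h1 : ‖∑ i ∈ Finset.range (qq*t), v i‖ ≤
      (qq:ℝ)*(t:ℝ)*(ε/2) + (s:ℝ)*((t:ℝ)*C) := by
    rw [hdecomp qq]
    calc ‖∑ w ∈ Finset.range qq, ∑ i ∈ Finset.Ico (w*t) (w*t+t), v i‖
        ≤ ∑ w ∈ Finset.range qq, ‖∑ i ∈ Finset.Ico (w*t) (w*t+t), v i‖ := norm_sum_le _ _
      _ ≤ ∑ w ∈ Finset.range qq,
          ((t:ℝ)*(ε/2) + if w ∈ Finset.range s then (t:ℝ)*C else 0) := by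
          apply Finset.sum_le_sum
          intro w _
          by_cases hws : w < s
          · have hb := hwinC (w*t) (w*t+t)
            have hcard : ((w*t+t) - (w*t) : ℕ) = t := by omega
            rw [hcard] at hb
            rw [if_pos (Finset.mem_range.mpr hws)]
            have : 0 ≤ (t:ℝ)*(ε/2) := by positivity
            linarith
          · rw [if_neg (fun hmem => hws (Finset.mem_range.mp hmem))]
            have := hwin w (by omega)
            linarith
      _ = (qq:ℝ)*((t:ℝ)*(ε/2)) +
          ∑ w ∈ Finset.range qq, (if w ∈ Finset.range s then (t:ℝ)*C else 0) := by
          rw [Finset.sum_add_distrib, Finset.sum_const, Finset.card_range, nsmul_eq_mul]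
      _ ≤ (qq:ℝ)*(t:ℝ)*(ε/2) + (s:ℝ)*((t:ℝ)*C) := by
          have hite : ∑ w ∈ Finset.range qq, (if w ∈ Finset.range s then (t:ℝ)*C else 0)
              = ∑ w ∈ Finset.range qq ∩ Finset.range s, (t:ℝ)*C := by
            rw [Finset.sum_ite_mem]
          rw [hite, Finset.sum_const, nsmul_eq_mul]
          have hcard : ((Finset.range qq ∩ Finset.range s).card : ℝ) ≤ (s:ℝ) := by
            have := Finset.card_le_card (Finset.inter_subset_right
              (s₁ := Finset.range qq) (s₂ := Finset.range s))
            rw [Finset.card_range] at this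
            exact_mod_cast this
          have htC : 0 ≤ (t:ℝ)*C := by positivity
          have := mul_le_mul_of_nonneg_right hcard htC
          linarith [mul_assoc (qq:ℝ) (t:ℝ) (ε/2)]
  have h2 : ‖∑ i ∈ Finset.Ico (qq*t) k, v i‖ ≤ (t:ℝ)*C := by
    have hb := hwinC (qq*t) k
    have : ((k - qq*t : ℕ) : ℝ) ≤ (t:ℝ) := by exact_mod_cast le_of_lt hrem
    calc ‖∑ i ∈ Finset.Ico (qq*t) k, v i‖ ≤ ((k - qq*t : ℕ) : ℝ) * C := hb
      _ ≤ (t:ℝ)*C := mul_le_mul_of_nonneg_right this hC0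
  have htotal : ‖∑ i ∈ Finset.range k, v i‖ ≤
      (k:ℝ)*(ε/2) + ((s:ℝ)*(t:ℝ)*C + (t:ℝ)*C) := by
    rw [hsplit]
    have hq1 : (qq:ℝ)*(t:ℝ) ≤ (k:ℝ) := by exact_mod_cast hqt
    have := norm_add_le (∑ i ∈ Finset.range (qq*t), v i) (∑ i ∈ Finset.Ico (qq*t) k, v i)
    have hmul : (qq:ℝ)*(t:ℝ)*(ε/2) ≤ (k:ℝ)*(ε/2) :=
      mul_le_mul_of_nonneg_right hq1 (le_of_lt h2ε)
    linarith
  have hsmall : (s:ℝ)*(t:ℝ)*C + (t:ℝ)*C < (k:ℝ)*(ε/2) := by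
    have h1' : ((s:ℝ)*(t:ℝ)*C + (t:ℝ)*C)/(ε/2) < (k:ℝ) := by
      calc ((s:ℝ)*(t:ℝ)*C + (t:ℝ)*C)/(ε/2) < (K0:ℝ) := hK0
        _ ≤ (k:ℝ) := by exact_mod_cast hkK
    calc (s:ℝ)*(t:ℝ)*C + (t:ℝ)*C = (((s:ℝ)*(t:ℝ)*C + (t:ℝ)*C)/(ε/2))*(ε/2) := by
          field_simp
      _ < (k:ℝ)*(ε/2) := mul_lt_mul_of_pos_right h1' h2ε
  rw [dist_zero_right, norm_smul, Real.norm_eq_abs, abs_of_pos (by positivity)]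
  calc (k:ℝ)⁻¹ * ‖∑ i ∈ Finset.range k, v i‖
      ≤ (k:ℝ)⁻¹ * ((k:ℝ)*(ε/2) + ((s:ℝ)*(t:ℝ)*C + (t:ℝ)*C)) := by
        exact mul_le_mul_of_nonneg_left htotal (by positivity)
    _ < (k:ℝ)⁻¹ * ((k:ℝ)*(ε/2) + (k:ℝ)*(ε/2)) := by
        apply mul_lt_mul_of_pos_left _ (by positivity)
        linarith
    _ = ε := by field_simp; ring


lemma coord_mean {E : Type*} [NormedAddCommGroup E] [NormedSpace ℝ E] (w : ℕ → E) (c : E)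
    (hw : Tendsto (fun k : ℕ => (k : ℝ)⁻¹ • ∑ j ∈ Finset.range k, (w j - c)) atTop (𝓝 0)) :
    Tendsto (fun k : ℕ => (k : ℝ)⁻¹ • ∑ j ∈ Finset.range k, w j) atTop (𝓝 c) := by
  have hev : ∀ᶠ k : ℕ in Filter.atTop,
      ((k : ℝ)⁻¹ • ∑ j ∈ Finset.range k, (w j - c)) + c =
      (k : ℝ)⁻¹ • ∑ j ∈ Finset.range k, w j := by
    filter_upwards [Filter.eventually_ge_atTop 1] with k hk
    have hkne : ((k:ℕ):ℝ) ≠ 0 := by exact_mod_cast Nat.one_le_iff_ne_zero.mp hk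
    rw [Finset.sum_sub_distrib, Finset.sum_const, Finset.card_range, smul_sub,
      ← Nat.cast_smul_eq_nsmul ℝ, smul_smul, inv_mul_cancel₀ hkne, one_smul]
    abel
  have h1 : Tendsto (fun k : ℕ =>
      ((k : ℝ)⁻¹ • ∑ j ∈ Finset.range k, (w j - c)) + c) atTop (𝓝 (0 + c)) :=
    hw.add_const c
  rw [zero_add] at h1
  exact Tendsto.congr' hev h1

theorem weakBanachSaks_prod (X Y : Type*)
    [NormedAddCommGroup X] [NormedSpace ℝ X] [CompleteSpace X]
    [NormedAddCommGroup Y] [NormedSpace ℝ Y] [CompleteSpace Y]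
    (hX : HasWeakBanachSaks X) (hY : HasWeakBanachSaks Y) :
    HasWeakBanachSaks (X × Y) := by
  intro z u hzu
  set x : ℕ → X := fun n => (z n).1 with hx
  set y : ℕ → Y := fun n => (z n).2 with hyy
  have hxw : WeakConvTo x u.1 := fun f => hzu (f.comp (ContinuousLinearMap.fst ℝ X Y))
  have hyw : WeakConvTo y u.2 := fun f => hzu (f.comp (ContinuousLinearMap.snd ℝ X Y))
  set A : ℕ → X := fun n => x n - u.1 with hA
  set B : ℕ → Y := fun n => y n - u.2 with hB
  have hAw : WeakConvTo A 0 := weakConvTo_sub hxw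
  have hBw : WeakConvTo B 0 := weakConvTo_sub hyw
  obtain ⟨e, he, hher⟩ := hereditary hX A hAw
  have hBe : WeakConvTo (fun n => B (e n)) 0 := weakConvTo_comp hBw he
  obtain ⟨h, hh, hBlim⟩ := exists_cesaroNull hY hBe
  refine ⟨e ∘ h, he.comp hh, u, ?_⟩
  have hAlim := hher h hh
  have hfst : Tendsto (fun k : ℕ => (k:ℝ)⁻¹ • ∑ j ∈ Finset.range k, x (e (h j)))
      atTop (𝓝 u.1) := coord_mean (fun j => x (e (h j))) u.1 hAlim
  have hsnd : Tendsto (fun k : ℕ => (k:ℝ)⁻¹ • ∑ j ∈ Finset.range k, y (e (h j)))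
      atTop (𝓝 u.2) := coord_mean (fun j => y (e (h j))) u.2 hBlim
  have heq : (fun k : ℕ => (k:ℝ)⁻¹ • ∑ j ∈ Finset.range k, z ((e ∘ h) j)) =
      fun k : ℕ => ((k:ℝ)⁻¹ • ∑ j ∈ Finset.range k, x (e (h j)),
        (k:ℝ)⁻¹ • ∑ j ∈ Finset.range k, y (e (h j))) := by
    funext k
    apply Prod.ext
    · simp [Prod.fst_sum, hx]
    · simp [Prod.snd_sum, hyy]
  rw [heq]
  have := hfst.prodMk_nhds hsnd
  simpa using this
end

section
/- A Banach space X has the Banach-Saks property if and only if X is reflexive and has the weak Banach-Saks property. -/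
open Filter MeasureTheory Topology

/-- **Helly's theorem**: finitely many linear conditions with the right duality bound
can be solved with norm almost `M`. -/
lemma helly_lemma {E : Type*} [NormedAddCommGroup E] [NormedSpace ℝ E] {ι : Type*} [Fintype ι]
    (G : ι → E →L[ℝ] ℝ) (c : ι → ℝ) {M ε : ℝ} (hM : 0 ≤ M) (hε : 0 < ε)
    (h : ∀ a : ι → ℝ, |∑ i, a i * c i| ≤ M * ‖∑ i, a i • G i‖) :
    ∃ x : E, ‖x‖ ≤ M + ε ∧ ∀ i, G i x = c i := by
  classical
  by_contra hcon
  push_neg at hcon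
  set S : Set E := {x | ∀ i, G i x = c i} with hS
  -- S is nonempty
  have hne : S.Nonempty := by
    by_contra hemp
    -- c not in range of the product map
    have hcnot : c ∉ LinearMap.range (LinearMap.pi fun i => (G i : E →ₗ[ℝ] ℝ)) := by
      intro ⟨x, hx⟩
      exact hemp ⟨x, fun i => congrFun hx i⟩
    obtain ⟨f, hfc, hfbot⟩ := Submodule.exists_dual_map_eq_bot_of_notMem hcnot inferInstance
    set a : ι → ℝ := fun i => f (fun j => if i = j then (1:ℝ) else 0) with ha
    have hf_eq : ∀ v : ι → ℝ, f v = ∑ i, v i * a i := by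
      intro v
      conv_lhs => rw [pi_eq_sum_univ v]
      rw [map_sum]
      exact Finset.sum_congr rfl fun i _ => by rw [_root_.map_smul, smul_eq_mul]
    have hzero : (∑ i, a i • G i) = 0 := by
      ext x
      have hx : (LinearMap.pi fun i => (G i : E →ₗ[ℝ] ℝ)) x ∈
          LinearMap.range (LinearMap.pi fun i => (G i : E →ₗ[ℝ] ℝ)) :=
        LinearMap.mem_range_self _ x
      have : f ((LinearMap.pi fun i => (G i : E →ₗ[ℝ] ℝ)) x) = 0 := by
        have := hfbot ▸ Submodule.mem_map_of_mem (f := f) hx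
        simpa using this
      rw [hf_eq] at this
      simp only [ContinuousLinearMap.sum_apply, ContinuousLinearMap.smul_apply,
        ContinuousLinearMap.zero_apply, smul_eq_mul]
      rw [← this]
      exact Finset.sum_congr rfl fun i _ => by
        simp [LinearMap.pi_apply, mul_comm]
    have := h a
    rw [hzero, norm_zero, mul_zero] at this
    have hfc' : f c = ∑ i, c i * a i := hf_eq c
    have : ∑ i, a i * c i = 0 := abs_eq_zero.1 (le_antisymm this (abs_nonneg _))
    apply hfc
    rw [hfc']
    rw [← this]
    exact Finset.sum_congr rfl fun i _ => mul_comm _ _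
  obtain ⟨x₀, hx₀⟩ := hne
  -- every point of S has big norm
  have hbig : ∀ x ∈ S, M + ε < ‖x‖ := by
    intro x hx
    by_contra hle
    obtain ⟨i, hi⟩ := hcon x (le_of_not_gt hle)
    exact hi (hx i)
  -- separation
  have hSconv : Convex ℝ S := by
    intro x hx y hy a b ha hb hab
    intro i
    simp only [map_add, _root_.map_smul, hx i, hy i, smul_eq_mul]
    rw [← add_mul, hab, one_mul]
  have hMε : (0:ℝ) < M + ε := by linarith
  have hdisj : Disjoint (Metric.ball (0:E) (M + ε)) S := by
    rw [Set.disjoint_left]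
    intro z hz hzS
    rw [Metric.mem_ball, dist_zero_right] at hz
    exact absurd hz (not_lt.2 (le_of_lt (hbig z hzS)))
  obtain ⟨f, u, hfu, hfS⟩ :=
    geometric_hahn_banach_open (convex_ball 0 (M + ε)) Metric.isOpen_ball hSconv hdisj
  have hu0 : 0 < u := by
    have := hfu 0 (by simp [hMε])
    simpa using this
  -- f kills the common kernel
  have hker : (⨅ i, LinearMap.ker ((G i : E →ₗ[ℝ] ℝ))) ≤ LinearMap.ker (f : E →ₗ[ℝ] ℝ) := by
    intro y hy
    simp only [Submodule.mem_iInf, LinearMap.mem_ker, ContinuousLinearMap.coe_coe] at hy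
    simp only [LinearMap.mem_ker]
    rw [ContinuousLinearMap.coe_coe]
    by_contra hfy
    have hmem : ∀ t : ℝ, x₀ + t • y ∈ S := by
      intro t i
      simp [map_add, _root_.map_smul, hx₀ i, hy i]
    have hb : ∀ t : ℝ, u ≤ f x₀ + t * f y := by
      intro t
      have := hfS _ (hmem t)
      simpa [map_add, _root_.map_smul, smul_eq_mul] using this
    have := hb ((u - 1 - f x₀) / f y)
    rw [div_mul_cancel₀ _ hfy] at this
    linarith
  have hmem_span := mem_span_of_iInf_ker_le_ker (L := fun i => ((G i : E →ₗ[ℝ] ℝ))) hker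
  obtain ⟨a, haf⟩ := (Submodule.mem_span_range_iff_exists_fun ℝ).1 hmem_span
  -- f agrees with ∑ a i • G i
  have hfa : (∑ i, a i • G i) = f := by
    ext x
    have := congrFun (congrArg (fun (g : E →ₗ[ℝ] ℝ) => (g : E → ℝ)) haf) x
    simpa using this
  -- norm bound on f : (M+ε) * ‖f‖ ≤ u
  have hball : ∀ z : E, ‖z‖ ≤ M + ε → f z ≤ u := by
    have hcl : Metric.closedBall (0:E) (M+ε) ⊆ {z | f z ≤ u} := by
      rw [← closure_ball (0:E) (ne_of_gt hMε)]
      apply closure_minimal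
      · intro z hz; exact le_of_lt (hfu z hz)
      · exact isClosed_le (f.continuous) continuous_const
    intro z hz
    exact hcl (by simpa [Metric.mem_closedBall, dist_zero_right] using hz)
  have hnorm : ‖f‖ ≤ u / (M + ε) := by
    apply ContinuousLinearMap.opNorm_le_bound _ (by positivity)
    intro x
    rcases eq_or_ne x 0 with rfl | hx
    · simp
    · have hxn : (0:ℝ) < ‖x‖ := norm_pos_iff.2 hx
      have h1 : f (((M+ε)/‖x‖) • x) ≤ u := by
        apply hball
        rw [norm_smul, Real.norm_eq_abs, abs_of_pos (by positivity)]
        rw [div_mul_cancel₀ _ (ne_of_gt hxn)]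
      have h2 : f (-(((M+ε)/‖x‖) • x)) ≤ u := by
        apply hball
        rw [norm_neg, norm_smul, Real.norm_eq_abs, abs_of_pos (by positivity)]
        rw [div_mul_cancel₀ _ (ne_of_gt hxn)]
      rw [map_neg] at h2
      rw [_root_.map_smul, smul_eq_mul] at h1 h2
      have h1' : (M + ε) * f x ≤ u * ‖x‖ := by
        rw [div_mul_eq_mul_div, div_le_iff₀ hxn] at h1
        linarith
      have h2' : (M + ε) * (- f x) ≤ u * ‖x‖ := by
        have h2'' : (M + ε) / ‖x‖ * (- f x) ≤ u := by linarith
        rw [div_mul_eq_mul_div, div_le_iff₀ hxn] at h2''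
        linarith
      have habs : |f x| ≤ u * ‖x‖ / (M + ε) := by
        rw [abs_le]
        constructor
        · rw [neg_le, le_div_iff₀ hMε]; linarith
        · rw [le_div_iff₀ hMε]; linarith
      calc ‖f x‖ = |f x| := rfl
        _ ≤ u * ‖x‖ / (M+ε) := habs
        _ = u / (M+ε) * ‖x‖ := by ring
  -- conclude
  have h1 : u ≤ f x₀ := hfS x₀ hx₀
  have h2 : f x₀ = ∑ i, a i * c i := by
    rw [← hfa]
    simp only [ContinuousLinearMap.sum_apply, ContinuousLinearMap.smul_apply, smul_eq_mul]
    exact Finset.sum_congr rfl fun i _ => by rw [hx₀ i]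
  have h3 : |∑ i, a i * c i| ≤ M * ‖f‖ := by rw [← hfa] at *; exact h a
  have h4 : u ≤ M * ‖f‖ := le_trans h1 (le_trans (h2 ▸ le_abs_self _) h3)
  have h5 : ‖f‖ * (M + ε) ≤ u := by
    rw [← le_div_iff₀ hMε] at *
    exact hnorm
  nlinarith [norm_nonneg f, hu0]

open NormedSpace

section James

variable {X : Type*} [NormedAddCommGroup X] [NormedSpace ℝ X]

set_option maxHeartbeats 1000000 in
/-- One step of the James construction: choose the next functional and vector. -/
lemma james_step {F : StrongDual ℝ (StrongDual ℝ X)} (hFnorm : ‖F‖ = 1)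
    (hFdist : ∀ y ∈ LinearMap.range (inclusionInDoubleDual ℝ X : X →ₗ[ℝ] StrongDual ℝ (StrongDual ℝ X)), (3/4 : ℝ) ≤ ‖F - y‖)
    (n : ℕ) (s : ℕ → (X →L[ℝ] ℝ) × X) (hs : ∀ m, m < n → F ((s m).1) = 1/2) :
    ∃ q : (X →L[ℝ] ℝ) × X, ‖q.1‖ ≤ 1 ∧ F q.1 = 1/2 ∧ (∀ m, m < n → q.1 ((s m).2) = 0) ∧
      ‖q.2‖ ≤ 2 ∧ q.1 q.2 = 1/2 ∧ (∀ m, m < n → (s m).1 q.2 = 1/2) := by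
  classical
  set J := inclusionInDoubleDual ℝ X with hJ
  set p : Submodule ℝ (StrongDual ℝ (StrongDual ℝ X)) := LinearMap.range (J : X →ₗ[ℝ] StrongDual ℝ (StrongDual ℝ X)) with hp
  -- Step A : find the functional f
  have hstepA : ∃ f : X →L[ℝ] ℝ, ‖f‖ ≤ 1 ∧ F f = 1/2 ∧ ∀ m, m < n → f ((s m).2) = 0 := by
    set G : Option (Fin n) → (StrongDual ℝ X) →L[ℝ] ℝ :=
      fun o => o.elim F (fun i => J ((s i).2)) with hG
    set c : Option (Fin n) → ℝ := fun o => o.elim (1/2) (fun _ => 0) with hc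
    have key : ∀ a : Option (Fin n) → ℝ,
        |∑ o, a o * c o| ≤ (2/3) * ‖∑ o, a o • G o‖ := by
      intro a
      have hsum1 : ∑ o, a o * c o = a none * (1/2) := by
        rw [Fintype.sum_option]
        simp [hc]
      have hsum2 : ∑ o, a o • G o = a none • F + ∑ i, a (some i) • J ((s i).2) := by
        rw [Fintype.sum_option]
        rfl
      rw [hsum1, hsum2]
      rcases eq_or_ne (a none) 0 with h0 | h0
      · rw [h0, zero_mul, abs_zero]
        positivity
      · set v : StrongDual ℝ (StrongDual ℝ X) := ∑ i, a (some i) • J ((s i).2) with hv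
        have hvmem : (-(a none)⁻¹) • v ∈ p := by
          apply Submodule.smul_mem
          apply Submodule.sum_mem
          intro i _
          exact Submodule.smul_mem _ _ (LinearMap.mem_range_self _ _)
        have heq : a none • F + v = a none • (F - (-(a none)⁻¹) • v) := by
          rw [smul_sub (a none) F, smul_smul]
          field_simp
          module
        have hnorm : ‖a none • F + v‖ = |a none| * ‖F - (-(a none)⁻¹) • v‖ := by
          rw [heq, @norm_smul ℝ (StrongDual ℝ (StrongDual ℝ X)) _ _ _ NormedSpace.toNormSMulClass, Real.norm_eq_abs]
        have hge : (3/4 : ℝ) ≤ ‖F - (-(a none)⁻¹) • v‖ := hFdist _ hvmem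
        have habs : 0 < |a none| := abs_pos.2 h0
        rw [hnorm, abs_mul]
        calc |a none| * |(1/2 : ℝ)| = |a none| * (1/2) := by norm_num
          _ ≤ (2/3) * (|a none| * (3/4)) := by nlinarith
          _ ≤ (2/3) * (|a none| * ‖F - (-(a none)⁻¹) • v‖) := by nlinarith
      -- done
    obtain ⟨f, hf1, hf2⟩ := helly_lemma G c (by norm_num) (by norm_num : (0:ℝ) < 1/3) key
    refine ⟨f, by linarith [hf1], ?_, ?_⟩
    · have := hf2 none
      simpa [hG, hc] using this
    · intro m hm
      have := hf2 (some ⟨m, hm⟩)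
      simp only [hG, hc, Option.elim] at this
      rw [NormedSpace.dual_def] at this
      simpa using this
  obtain ⟨f, hf1, hf2, hf3⟩ := hstepA
  -- Step B : find the vector x
  have hstepB : ∃ x : X, ‖x‖ ≤ 2 ∧ f x = 1/2 ∧ ∀ m, m < n → (s m).1 x = 1/2 := by
    set G : Fin (n+1) → X →L[ℝ] ℝ :=
      fun i => if h : (i : ℕ) < n then (s i).1 else f with hG
    have hFG : ∀ i, F (G i) = 1/2 := by
      intro i
      by_cases h : (i : ℕ) < n
      · simp only [hG, dif_pos h]; exact hs i h
      · simp only [hG, dif_neg h]; exact hf2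
    have key : ∀ a : Fin (n+1) → ℝ,
        |∑ i, a i * (fun _ : Fin (n+1) => (1/2 : ℝ)) i| ≤ 1 * ‖∑ i, a i • G i‖ := by
      intro a
      have h1 : ∑ i, a i * (1/2 : ℝ) = F (∑ i, a i • G i) := by
        rw [map_sum]
        refine Finset.sum_congr rfl fun i _ => ?_
        rw [_root_.map_smul, hFG i, smul_eq_mul]
      rw [h1, one_mul]
      calc |F (∑ i, a i • G i)| ≤ ‖F‖ * ‖∑ i, a i • G i‖ := F.le_opNorm _
        _ = ‖∑ i, a i • G i‖ := by rw [hFnorm, one_mul]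
    obtain ⟨x, hx1, hx2⟩ := helly_lemma G (fun _ => (1/2:ℝ)) zero_le_one one_pos key
    refine ⟨x, by linarith [hx1], ?_, ?_⟩
    · have := hx2 ⟨n, Nat.lt_succ_self n⟩
      simpa [hG] using this
    · intro m hm
      have := hx2 ⟨m, Nat.lt_succ_of_lt hm⟩
      simp only [hG] at this
      rw [dif_pos hm] at this
      exact this
  obtain ⟨x, hx1, hx2, hx3⟩ := hstepB
  exact ⟨(f, x), hf1, hf2, hf3, hx1, hx2, hx3⟩

set_option maxHeartbeats 1000000 in
/-- The James sequences for a non-reflexive space. -/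
lemma james_sequences [CompleteSpace X]
    (hns : ¬ Function.Surjective (inclusionInDoubleDual ℝ X)) :
    ∃ (f : ℕ → (X →L[ℝ] ℝ)) (x : ℕ → X),
      (∀ n, ‖f n‖ ≤ 1) ∧ (∀ n, ‖x n‖ ≤ 2) ∧
      (∀ i j, i ≤ j → f i (x j) = 1/2) ∧ (∀ i j, j < i → f i (x j) = 0) := by
  classical
  set J := inclusionInDoubleDual ℝ X with hJ
  set p : Submodule ℝ (StrongDual ℝ (StrongDual ℝ X)) := LinearMap.range (J : X →ₗ[ℝ] StrongDual ℝ (StrongDual ℝ X)) with hp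
  have hclosed : IsClosed (↑p : Set (StrongDual ℝ (StrongDual ℝ X))) := by
    have hiso : Isometry (J : X → StrongDual ℝ (StrongDual ℝ X)) :=
      (inclusionInDoubleDualLi ℝ (E := X)).isometry
    have : (↑p : Set (StrongDual ℝ (StrongDual ℝ X))) = Set.range (J : X → StrongDual ℝ (StrongDual ℝ X)) := by
      ext z; simp [hp, LinearMap.mem_range, Set.mem_range]
    rw [this]
    exact hiso.isClosedEmbedding.isClosed_range
  obtain ⟨G, hG⟩ : ∃ G, ∀ a, J a ≠ G := by
    rw [Function.Surjective] at hns; push_neg at hns; exact hns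
  have hGp : G ∉ p := by
    intro ⟨a, ha⟩; exact hG a ha
  obtain ⟨F₀, hF₀p, hF₀dist⟩ := riesz_lemma (𝕜 := ℝ) (E := StrongDual ℝ (StrongDual ℝ X)) (F := p) hclosed ⟨G, hGp⟩ (by norm_num : (3/4 : ℝ) < 1)
  have hF₀ne : F₀ ≠ 0 := fun h => hF₀p (h ▸ p.zero_mem)
  have hF₀pos : 0 < ‖F₀‖ :=
    lt_of_le_of_ne (ContinuousLinearMap.opNorm_nonneg _)
      (fun h => hF₀ne ((ContinuousLinearMap.opNorm_zero_iff F₀).1 h.symm))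
  set F : StrongDual ℝ (StrongDual ℝ X) := ‖F₀‖⁻¹ • F₀ with hF
  have hFnorm : ‖F‖ = 1 := by
    rw [hF, @norm_smul ℝ (StrongDual ℝ (StrongDual ℝ X)) _ _ _ NormedSpace.toNormSMulClass, Real.norm_eq_abs, abs_of_pos (by positivity)]
    field_simp
  have hFdist : ∀ y ∈ p, (3/4 : ℝ) ≤ ‖F - y‖ := by
    intro y hy
    have h1 : F - y = ‖F₀‖⁻¹ • (F₀ - ‖F₀‖ • y) := by
      rw [smul_sub ‖F₀‖⁻¹ F₀, smul_smul, inv_mul_cancel₀ (ne_of_gt hF₀pos), one_smul, hF]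
    have h2 : ‖F₀‖ • y ∈ p := Submodule.smul_mem _ _ hy
    rw [h1, @norm_smul ℝ (StrongDual ℝ (StrongDual ℝ X)) _ _ _ NormedSpace.toNormSMulClass, Real.norm_eq_abs, abs_of_pos (by positivity)]
    calc (3/4 : ℝ) = ‖F₀‖⁻¹ * ((3/4) * ‖F₀‖) := by field_simp
      _ ≤ ‖F₀‖⁻¹ * ‖F₀ - ‖F₀‖ • y‖ := by
          apply mul_le_mul_of_nonneg_left (hF₀dist _ h2) (by positivity)
  -- The recursion
  set pick : ℕ → (ℕ → ((X →L[ℝ] ℝ) × X)) → ((X →L[ℝ] ℝ) × X) := fun n s =>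
    if h : ∀ m, m < n → F ((s m).1) = 1/2 then
      (james_step hFnorm hFdist n s h).choose else (0, 0) with hpick
  set Q : ℕ → ℕ → ((X →L[ℝ] ℝ) × X) := fun n => Nat.rec (fun _ => ((0 : X →L[ℝ] ℝ), (0 : X)))
    (fun m Qm => Function.update Qm m (pick m Qm)) n with hQdef
  have hQsucc : ∀ n, Q (n+1) = Function.update (Q n) n (pick n (Q n)) := fun n => rfl
  set seq : ℕ → ((X →L[ℝ] ℝ) × X) := fun n => Q (n+1) n with hseq
  have hseqeq : ∀ n, seq n = pick n (Q n) := by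
    intro n
    rw [hseq]
    simp only [hQsucc n, Function.update_self]
  have hstab : ∀ n m, n < m → Q m n = seq n := by
    intro n m
    induction m with
    | zero => omega
    | succ m ih =>
      intro h
      rcases Nat.lt_succ_iff_lt_or_eq.1 h with h' | rfl
      · rw [hQsucc m, Function.update_of_ne (by omega)]
        exact ih h'
      · rw [hQsucc n, Function.update_self, hseqeq n]
  have hinv : ∀ n, ‖(seq n).1‖ ≤ 1 ∧ F ((seq n).1) = 1/2 ∧
      (∀ m, m < n → (seq n).1 ((seq m).2) = 0) ∧ ‖(seq n).2‖ ≤ 2 ∧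
      (seq n).1 (seq n).2 = 1/2 ∧ (∀ m, m < n → (seq m).1 (seq n).2 = 1/2) := by
    intro n
    induction n using Nat.strong_induction_on with
    | _ n ih =>
      have hcond : ∀ m, m < n → F ((Q n m).1) = 1/2 := by
        intro m hm
        rw [hstab m n hm]
        exact (ih m hm).2.1
      have hpickeq : pick n (Q n) = (james_step hFnorm hFdist n (Q n) hcond).choose := by
        rw [hpick]; exact dif_pos hcond
      have hspec := (james_step hFnorm hFdist n (Q n) hcond).choose_spec
      rw [← hpickeq, ← hseqeq n] at hspec
      obtain ⟨h1, h2, h3, h4, h5, h6⟩ := hspec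
      refine ⟨h1, h2, ?_, h4, h5, ?_⟩
      · intro m hm
        have := h3 m hm
        rwa [hstab m n hm] at this
      · intro m hm
        have := h6 m hm
        rwa [hstab m n hm] at this
  refine ⟨fun n => (seq n).1, fun n => (seq n).2, fun n => (hinv n).1,
    fun n => (hinv n).2.2.2.1, ?_, ?_⟩
  · intro i j hij
    rcases eq_or_lt_of_le hij with rfl | h
    · exact (hinv i).2.2.2.2.1
    · exact (hinv j).2.2.2.2.2 i h
  · intro i j hji
    exact (hinv i).2.2.1 j hji

end James

section Forward

variable {X : Type*} [NormedAddCommGroup X] [NormedSpace ℝ X]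

set_option maxHeartbeats 1000000 in
lemma surjective_of_banachSaks' [CompleteSpace X] (hbs : HasBanachSaks X) :
    Function.Surjective (inclusionInDoubleDual ℝ X) := by
  by_contra hns
  obtain ⟨f, x, hf1, hx2, hfx, hfx0⟩ := james_sequences hns
  obtain ⟨φ, hφ, y, hy⟩ := hbs x ⟨2, hx2⟩
  set σ : ℕ → X := fun k => (k : ℝ)⁻¹ • ∑ j ∈ Finset.range k, x (φ j) with hσ
  have happ : ∀ i k, f i (σ k) = (k : ℝ)⁻¹ * ∑ j ∈ Finset.range k, f i (x (φ j)) := by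
    intro i k
    rw [hσ, _root_.map_smul, map_sum, smul_eq_mul]
  -- Claim 1 : f i y = 1/2 for all i
  have hval : ∀ i, f i y = 1/2 := by
    intro i
    have hconv : Tendsto (fun k => f i (σ k)) atTop (𝓝 (f i y)) :=
      ((f i).continuous.tendsto y).comp hy
    refine tendsto_nhds_unique hconv ?_
    rw [← tendsto_sub_nhds_zero_iff]
    apply squeeze_zero_norm' (a := fun k : ℕ => (i * (5/2)) * (k : ℝ)⁻¹)
    · filter_upwards [eventually_ge_atTop 1] with k hk
      have hkpos : (0:ℝ) < (k:ℝ) := by exact_mod_cast hk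
      have hhalf : (1/2 : ℝ) = (k : ℝ)⁻¹ * ∑ _j ∈ Finset.range k, (1/2 : ℝ) := by
        rw [Finset.sum_const, Finset.card_range, nsmul_eq_mul]
        field_simp
      have hdiff : f i (σ k) - 1/2
          = (k:ℝ)⁻¹ * ∑ j ∈ Finset.range k, (f i (x (φ j)) - 1/2) := by
        have hck : (k:ℝ)⁻¹ * ((k:ℝ) * (1/2)) = 1/2 := by field_simp
        rw [happ i k, Finset.sum_sub_distrib, mul_sub, Finset.sum_const, Finset.card_range,
          nsmul_eq_mul, hck]
      set t : ℕ → ℝ := fun j => f i (x (φ j)) - 1/2 with ht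
      have htzero : ∀ j, i ≤ j → t j = 0 := by
        intro j hj
        have h2 : i ≤ φ j := le_trans hj (hφ.le_apply)
        show f i (x (φ j)) - 1/2 = 0
        rw [hfx i (φ j) h2]
        ring
      have htbound : ∀ j, |t j| ≤ 5/2 := by
        intro j
        show |f i (x (φ j)) - 1/2| ≤ 5/2
        have h1 : |f i (x (φ j))| ≤ 2 := by
          calc |f i (x (φ j))| ≤ ‖f i‖ * ‖x (φ j)‖ := (f i).le_opNorm _
            _ ≤ 1 * 2 := by
                apply mul_le_mul (hf1 i) (hx2 (φ j)) (norm_nonneg _) zero_le_one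
            _ = 2 := one_mul 2
        have h2 : |f i (x (φ j)) - 1/2| ≤ |f i (x (φ j))| + |(1/2 : ℝ)| := by
          rw [sub_eq_add_neg]
          refine (abs_add_le _ _).trans ?_
          rw [abs_neg]
        have h3 : |(1/2 : ℝ)| = 1/2 := by norm_num
        rw [h3] at h2
        linarith
      have hsub : ∑ j ∈ Finset.range k, t j = ∑ j ∈ Finset.range (min i k), t j := by
        symm
        apply Finset.sum_subset
        · intro j hj
          rw [Finset.mem_range] at hj ⊢
          omega
        · intro j hj hj'
          rw [Finset.mem_range] at hj hj'
          exact htzero j (by omega)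
      have hsumb : |∑ j ∈ Finset.range k, t j| ≤ i * (5/2) := by
        rw [hsub]
        calc |∑ j ∈ Finset.range (min i k), t j|
            ≤ ∑ j ∈ Finset.range (min i k), |t j| := Finset.abs_sum_le_sum_abs _ _
          _ ≤ ∑ _j ∈ Finset.range (min i k), (5/2 : ℝ) :=
              Finset.sum_le_sum fun j _ => htbound j
          _ = (min i k) * (5/2) := by
              rw [Finset.sum_const, Finset.card_range, nsmul_eq_mul]
          _ ≤ i * (5/2) := by
              have h5 : ((min i k : ℕ) : ℝ) ≤ (i : ℝ) := Nat.cast_le.2 (Nat.min_le_left i k)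
              nlinarith
      rw [hdiff, Real.norm_eq_abs, abs_mul, abs_of_pos (by positivity : (0:ℝ) < (k:ℝ)⁻¹)]
      rw [mul_comm ((i : ℝ) * (5/2)) _]
      exact mul_le_mul_of_nonneg_left hsumb (by positivity)
    · have : Tendsto (fun k : ℕ => (k:ℝ)⁻¹) atTop (𝓝 0) := tendsto_inv_atTop_nhds_zero_nat
      simpa using this.const_mul ((i : ℝ) * (5/2))
  -- Claim 2 : the means stay far from y
  have hlow : ∀ k : ℕ, 1 ≤ k → (1/2 : ℝ) ≤ ‖y - σ k‖ := by
    intro k hk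
    set i := φ (k-1) + 1 with hi
    have hz : f i (σ k) = 0 := by
      rw [happ]
      have : ∀ j ∈ Finset.range k, f i (x (φ j)) = 0 := by
        intro j hj
        rw [Finset.mem_range] at hj
        apply hfx0
        have : φ j ≤ φ (k-1) := hφ.monotone (by omega)
        omega
      rw [Finset.sum_congr rfl this, Finset.sum_const, smul_zero, mul_zero]
    have h12 : f i (y - σ k) = 1/2 := by
      rw [map_sub, hval i, hz, sub_zero]
    calc (1/2 : ℝ) = |f i (y - σ k)| := by
          rw [h12, abs_of_pos (by norm_num : (0:ℝ) < 1/2)]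
      _ ≤ ‖f i‖ * ‖y - σ k‖ := (f i).le_opNorm _
      _ ≤ 1 * ‖y - σ k‖ := by
          apply mul_le_mul_of_nonneg_right (hf1 i) (norm_nonneg _)
      _ = ‖y - σ k‖ := one_mul _
  -- contradiction
  have := hy
  rw [Metric.tendsto_atTop] at this
  obtain ⟨N, hN⟩ := this (1/2) (by norm_num)
  have h1 := hN (max N 1) (le_max_left _ _)
  have h2 := hlow (max N 1) (le_max_right _ _)
  rw [dist_eq_norm, ← norm_neg] at h1
  simp only [neg_sub] at h1
  linarith

lemma weakBanachSaks_of_banachSaks (hbs : HasBanachSaks X) : HasWeakBanachSaks X := by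
  intro x u hconv
  apply hbs
  -- weakly convergent sequences are bounded
  have hbdd : ∀ f : X →L[ℝ] ℝ, ∃ C, ∀ n,
      ‖(inclusionInDoubleDual ℝ X (x n)) f‖ ≤ C := by
    intro f
    have h1 : Tendsto (fun n => ‖f (x n)‖) atTop (𝓝 ‖f u‖) := (hconv f).norm
    obtain ⟨C, hC⟩ := h1.bddAbove_range
    exact ⟨C, fun n => hC (Set.mem_range_self n)⟩
  obtain ⟨C', hC'⟩ := banach_steinhaus hbdd
  refine ⟨C', fun n => ?_⟩
  have := (inclusionInDoubleDualLi ℝ (E := X)).norm_map (x n)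
  rw [← this]
  exact hC' n

end Forward

section Converse

variable {X : Type*} [NormedAddCommGroup X] [NormedSpace ℝ X]

set_option maxHeartbeats 1000000 in
lemma exists_ultrafilter_weak_limit
    (hsurj : Function.Surjective (inclusionInDoubleDual ℝ X))
    (z : ℕ → X) {C : ℝ} (hC : 0 ≤ C) (hb : ∀ n, ‖z n‖ ≤ C) (U : Ultrafilter ℕ) :
    ∃ y : X, ∀ f : X →L[ℝ] ℝ, Tendsto (fun n => f (z n)) (U : Filter ℕ) (𝓝 (f y)) := by
  have hlim : ∀ f : X →L[ℝ] ℝ, ∃ r : ℝ,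
      Tendsto (fun n => f (z n)) (U : Filter ℕ) (𝓝 r) := by
    intro f
    have hmem : ∀ n, f (z n) ∈ Set.Icc (-(‖f‖ * C)) (‖f‖ * C) := by
      intro n
      have h1 : |f (z n)| ≤ ‖f‖ * C := by
        calc |f (z n)| ≤ ‖f‖ * ‖z n‖ := f.le_opNorm _
          _ ≤ ‖f‖ * C := mul_le_mul_of_nonneg_left (hb n) (norm_nonneg f)
      rw [Set.mem_Icc]
      constructor
      · linarith [neg_abs_le (f (z n))]
      · linarith [le_abs_self (f (z n))]
    have hle : (Ultrafilter.map (fun n => f (z n)) U : Filter ℝ)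
        ≤ Filter.principal (Set.Icc (-(‖f‖ * C)) (‖f‖ * C)) := by
      rw [le_principal_iff, Ultrafilter.coe_map, Filter.mem_map]
      exact Filter.univ_mem' hmem
    obtain ⟨r, _, hr⟩ := isCompact_Icc.ultrafilter_le_nhds
      (Ultrafilter.map (fun n => f (z n)) U) hle
    refine ⟨r, ?_⟩
    rwa [Filter.Tendsto, ← Ultrafilter.coe_map]
  choose L hL using hlim
  have hadd : ∀ f g : X →L[ℝ] ℝ, L (f + g) = L f + L g := by
    intro f g
    refine tendsto_nhds_unique ?_ ((hL f).add (hL g))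
    have := hL (f + g)
    simpa using this
  have hsmul : ∀ (c : ℝ) (f : X →L[ℝ] ℝ), L (c • f) = c * L f := by
    intro c f
    refine tendsto_nhds_unique ?_ ((hL f).const_mul c)
    have := hL (c • f)
    simpa using this
  have hbd : ∀ f : X →L[ℝ] ℝ, |L f| ≤ C * ‖f‖ := by
    intro f
    have h1 : Tendsto (fun n => |f (z n)|) (U : Filter ℕ) (𝓝 |L f|) := (hL f).abs
    refine le_of_tendsto h1 (Filter.Eventually.of_forall fun n => ?_)
    calc |f (z n)| ≤ ‖f‖ * ‖z n‖ := f.le_opNorm _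
      _ ≤ ‖f‖ * C := mul_le_mul_of_nonneg_left (hb n) (norm_nonneg f)
      _ = C * ‖f‖ := mul_comm _ _
  set Llin : StrongDual ℝ X →ₗ[ℝ] ℝ :=
    { toFun := L, map_add' := hadd,
      map_smul' := by intro c f; simpa using hsmul c f } with hLlin
  set Lc : StrongDual ℝ (StrongDual ℝ X) :=
    LinearMap.mkContinuous Llin C (fun f => by
      simpa [hLlin, Real.norm_eq_abs] using hbd f) with hLc
  obtain ⟨y, hy⟩ := hsurj Lc
  refine ⟨y, fun f => ?_⟩
  have hfy : f y = L f := by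
    have h1 := congrArg (fun g : StrongDual ℝ (StrongDual ℝ X) => g f) hy
    rw [NormedSpace.dual_def] at h1
    rw [h1]
    rfl
  rw [hfy]
  exact hL f

set_option maxHeartbeats 1000000 in
lemma weak_conv_subseq
    (hsurj : Function.Surjective (inclusionInDoubleDual ℝ X))
    (x : ℕ → X) {C : ℝ} (hC : 0 ≤ C) (hb : ∀ n, ‖x n‖ ≤ C) :
    ∃ φ : ℕ → ℕ, StrictMono φ ∧ ∃ y : X, WeakConvTo (fun n => x (φ n)) y := by
  classical
  set Y : Submodule ℝ X := (Submodule.span ℝ (Set.range x)).topologicalClosure with hY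
  have hxY : ∀ n, x n ∈ Y := fun n =>
    Submodule.le_topologicalClosure _ (Submodule.subset_span (Set.mem_range_self n))
  have hYclosed : IsClosed (Y : Set X) := Submodule.isClosed_topologicalClosure _
  -- countable set whose closure contains Y
  have hsep : TopologicalSpace.IsSeparable (Y : Set X) := by
    have h1 : TopologicalSpace.IsSeparable (Set.range x) := (Set.countable_range x).isSeparable
    have h2 := h1.span (R := ℝ)
    rw [hY, Submodule.topologicalClosure_coe]
    exact h2.closure
  obtain ⟨c, hcount, hcdense⟩ := hsep
  have hcne : c.Nonempty := by
    rcases Set.eq_empty_or_nonempty c with rfl | h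
    · exfalso
      have h0 : (0 : X) ∈ (Y : Set X) := Y.zero_mem
      have := hcdense h0
      simpa using this
    · exact h
  obtain ⟨u, hu⟩ := hcount.exists_eq_range hcne
  -- norming functionals
  have hdual : ∀ k : ℕ, ∃ g : X →L[ℝ] ℝ, ‖g‖ ≤ 1 ∧ g (u k) = ‖u k‖ := fun k =>
    exists_dual_vector'' ℝ (u k)
  choose g hg1 hg2 using hdual
  -- norming property
  have hnorming : ∀ w : X, w ∈ Y → (∀ k, g k w = 0) → w = 0 := by
    intro w hw hgw
    have hwc : w ∈ closure c := hcdense hw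
    have happrox : ∀ j : ℕ, ∃ k, ‖u k - w‖ < 1/(j+1) := by
      intro j
      obtain ⟨b, hbc, hbd⟩ := Metric.mem_closure_iff.1 hwc (1/(j+1)) (by positivity)
      rw [hu] at hbc
      obtain ⟨k, rfl⟩ := hbc
      exact ⟨k, by rwa [dist_comm, dist_eq_norm] at hbd⟩
    have hwnorm : ∀ j : ℕ, ‖w‖ ≤ 2/(j+1) := by
      intro j
      obtain ⟨k, hk⟩ := happrox j
      have h1 : ‖u k‖ = g k (u k) := (hg2 k).symm
      have h2 : g k (u k) = g k (u k - w) := by rw [map_sub, hgw k, sub_zero]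
      have h3 : |g k (u k - w)| ≤ ‖u k - w‖ := by
        calc |g k (u k - w)| ≤ ‖g k‖ * ‖u k - w‖ := (g k).le_opNorm _
          _ ≤ 1 * ‖u k - w‖ := mul_le_mul_of_nonneg_right (hg1 k) (norm_nonneg _)
          _ = ‖u k - w‖ := one_mul _
      have h4 : ‖u k‖ ≤ ‖u k - w‖ := by
        rw [h1, h2]
        exact (le_abs_self _).trans h3
      have h5 : ‖w‖ ≤ ‖u k‖ + ‖u k - w‖ := by
        calc ‖w‖ = ‖u k - (u k - w)‖ := by congr 1; abel
          _ ≤ ‖u k‖ + ‖u k - w‖ := norm_sub_le _ _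
      have h6 : (1:ℝ)/(j+1) > 0 := by positivity
      calc ‖w‖ ≤ ‖u k‖ + ‖u k - w‖ := h5
        _ ≤ ‖u k - w‖ + ‖u k - w‖ := by linarith
        _ ≤ 1/(j+1) + 1/(j+1) := by linarith
        _ = 2/(j+1) := by ring
    have hlim : Tendsto (fun j : ℕ => 2/((j:ℝ)+1)) atTop (𝓝 0) := by
      have := tendsto_one_div_add_atTop_nhds_zero_nat (𝕜 := ℝ)
      have h2 := this.const_mul (2:ℝ)
      simpa [mul_one_div, div_eq_mul_inv] using h2
    have : ‖w‖ ≤ 0 := ge_of_tendsto' hlim hwnorm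
    exact norm_le_zero_iff.1 this
  -- diagonal subsequence
  set G : ℕ → (ℕ → ℝ) := fun n k => g k (x n) with hGdef
  have hGmem : ∀ n, G n ∈ Set.pi Set.univ (fun _ : ℕ => Set.Icc (-C) C) := by
    intro n k _
    have h1 : |g k (x n)| ≤ C := by
      calc |g k (x n)| ≤ ‖g k‖ * ‖x n‖ := (g k).le_opNorm _
        _ ≤ 1 * C := mul_le_mul (hg1 k) (hb n) (norm_nonneg _) zero_le_one
        _ = C := one_mul C
    rw [Set.mem_Icc]
    constructor
    · linarith [neg_abs_le (g k (x n))]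
    · linarith [le_abs_self (g k (x n))]
  have hcomp : IsCompact (Set.pi Set.univ (fun _ : ℕ => Set.Icc (-C) C)) :=
    isCompact_univ_pi fun _ => isCompact_Icc
  obtain ⟨ℓ, _, φ₁, hφ₁, hGconv⟩ := hcomp.isSeqCompact hGmem
  have hcoord : ∀ k, Tendsto (fun n => g k (x (φ₁ n))) atTop (𝓝 (ℓ k)) := by
    intro k
    exact tendsto_pi_nhds.1 hGconv k
  -- ultrafilter limit
  set U : Ultrafilter ℕ := Ultrafilter.of atTop with hU
  have hUle : (U : Filter ℕ) ≤ atTop := Ultrafilter.of_le _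
  obtain ⟨y, hy⟩ := exists_ultrafilter_weak_limit hsurj (fun n => x (φ₁ n)) hC
    (fun n => hb _) U
  -- membership criterion
  have hmemY : ∀ (z : ℕ → X), (∀ n, z n ∈ Y) → ∀ (V : Ultrafilter ℕ) (w : X),
      (∀ f : X →L[ℝ] ℝ, Tendsto (fun n => f (z n)) (V : Filter ℕ) (𝓝 (f w))) → w ∈ Y := by
    intro z hz V w hw
    by_contra hnot
    obtain ⟨f, s0, hfs, hfY⟩ :=
      geometric_hahn_banach_point_closed Y.convex hYclosed hnot
    have hfzero : ∀ b ∈ Y, f b = 0 := by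
      intro b hbY
      by_contra hfb
      have := hfY (((s0 - 1) / f b) • b) (Y.smul_mem _ hbY)
      rw [_root_.map_smul, smul_eq_mul, div_mul_cancel₀ _ hfb] at this
      linarith
    have h1 : Tendsto (fun n => f (z n)) (V : Filter ℕ) (𝓝 (f w)) := hw f
    have h2 : Tendsto (fun n => f (z n)) (V : Filter ℕ) (𝓝 0) := by
      have heq : (fun n => f (z n)) = fun _ => (0:ℝ) := funext fun n => hfzero _ (hz n)
      rw [heq]
      exact tendsto_const_nhds
    have hfw : f w = 0 := tendsto_nhds_unique h1 h2
    have h0Y := hfY 0 Y.zero_mem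
    rw [map_zero] at h0Y
    linarith
  have hyY : y ∈ Y := hmemY _ (fun n => hxY _) _ y hy
  have hyk : ∀ k, g k y = ℓ k := fun k =>
    tendsto_nhds_unique (hy (g k)) ((hcoord k).mono_left hUle)
  refine ⟨φ₁, hφ₁, y, ?_⟩
  intro f
  by_contra hnot
  rw [Metric.tendsto_atTop] at hnot
  push_neg at hnot
  obtain ⟨ε, hε, hfreq⟩ := hnot
  have hfreq' : ∀ N, ∃ n > N, ε ≤ dist (f (x (φ₁ n))) (f y) := by
    intro N
    obtain ⟨n, hn1, hn2⟩ := hfreq (N+1)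
    exact ⟨n, by omega, hn2⟩
  obtain ⟨ψ, hψ, hψprop⟩ := extraction_of_frequently_atTop (frequently_atTop'.2 hfreq')
  obtain ⟨w, hw⟩ := exists_ultrafilter_weak_limit hsurj (fun n => x (φ₁ (ψ n))) hC
    (fun n => hb _) U
  have hwY : w ∈ Y := hmemY _ (fun n => hxY _) _ w hw
  have hwk : ∀ k, g k w = ℓ k := by
    intro k
    have h1 : Tendsto (fun n => g k (x (φ₁ (ψ n)))) atTop (𝓝 (ℓ k)) :=
      (hcoord k).comp hψ.tendsto_atTop
    exact tendsto_nhds_unique (hw (g k)) (h1.mono_left hUle)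
  have hwy : w = y := by
    have hsub : ∀ k, g k (w - y) = 0 := fun k => by
      rw [map_sub, hwk, hyk, sub_self]
    have := hnorming (w - y) (Y.sub_mem hwY hyY) hsub
    exact sub_eq_zero.1 this
  have h1 : Tendsto (fun n => f (x (φ₁ (ψ n)))) (U : Filter ℕ) (𝓝 (f y)) := by
    rw [← hwy]
    exact hw f
  have h2 : ∀ᶠ n in (U : Filter ℕ), dist (f (x (φ₁ (ψ n)))) (f y) < ε := by
    have := Metric.tendsto_nhds.1 h1 ε hε
    exact this
  obtain ⟨n, hn⟩ := h2.exists
  exact absurd hn (not_lt.2 (hψprop n))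

end Converse


theorem banachSaks_iff_reflexive_and_weakBanachSaks (X : Type*)
    [NormedAddCommGroup X] [NormedSpace ℝ X] [CompleteSpace X] :
    HasBanachSaks X ↔
      (Function.Surjective (NormedSpace.inclusionInDoubleDual ℝ X) ∧ HasWeakBanachSaks X) := by
  constructor
  · intro h
    exact ⟨surjective_of_banachSaks' h, weakBanachSaks_of_banachSaks h⟩
  · rintro ⟨hsurj, hwbs⟩
    intro x hbound
    obtain ⟨C, hC⟩ := hbound
    have hC0 : 0 ≤ C := le_trans (norm_nonneg _) (hC 0)
    obtain ⟨φ₁, hφ₁, y, hconv⟩ := weak_conv_subseq hsurj x hC0 hC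
    obtain ⟨φ₂, hφ₂, y', hy'⟩ := hwbs (fun n => x (φ₁ n)) y hconv
    exact ⟨φ₁ ∘ φ₂, hφ₁.comp hφ₂, y', by simpa [Function.comp] using hy'⟩
end

section
/- Every uniformly convex Banach space has the Banach-Saks property (Kakutani's theorem). -/
open Filter MeasureTheory Topology Set

section KakutaniAux

variable {X : Type*} [NormedAddCommGroup X] [NormedSpace ℝ X]

/-- Scaled uniform convexity. -/
lemma uc_scaled [UniformConvexSpace X] {ε : ℝ} (hε : 0 < ε) :
    ∃ δ : ℝ, 0 < δ ∧ δ ≤ 1 ∧ ∀ R : ℝ, 0 < R → ∀ x y : X, ‖x‖ ≤ R → ‖y‖ ≤ R →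
      ε * R ≤ ‖x - y‖ → ‖x + y‖ ≤ (2 - δ) * R := by
  obtain ⟨δ₀, hδ₀, h⟩ := exists_forall_closed_ball_dist_add_le_two_sub X hε
  refine ⟨min δ₀ 1, lt_min hδ₀ one_pos, min_le_right _ _, fun R hR x y hx hy hxy => ?_⟩
  have hR' : (0:ℝ) < R⁻¹ := inv_pos.2 hR
  have hx' : ‖R⁻¹ • x‖ ≤ 1 := by
    rw [norm_smul, Real.norm_eq_abs, abs_of_pos hR']
    calc R⁻¹ * ‖x‖ ≤ R⁻¹ * R := by gcongr
    _ = 1 := inv_mul_cancel₀ hR.ne'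
  have hy' : ‖R⁻¹ • y‖ ≤ 1 := by
    rw [norm_smul, Real.norm_eq_abs, abs_of_pos hR']
    calc R⁻¹ * ‖y‖ ≤ R⁻¹ * R := by gcongr
    _ = 1 := inv_mul_cancel₀ hR.ne'
  have hd : ε ≤ ‖R⁻¹ • x - R⁻¹ • y‖ := by
    rw [← smul_sub, norm_smul, Real.norm_eq_abs, abs_of_pos hR']
    calc ε = R⁻¹ * (ε * R) := by field_simp
    _ ≤ R⁻¹ * ‖x - y‖ := by gcongr
  have := h hx' hy' hd
  have h2 : ‖R⁻¹ • x + R⁻¹ • y‖ ≤ 2 - min δ₀ 1 := by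
    refine this.trans ?_
    have : min δ₀ 1 ≤ δ₀ := min_le_left _ _
    linarith
  have h3 : ‖x + y‖ = R * ‖R⁻¹ • x + R⁻¹ • y‖ := by
    rw [← smul_add, norm_smul, Real.norm_eq_abs, abs_of_pos hR']
    field_simp
  rw [h3, mul_comm]
  exact mul_le_mul_of_nonneg_right h2 hR.le

/-- In a uniformly convex Banach space, the decreasing sequence of closed convex hulls of the
tails of a bounded sequence has a common point. -/
lemma exists_mem_closure_convexHull_tails [UniformConvexSpace X] [CompleteSpace X]
    (w : ℕ → X) (C : ℝ) (hw : ∀ n, ‖w n‖ ≤ C) :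
    ∃ u : X, ∀ m : ℕ, u ∈ closure (convexHull ℝ (w '' Ici m)) := by
  set K : ℕ → Set X := fun m => convexHull ℝ (w '' Ici m) with hK
  have hKne : ∀ m, (K m).Nonempty := fun m =>
    ⟨w m, subset_convexHull ℝ _ (mem_image_of_mem _ (mem_Ici.2 le_rfl))⟩
  have hKanti : ∀ {m m'}, m ≤ m' → K m' ⊆ K m := fun {m m'} h =>
    convexHull_mono (image_mono (Ici_subset_Ici.2 h))
  have hKconv : ∀ m, Convex ℝ (K m) := fun m => convex_convexHull _ _
  have hKbdd : ∀ m, ∀ v ∈ K m, ‖v‖ ≤ C := by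
    intro m v hv
    have : K m ⊆ Metric.closedBall 0 C := by
      apply convexHull_min _ (convex_closedBall _ _)
      rintro _ ⟨n, -, rfl⟩
      simpa [Metric.mem_closedBall, dist_eq_norm] using hw n
    simpa [Metric.mem_closedBall, dist_eq_norm] using this hv
  set N : ℕ → Set ℝ := fun m => (fun v => ‖v‖) '' K m with hN
  have hNne : ∀ m, (N m).Nonempty := fun m => (hKne m).image _
  have hNbdd : ∀ m, BddBelow (N m) := fun m =>
    ⟨0, by rintro _ ⟨v, -, rfl⟩; exact norm_nonneg _⟩
  set t : ℕ → ℝ := fun m => sInf (N m) with ht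
  have htnonneg : ∀ m, 0 ≤ t m := fun m =>
    le_csInf (hNne m) (by rintro _ ⟨v, -, rfl⟩; exact norm_nonneg _)
  have htC : ∀ m, t m ≤ C := by
    intro m
    obtain ⟨v, hv⟩ := hKne m
    exact csInf_le_of_le (hNbdd m) (mem_image_of_mem _ hv) (hKbdd m v hv)
  have htmono : Monotone t := by
    intro m m' h
    exact csInf_le_csInf (hNbdd m) (hNne m') (image_mono (hKanti h))
  have hbddab : BddAbove (range t) := ⟨C, by rintro _ ⟨m, rfl⟩; exact htC m⟩
  set T : ℝ := ⨆ m, t m with hT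
  have htT : ∀ m, t m ≤ T := fun m => le_ciSup hbddab m
  have hT0 : 0 ≤ T := le_trans (htnonneg 0) (htT 0)
  -- choose approximate minimizers
  have hpick : ∀ m : ℕ, ∃ v, v ∈ K m ∧ ‖v‖ < t m + 1 / (m + 1) := by
    intro m
    obtain ⟨a, ⟨v, hv, rfl⟩, ha⟩ :=
      Real.lt_sInf_add_pos (hNne m) (by positivity : (0:ℝ) < 1 / (m + 1))
    exact ⟨v, hv, ha⟩
  choose u hu1 hu2 using hpick
  have hinv_le : ∀ {m M : ℕ}, M ≤ m → 1 / ((m:ℝ) + 1) ≤ 1 / ((M:ℝ) + 1) := by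
    intro m M h
    apply one_div_le_one_div_of_le (by positivity)
    exact_mod_cast by omega
  -- u is Cauchy
  have hcauchy : CauchySeq u := by
    rw [Metric.cauchySeq_iff]
    intro ρ hρ
    rcases lt_or_ge 0 T with hTpos | hTnonpos
    · -- main case
      have hε : (0:ℝ) < ρ / (T + 1) := by positivity
      obtain ⟨δ, hδ, hδ1, H⟩ := uc_scaled (X := X) hε
      set γ : ℝ := δ * T / 2 with hγ
      have hγpos : 0 < γ := by positivity
      obtain ⟨m₀, hm₀⟩ := exists_lt_of_lt_ciSup (show T - γ / 2 < ⨆ m, t m by rw [← hT]; linarith)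
      obtain ⟨Kn, hKn⟩ := exists_nat_gt (2 / γ)
      set M₁ : ℕ := max m₀ Kn with hM₁
      have hη : 1 / ((M₁:ℝ) + 1) < γ / 2 := by
        have h1 : (2 / γ) < (M₁:ℝ) + 1 := by
          have : (Kn:ℝ) ≤ M₁ := by exact_mod_cast le_max_right m₀ Kn
          linarith
        rw [div_lt_iff₀ (by positivity)] at h1 ⊢
        nlinarith
      have hη1 : 1 / ((M₁:ℝ) + 1) ≤ 1 := by
        have h1 : (1:ℝ) ≤ (M₁:ℝ) + 1 := by linarith [(Nat.cast_nonneg M₁ : (0:ℝ) ≤ (M₁:ℝ))]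
        calc 1 / ((M₁:ℝ) + 1) ≤ 1 / 1 := one_div_le_one_div_of_le (by norm_num : (0:ℝ) < 1) h1
        _ = 1 := by norm_num
      set η : ℝ := 1 / ((M₁:ℝ) + 1) with hηdef
      set R : ℝ := T + η with hRdef
      have hηpos : 0 < η := by positivity
      have hRpos : 0 < R := by simp only [hRdef]; linarith
      refine ⟨M₁, fun m hm n hn => ?_⟩
      have humem : u m ∈ K (min m n) := hKanti (min_le_left _ _) (hu1 m)
      have hunmem : u n ∈ K (min m n) := hKanti (min_le_right _ _) (hu1 n)
      have hnormm : ‖u m‖ ≤ R := by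
        have := (hu2 m).le
        have h2 : 1 / ((m:ℝ) + 1) ≤ η := hinv_le hm
        have := htT m
        simp only [hRdef]; linarith
      have hnormn : ‖u n‖ ≤ R := by
        have := (hu2 n).le
        have h2 : 1 / ((n:ℝ) + 1) ≤ η := hinv_le hn
        have := htT n
        simp only [hRdef]; linarith
      have hmid : (2:ℝ)⁻¹ • u m + (2:ℝ)⁻¹ • u n ∈ K (min m n) := by
        apply hKconv (min m n) humem hunmem (by norm_num) (by norm_num)
        norm_num
      have hmidnorm : t M₁ ≤ ‖(2:ℝ)⁻¹ • u m + (2:ℝ)⁻¹ • u n‖ := by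
        have h1 : t M₁ ≤ t (min m n) := htmono (le_min hm hn)
        have h2 : t (min m n) ≤ ‖(2:ℝ)⁻¹ • u m + (2:ℝ)⁻¹ • u n‖ :=
          csInf_le (hNbdd _) (mem_image_of_mem _ hmid)
        linarith
      have htM₁ : T - γ / 2 < t M₁ := lt_of_lt_of_le hm₀ (htmono (le_max_left _ _))
      have hlt : ‖u m - u n‖ < ρ / (T + 1) * R := by
        by_contra hcon
        push_neg at hcon
        have := H R hRpos (u m) (u n) hnormm hnormn hcon
        have heq : ‖(2:ℝ)⁻¹ • u m + (2:ℝ)⁻¹ • u n‖ = 2⁻¹ * ‖u m + u n‖ := by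
          rw [← smul_add, norm_smul, Real.norm_eq_abs]
          norm_num
        have hup : ‖(2:ℝ)⁻¹ • u m + (2:ℝ)⁻¹ • u n‖ ≤ (1 - δ / 2) * R := by
          rw [heq]
          have e3 : (1 - δ / 2) * R = 2⁻¹ * ((2 - δ) * R) := by ring
          rw [e3]
          exact mul_le_mul_of_nonneg_left this (by norm_num)
        have harith : (1 - δ / 2) * R < T - γ / 2 := by
          have e1 : (1 - δ / 2) * R = T + η - γ - δ * η / 2 := by
            rw [hRdef, hγ]; ring
          have e2 : 0 ≤ δ * η / 2 := by positivity
          linarith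
        linarith
      have hfin : ρ / (T + 1) * R ≤ ρ := by
        have h1 : R ≤ T + 1 := by simp only [hRdef]; linarith
        calc ρ / (T + 1) * R ≤ ρ / (T + 1) * (T + 1) := by
              apply mul_le_mul_of_nonneg_left h1 (by positivity)
        _ = ρ := by field_simp
      rw [dist_eq_norm]
      linarith
    · -- T ≤ 0, so all t m = 0
      have htz : ∀ m, t m = 0 := fun m => le_antisymm (le_trans (htT m) hTnonpos) (htnonneg m)
      obtain ⟨M₁, hM₁⟩ := exists_nat_gt (2 / ρ)
      have hM₁' : 2 / ρ < (M₁:ℝ) + 1 := by linarith [(Nat.cast_nonneg M₁ : (0:ℝ) ≤ (M₁:ℝ))]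
      have hkey : 1 / ((M₁:ℝ) + 1) < ρ / 2 := by
        rw [div_lt_iff₀ (by positivity)]
        rw [div_lt_iff₀ hρ] at hM₁'
        nlinarith
      refine ⟨M₁, fun m hm n hn => ?_⟩
      have h1 : ‖u m‖ < 1 / ((M₁:ℝ) + 1) := by
        have := hu2 m; rw [htz m, zero_add] at this
        exact lt_of_lt_of_le this (hinv_le hm)
      have h2 : ‖u n‖ < 1 / ((M₁:ℝ) + 1) := by
        have := hu2 n; rw [htz n, zero_add] at this
        exact lt_of_lt_of_le this (hinv_le hn)
      have h4 : dist (u m) (u n) ≤ ‖u m‖ + ‖u n‖ := by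
        rw [dist_eq_norm]; exact norm_sub_le _ _
      linarith
  obtain ⟨uLim, huLim⟩ := cauchySeq_tendsto_of_complete hcauchy
  refine ⟨uLim, fun m => ?_⟩
  apply mem_closure_of_tendsto huLim
  filter_upwards [eventually_ge_atTop m] with n hn
  exact hKanti hn (hu1 n)

/-- A countable family of norm-one-bounded functionals that approximately norms every element of
the closed span of a countable set. -/
lemma exists_norming_family (s : Set X) (hs : s.Countable) :
    ∃ g : ℕ → X →L[ℝ] ℝ, (∀ j, ‖g j‖ ≤ 1) ∧
      ∀ v ∈ closure (Submodule.span ℝ s : Set X), ∀ ε : ℝ, 0 < ε → ∃ j, ‖v‖ - ε ≤ g j v := by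
  have hsep : TopologicalSpace.IsSeparable (Submodule.span ℝ s : Set X) := hs.isSeparable.span
  obtain ⟨c, hc, hcsub⟩ := hsep
  obtain ⟨v, hv⟩ : ∃ v : ℕ → X, range v = insert 0 c :=
    ((hc.insert 0).exists_eq_range (insert_nonempty _ _)).imp fun v h => h.symm
  have hgj : ∀ j : ℕ, ∃ g : X →L[ℝ] ℝ, ‖g‖ ≤ 1 ∧ g (v j) = ‖v j‖ := fun j =>
    exists_dual_vector'' ℝ (v j)
  choose g hg1 hg2 using hgj
  refine ⟨g, hg1, fun x hx ε hε => ?_⟩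
  have hx' : x ∈ closure (range v) := by
    have h1 : x ∈ closure (closure c) := closure_mono hcsub hx
    rw [closure_closure] at h1
    rw [hv]
    exact closure_mono (subset_insert 0 c) h1
  obtain ⟨b, ⟨j, rfl⟩, hb⟩ := Metric.mem_closure_iff.1 hx' (ε / 2) (by positivity)
  refine ⟨j, ?_⟩
  rw [dist_eq_norm] at hb
  have h2 : g j x = g j (v j) + g j (x - v j) := by rw [map_sub]; ring
  have h3 : |g j (x - v j)| ≤ ‖x - v j‖ := by
    calc |g j (x - v j)| = ‖g j (x - v j)‖ := (Real.norm_eq_abs _).symm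
    _ ≤ ‖g j‖ * ‖x - v j‖ := (g j).le_opNorm _
    _ ≤ 1 * ‖x - v j‖ := by gcongr; exact hg1 j
    _ = ‖x - v j‖ := one_mul _
  have h4 : ‖x‖ ≤ ‖v j‖ + ‖x - v j‖ := by
    calc ‖x‖ = ‖v j + (x - v j)‖ := by congr 1; abel
    _ ≤ ‖v j‖ + ‖x - v j‖ := norm_add_le _ _
  have h5 := abs_le.1 h3
  rw [h2, hg2 j]
  linarith

/-- Diagonal extraction: a subsequence along which countably many functionals all converge. -/
lemma exists_subseq_tendsto_forall (w : ℕ → X) (C : ℝ) (hw : ∀ n, ‖w n‖ ≤ C)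
    (g : ℕ → X →L[ℝ] ℝ) :
    ∃ ψ : ℕ → ℕ, StrictMono ψ ∧ ∀ j : ℕ, ∃ c : ℝ,
      Tendsto (fun n => g j (w (ψ n))) atTop (𝓝 c) := by
  have hC : 0 ≤ C := le_trans (norm_nonneg _) (hw 0)
  set B : ℕ → ℝ := fun j => ‖g j‖ * C with hB
  set F : ℕ → (ℕ → ℝ) := fun n j => g j (w n) with hF
  have hcomp : IsCompact (Set.pi univ fun j => Icc (-(B j)) (B j)) :=
    isCompact_univ_pi fun j => isCompact_Icc
  have hmem : ∀ n, F n ∈ Set.pi univ fun j => Icc (-(B j)) (B j) := by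
    intro n
    rw [Set.mem_univ_pi]
    intro j
    rw [mem_Icc, ← abs_le]
    calc |g j (w n)| = ‖g j (w n)‖ := (Real.norm_eq_abs _).symm
    _ ≤ ‖g j‖ * ‖w n‖ := (g j).le_opNorm _
    _ ≤ ‖g j‖ * C := mul_le_mul_of_nonneg_left (hw n) (norm_nonneg _)
  obtain ⟨a, -, ψ, hψ, ha⟩ := hcomp.tendsto_subseq hmem
  refine ⟨ψ, hψ, fun j => ⟨a j, ?_⟩⟩
  exact (tendsto_pi_nhds.1 ha) j

/-- Hierarchical dyadic block goodness: all aligned dyadic sub-blocks have small means. -/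
def GoodBlk {X : Type*} [NormedAddCommGroup X] [NormedSpace ℝ X]
    (z : ℕ → X) (M₀ r : ℝ) : ℕ → (ℕ → ℕ) → Prop
  | 0, b => ‖z (b 0)‖ ≤ M₀
  | (ℓ+1), b => ‖∑ t ∈ Finset.range (2^(ℓ+1)), z (b t)‖ ≤ 2^(ℓ+1) * (M₀ * r^(ℓ+1))
      ∧ GoodBlk z M₀ r ℓ b ∧ GoodBlk z M₀ r ℓ (fun t => b (2^ℓ + t))

variable {X : Type*} [NormedAddCommGroup X] [NormedSpace ℝ X] {z : ℕ → X} {M₀ r : ℝ}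

lemma goodBlk_congr : ∀ {ℓ : ℕ} {b₁ b₂ : ℕ → ℕ}, (∀ t, t < 2^ℓ → b₁ t = b₂ t) →
    GoodBlk z M₀ r ℓ b₁ → GoodBlk z M₀ r ℓ b₂ := by
  intro ℓ
  induction ℓ with
  | zero =>
    intro b₁ b₂ h hg
    have h0 := h 0 (by norm_num)
    simpa [GoodBlk, ← h0] using hg
  | succ ℓ ih =>
    intro b₁ b₂ h hg
    obtain ⟨h1, h2, h3⟩ := hg
    have hpow : (2:ℕ)^ℓ ≤ 2^(ℓ+1) := Nat.pow_le_pow_right (by norm_num) (Nat.le_succ ℓ)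
    refine ⟨?_, ?_, ?_⟩
    · have : ∑ t ∈ Finset.range (2^(ℓ+1)), z (b₂ t) = ∑ t ∈ Finset.range (2^(ℓ+1)), z (b₁ t) :=
        Finset.sum_congr rfl fun t ht => by rw [h t (Finset.mem_range.1 ht)]
      rw [this]; exact h1
    · exact ih (fun t ht => h t (lt_of_lt_of_le ht hpow)) h2
    · refine ih (fun t ht => ?_) h3
      apply h
      have : (2:ℕ)^(ℓ+1) = 2^ℓ + 2^ℓ := by rw [pow_succ]; ring
      omega
  termination_by structural ℓ => ℓ

lemma goodBlk_sum {ℓ : ℕ} {b : ℕ → ℕ} (hM₀ : 0 ≤ M₀) (hr : 0 ≤ r)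
    (hg : GoodBlk z M₀ r ℓ b) :
    ‖∑ t ∈ Finset.range (2^ℓ), z (b t)‖ ≤ 2^ℓ * (M₀ * r^ℓ) := by
  cases ℓ with
  | zero => simpa [GoodBlk] using hg
  | succ ℓ => exact hg.1

lemma goodBlk_prefix (hM₀ : 0 ≤ M₀) (hr34 : 3/4 ≤ r) :
    ∀ {ℓ : ℕ} {b : ℕ → ℕ}, GoodBlk z M₀ r ℓ b → ∀ k, k ≤ 2^ℓ →
      ‖∑ t ∈ Finset.range k, z (b t)‖ ≤ ∑ j ∈ Finset.range (ℓ+1), 2^j * (M₀ * r^j) := by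
  have hr : (0:ℝ) ≤ r := by linarith
  intro ℓ
  induction ℓ with
  | zero =>
    intro b hg k hk
    interval_cases k
    · simp only [Finset.range_zero, Finset.sum_empty, norm_zero]
      apply Finset.sum_nonneg
      intro j _
      positivity
    · simpa [GoodBlk, Finset.sum_range_one] using hg
  | succ ℓ ih =>
    intro b hg k hk
    obtain ⟨h1, h2, h3⟩ := hg
    have hterm : (0:ℝ) ≤ 2^(ℓ+1) * (M₀ * r^(ℓ+1)) := by positivity
    rcases le_or_gt k (2^ℓ) with hk' | hk'
    · have hA := ih h2 k hk'
      have hB : ∑ j ∈ Finset.range (ℓ+1), 2^j * (M₀ * r^j)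
          ≤ ∑ j ∈ Finset.range (ℓ+2), 2^j * (M₀ * r^j) := by
        rw [Finset.sum_range_succ (n := ℓ+1)]
        linarith
      linarith
    · have hsplit : ∑ t ∈ Finset.range k, z (b t)
          = ∑ t ∈ Finset.range (2^ℓ), z (b t)
            + ∑ t ∈ Finset.range (k - 2^ℓ), z (b (2^ℓ + t)) := by
        rw [← Finset.sum_range_add_sum_Ico _ hk'.le]
        congr 1
        rw [Finset.sum_Ico_eq_sum_range]
      have hfirst : ‖∑ t ∈ Finset.range (2^ℓ), z (b t)‖ ≤ 2^ℓ * (M₀ * r^ℓ) :=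
        goodBlk_sum hM₀ hr h2
      have hsecond : ‖∑ t ∈ Finset.range (k - 2^ℓ), z (b (2^ℓ + t))‖
          ≤ ∑ j ∈ Finset.range (ℓ+1), 2^j * (M₀ * r^j) := by
        apply ih h3
        have : (2:ℕ)^(ℓ+1) = 2^ℓ + 2^ℓ := by rw [pow_succ]; ring
        omega
      have hstepup : (2:ℝ)^ℓ * (M₀ * r^ℓ) ≤ 2^(ℓ+1) * (M₀ * r^(ℓ+1)) := by
        have he : (2:ℝ)^(ℓ+1) * (M₀ * r^(ℓ+1)) = (2*r) * (2^ℓ * (M₀ * r^ℓ)) := by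
          rw [pow_succ, pow_succ]; ring
        rw [he]
        have hnn : (0:ℝ) ≤ 2^ℓ * (M₀ * r^ℓ) := by positivity
        nlinarith
      calc ‖∑ t ∈ Finset.range k, z (b t)‖
          ≤ ‖∑ t ∈ Finset.range (2^ℓ), z (b t)‖
            + ‖∑ t ∈ Finset.range (k - 2^ℓ), z (b (2^ℓ + t))‖ := by
            rw [hsplit]; exact norm_add_le _ _
      _ ≤ 2^ℓ * (M₀ * r^ℓ) + ∑ j ∈ Finset.range (ℓ+1), 2^j * (M₀ * r^j) := by
            linarith
      _ ≤ ∑ j ∈ Finset.range (ℓ+2), 2^j * (M₀ * r^j) := by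
            rw [Finset.sum_range_succ (n := ℓ+1)]
            linarith

def IsLevel {X : Type*} [NormedAddCommGroup X] [NormedSpace ℝ X]
    (z : ℕ → X) (M₀ r : ℝ) (ℓ : ℕ) (β : ℕ → ℕ → ℕ) : Prop :=
  (∀ i, StrictMono (β i)) ∧ (∀ i j t, i < j → t < 2^ℓ → β i t < β j 0)
    ∧ (∀ i t, i ≤ β i t) ∧ ∀ i, GoodBlk z M₀ r ℓ (β i)


variable {z : ℕ → X} {M₀ r : ℝ}

lemma level_step {δ : ℝ} (hM₀ : 0 ≤ M₀) (hδpos : 0 < δ)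
    (hδ : ∀ R : ℝ, 0 < R → ∀ x y : X, ‖x‖ ≤ R → ‖y‖ ≤ R → 3/8 * R ≤ ‖x - y‖ →
      ‖x + y‖ ≤ (2 - δ) * R)
    (hr34 : 3/4 ≤ r) (hrδ : 2 - δ ≤ 2 * r)
    (g : ℕ → X →L[ℝ] ℝ) (hg1 : ∀ j, ‖g j‖ ≤ 1)
    (hnorming : ∀ v ∈ closure (Submodule.span ℝ (Set.range z) : Set X),
      ∀ ε : ℝ, 0 < ε → ∃ j, ‖v‖ - ε ≤ g j v)
    (hweak : ∀ j, Tendsto (fun n => g j (z n)) atTop (𝓝 0))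
    (ℓ : ℕ) (β : ℕ → ℕ → ℕ) (hL : IsLevel z M₀ r ℓ β) :
    ∃ β' : ℕ → ℕ → ℕ, IsLevel z M₀ r (ℓ+1) β' ∧ ∀ t, t < 2^ℓ → β' 0 t = β 0 t := by
  obtain ⟨hmono, hsep, hlow, hgood⟩ := hL
  have hr0 : (0:ℝ) ≤ r := by linarith
  set M : ℝ := M₀ * r^ℓ with hM
  have hMnn : 0 ≤ M := by positivity
  have hpow2 : (0:ℝ) < 2^ℓ := by positivity
  set y : ℕ → X := fun i => (2^ℓ : ℝ)⁻¹ • ∑ t ∈ Finset.range (2^ℓ), z (β i t) with hy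
  have hsumy : ∀ i, ∑ t ∈ Finset.range (2^ℓ), z (β i t) = (2^ℓ : ℝ) • y i := by
    intro i
    rw [hy]
    rw [smul_inv_smul₀ (ne_of_gt hpow2)]
  have hynorm : ∀ i, ‖y i‖ ≤ M := by
    intro i
    rw [hy]
    rw [norm_smul, Real.norm_eq_abs, abs_of_pos (inv_pos.2 hpow2)]
    have := goodBlk_sum hM₀ hr0 (hgood i)
    calc (2^ℓ:ℝ)⁻¹ * ‖∑ t ∈ Finset.range (2^ℓ), z (β i t)‖ ≤ (2^ℓ:ℝ)⁻¹ * (2^ℓ * M) := by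
          apply mul_le_mul_of_nonneg_left _ (le_of_lt (inv_pos.2 hpow2))
          exact this
    _ = M := by field_simp
  have hyspan : ∀ i, y i ∈ closure (Submodule.span ℝ (Set.range z) : Set X) := by
    intro i
    apply subset_closure
    refine Submodule.smul_mem _ _ (Submodule.sum_mem _ fun t _ => ?_)
    exact Submodule.subset_span (Set.mem_range_self _)
  have hytend : ∀ j, Tendsto (fun i => g j (y i)) atTop (𝓝 0) := by
    intro j
    rw [Metric.tendsto_atTop]
    intro ε hε
    obtain ⟨N, hN⟩ := (Metric.tendsto_atTop.1 (hweak j)) (ε/2) (by positivity)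
    refine ⟨N, fun i hi => ?_⟩
    have hterm : ∀ t ∈ Finset.range (2^ℓ), |g j (z (β i t))| ≤ ε/2 := by
      intro t _
      have h1 : N ≤ β i t := le_trans hi (hlow i t)
      have := hN _ h1
      rw [Real.dist_eq, sub_zero] at this
      exact this.le
    have hgy : g j (y i) = (2^ℓ:ℝ)⁻¹ * ∑ t ∈ Finset.range (2^ℓ), g j (z (β i t)) := by
      simp only [hy, _root_.map_smul, map_sum, smul_eq_mul]
    rw [Real.dist_eq, sub_zero, hgy, abs_mul, abs_of_pos (inv_pos.2 hpow2)]
    have habs : |∑ t ∈ Finset.range (2^ℓ), g j (z (β i t))| ≤ 2^ℓ * (ε/2) := by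
      calc |∑ t ∈ Finset.range (2^ℓ), g j (z (β i t))|
          ≤ ∑ t ∈ Finset.range (2^ℓ), |g j (z (β i t))| := Finset.abs_sum_le_sum_abs _ _
      _ ≤ ∑ t ∈ Finset.range (2^ℓ), (ε/2) := Finset.sum_le_sum hterm
      _ = 2^ℓ * (ε/2) := by
          rw [Finset.sum_const, Finset.card_range, nsmul_eq_mul]
          push_cast
          ring
    calc (2^ℓ:ℝ)⁻¹ * |∑ t ∈ Finset.range (2^ℓ), g j (z (β i t))|
        ≤ (2^ℓ:ℝ)⁻¹ * (2^ℓ * (ε/2)) := by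
          apply mul_le_mul_of_nonneg_left habs (le_of_lt (inv_pos.2 hpow2))
    _ = ε/2 := by field_simp
    _ < ε := by linarith
  -- the key pairing property
  have hpair : ∀ p : ℕ, ∃ q, p < q ∧ ‖y p + y q‖ ≤ 2 * (r * M) := by
    intro p
    rcases le_or_gt ‖y p‖ (M/2) with hsmall | hbig
    · refine ⟨p+1, Nat.lt_succ_self _, ?_⟩
      have h1 := hynorm (p+1)
      calc ‖y p + y (p+1)‖ ≤ ‖y p‖ + ‖y (p+1)‖ := norm_add_le _ _
      _ ≤ M/2 + M := by linarith
      _ ≤ 2 * (r * M) := by nlinarith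
    · have hMpos : 0 < M := by
        have := hynorm p
        linarith
      obtain ⟨j, hj⟩ := hnorming (y p) (hyspan p) (M/16) (by positivity)
      obtain ⟨N, hN⟩ := (Metric.tendsto_atTop.1 (hytend j)) (M/16) (by positivity)
      refine ⟨max N (p+1), lt_of_lt_of_le (Nat.lt_succ_self p) (le_max_right _ _), ?_⟩
      set q := max N (p+1) with hq
      have hgyq : |g j (y q)| ≤ M/16 := by
        have := hN q (le_max_left _ _)
        rw [Real.dist_eq, sub_zero] at this
        exact this.le
      have hdiff : 3/8 * M ≤ ‖y p - y q‖ := by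
        have h1 : g j (y p - y q) = g j (y p) - g j (y q) := map_sub _ _ _
        have h2 : g j (y p - y q) ≤ ‖y p - y q‖ := by
          calc g j (y p - y q) ≤ |g j (y p - y q)| := le_abs_self _
          _ = ‖g j (y p - y q)‖ := (Real.norm_eq_abs _).symm
          _ ≤ ‖g j‖ * ‖y p - y q‖ := (g j).le_opNorm _
          _ ≤ 1 * ‖y p - y q‖ := mul_le_mul_of_nonneg_right (hg1 j) (norm_nonneg _)
          _ = ‖y p - y q‖ := one_mul _
        have h3 := abs_le.1 hgyq
        linarith
      have := hδ M hMpos (y p) (y q) (hynorm p) (hynorm q) hdiff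
      calc ‖y p + y q‖ ≤ (2 - δ) * M := this
      _ ≤ 2 * r * M := mul_le_mul_of_nonneg_right hrδ hMnn
      _ = 2 * (r * M) := by ring
  choose qf hq1 hq2 using hpair
  set a : ℕ → ℕ := fun s => Nat.rec 0 (fun _ prev => qf prev + 1) s with ha
  have ha0 : a 0 = 0 := rfl
  have hasucc : ∀ s, a (s+1) = qf (a s) + 1 := fun s => rfl
  set b : ℕ → ℕ := fun s => qf (a s) with hb
  have hab : ∀ s, a s < b s := fun s => hq1 (a s)
  have hba : ∀ s, b s < a (s+1) := fun s => by rw [hasucc]; exact Nat.lt_succ_self _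
  have hamono : StrictMono a := strictMono_nat_of_lt_succ fun s => by
    rw [hasucc]; exact lt_trans (hab s) (Nat.lt_succ_self _)
  have hbalt : ∀ i j, i < j → b i < a j := by
    intro i j hij
    exact lt_of_lt_of_le (hba i) (hamono.le_iff_le.2 hij)
  set β' : ℕ → ℕ → ℕ := fun i t => if t < 2^ℓ then β (a i) t else β (b i) (t - 2^ℓ) with hβ'
  have hpow21 : (2:ℕ)^(ℓ+1) = 2^ℓ + 2^ℓ := by rw [pow_succ]; ring
  have hfirsthalf : ∀ i t, t < 2^ℓ → β' i t = β (a i) t := fun i t ht => if_pos ht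
  have hsecondhalf : ∀ i t, β' i (2^ℓ + t) = β (b i) t := by
    intro i t
    rw [hβ']
    simp only [if_neg (by omega : ¬ (2^ℓ + t < 2^ℓ))]
    congr 1
    omega
  have hcross : ∀ i t u, t < 2^ℓ → β (a i) t < β (b i) u := by
    intro i t u ht
    calc β (a i) t < β (b i) 0 := hsep (a i) (b i) t (hab i) ht
    _ ≤ β (b i) u := (hmono (b i)).monotone (Nat.zero_le u)
  refine ⟨β', ⟨?_, ?_, ?_, ?_⟩, fun t ht => by rw [hfirsthalf 0 t ht, ha0]⟩
  · -- strict mono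
    intro i t t' htt'
    rcases lt_or_ge t' (2^ℓ) with h' | h'
    · have h : t < 2^ℓ := lt_trans htt' h'
      rw [hfirsthalf i t h, hfirsthalf i t' h']
      exact hmono (a i) htt'
    · rcases lt_or_ge t (2^ℓ) with h | h
      · rw [hfirsthalf i t h, hβ']
        simp only [if_neg (by omega : ¬ (t' < 2^ℓ))]
        exact hcross i t _ h
      · rw [hβ']
        simp only [if_neg (by omega : ¬ (t < 2^ℓ)), if_neg (by omega : ¬ (t' < 2^ℓ))]
        exact hmono (b i) (by omega)
  · -- separation
    intro i j t hij ht
    have hβ'j0 : β' j 0 = β (a j) 0 := hfirsthalf j 0 (by positivity)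
    rw [hβ'j0]
    rcases lt_or_ge t (2^ℓ) with h | h
    · rw [hfirsthalf i t h]
      exact hsep (a i) (a j) t (hamono hij) h
    · rw [hβ']
      simp only [if_neg (by omega : ¬ (t < 2^ℓ))]
      apply hsep (b i) (a j) (t - 2^ℓ) (hbalt i j hij)
      omega
  · -- lower bound
    intro i t
    rw [hβ']
    rcases lt_or_ge t (2^ℓ) with h | h
    · simp only [if_pos h]
      exact le_trans (hamono.le_apply) (hlow (a i) t)
    · simp only [if_neg (by omega : ¬ (t < 2^ℓ))]
      have h1 : i ≤ b i := le_trans (hamono.le_apply) (le_of_lt (hab i))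
      exact le_trans h1 (hlow (b i) _)
  · -- goodness
    intro i
    refine ⟨?_, ?_, ?_⟩
    · have hsplit : ∑ t ∈ Finset.range (2^(ℓ+1)), z (β' i t)
          = ∑ t ∈ Finset.range (2^ℓ), z (β (a i) t)
            + ∑ t ∈ Finset.range (2^ℓ), z (β (b i) t) := by
        rw [← Finset.sum_range_add_sum_Ico _
          (Nat.pow_le_pow_right (by norm_num) (Nat.le_succ ℓ) : (2:ℕ)^ℓ ≤ 2^(ℓ+1))]
        congr 1
        · exact Finset.sum_congr rfl fun t ht => by
            rw [hfirsthalf i t (Finset.mem_range.1 ht)]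
        · rw [Finset.sum_Ico_eq_sum_range]
          have : (2:ℕ)^(ℓ+1) - 2^ℓ = 2^ℓ := by rw [hpow21, Nat.add_sub_cancel]
          rw [this]
          exact Finset.sum_congr rfl fun t _ => by rw [hsecondhalf i t]
      rw [hsplit, hsumy (a i), hsumy (b i), ← smul_add, norm_smul, Real.norm_eq_abs,
        abs_of_pos hpow2]
      calc (2^ℓ:ℝ) * ‖y (a i) + y (b i)‖ ≤ (2^ℓ:ℝ) * (2 * (r * M)) := by
            apply mul_le_mul_of_nonneg_left (hq2 (a i)) (le_of_lt hpow2)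
      _ = 2^(ℓ+1) * (M₀ * r^(ℓ+1)) := by
            rw [hM]
            rw [pow_succ, pow_succ]
            ring
    · exact goodBlk_congr (fun t ht => (hfirsthalf i t ht).symm) (hgood (a i))
    · exact goodBlk_congr (fun t ht => (hsecondhalf i t).symm) (hgood (b i))

/-- Cesàro convergence to zero for a "weakly null" (w.r.t. a countable norming family)
bounded sequence in a uniformly convex space. -/
lemma cesaro_of_weak_null {δ : ℝ} (hδpos : 0 < δ)
    (hδ : ∀ R : ℝ, 0 < R → ∀ x y : X, ‖x‖ ≤ R → ‖y‖ ≤ R → 3/8 * R ≤ ‖x - y‖ →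
      ‖x + y‖ ≤ (2 - δ) * R)
    (hr34 : 3/4 ≤ r) (hrδ : 2 - δ ≤ 2 * r) (hr1 : r < 1)
    (hM₀ : 0 ≤ M₀) (hz : ∀ n, ‖z n‖ ≤ M₀)
    (g : ℕ → X →L[ℝ] ℝ) (hg1 : ∀ j, ‖g j‖ ≤ 1)
    (hnorming : ∀ v ∈ closure (Submodule.span ℝ (Set.range z) : Set X),
      ∀ ε : ℝ, 0 < ε → ∃ j, ‖v‖ - ε ≤ g j v)
    (hweak : ∀ j, Tendsto (fun n => g j (z n)) atTop (𝓝 0)) :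
    ∃ φ : ℕ → ℕ, StrictMono φ ∧
      Tendsto (fun k : ℕ => (k:ℝ)⁻¹ • ∑ t ∈ Finset.range k, z (φ t)) atTop (𝓝 0) := by
  have hr0 : (0:ℝ) ≤ r := by linarith
  -- base level
  have hbase : IsLevel z M₀ r 0 (fun i t => i + t) := by
    refine ⟨fun i t t' h => Nat.add_lt_add_left h i, ?_, fun i t => Nat.le_add_right i t, ?_⟩
    · intro i j t hij ht
      interval_cases t
      · simpa using hij
    · intro i
      simpa [GoodBlk] using hz i
  have hstep := level_step hM₀ hδpos hδ hr34 hrδ g hg1 hnorming hweak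
  -- the chain of levels
  let ch : (ℓ : ℕ) → {β : ℕ → ℕ → ℕ // IsLevel z M₀ r ℓ β} := fun ℓ => Nat.rec
    ⟨fun i t => i + t, hbase⟩
    (fun ℓ ih => ⟨(hstep ℓ ih.1 ih.2).choose, (hstep ℓ ih.1 ih.2).choose_spec.1⟩) ℓ
  have hch_succ : ∀ ℓ, ∀ t, t < 2^ℓ → (ch (ℓ+1)).1 0 t = (ch ℓ).1 0 t := fun ℓ =>
    (hstep ℓ (ch ℓ).1 (ch ℓ).2).choose_spec.2
  have hstab : ∀ ℓ L, ℓ ≤ L → ∀ t, t < 2^ℓ → (ch L).1 0 t = (ch ℓ).1 0 t := by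
    intro ℓ L hℓL
    induction L, hℓL using Nat.le_induction with
    | base => intro t _; rfl
    | succ L hL ih =>
      intro t ht
      have h1 : t < 2^L := lt_of_lt_of_le ht (Nat.pow_le_pow_right (by norm_num) hL)
      rw [hch_succ L t h1, ih t ht]
  set φ : ℕ → ℕ := fun p => (ch (p+1)).1 0 p with hφ
  have hφeq : ∀ ℓ p, p < 2^ℓ → φ p = (ch ℓ).1 0 p := by
    intro ℓ p hp
    have hp2 : p < 2^(p+1) := lt_trans (Nat.lt_two_pow_self (n := p)) (Nat.pow_lt_pow_right (by norm_num) (Nat.lt_succ_self _))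
    set L := max ℓ (p+1) with hL
    have h1 : φ p = (ch L).1 0 p := by
      rw [hφ]
      exact (hstab (p+1) L (le_max_right _ _) p hp2).symm
    rw [h1, hstab ℓ L (le_max_left _ _) p hp]
  have hφmono : StrictMono φ := by
    intro p p' hpp'
    have hp2 : p' < 2^(p'+1) := lt_trans (Nat.lt_two_pow_self (n := p')) (Nat.pow_lt_pow_right (by norm_num) (Nat.lt_succ_self _))
    have hp1 : p < 2^(p'+1) := lt_trans hpp' hp2
    rw [hφeq (p'+1) p hp1, hφeq (p'+1) p' hp2]
    exact ((ch (p'+1)).2).1 0 hpp'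
  refine ⟨φ, hφmono, ?_⟩
  -- geometric sum bound
  have hgeo : ∀ n : ℕ, ∑ j ∈ Finset.range n, (2*r)^j ≤ 2*(2*r)^n := by
    intro n
    induction n with
    | zero => simp
    | succ n ih =>
      rw [Finset.sum_range_succ, pow_succ]
      have h2rn : (0:ℝ) ≤ (2*r)^n := by positivity
      nlinarith
  have hT : ∀ L : ℕ, ∑ j ∈ Finset.range (L+1), 2^j * (M₀ * r^j) ≤ 2 * M₀ * (2*r)^(L+1) := by
    intro L
    have h1 : ∑ j ∈ Finset.range (L+1), 2^j * (M₀ * r^j)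
        = M₀ * ∑ j ∈ Finset.range (L+1), (2*r)^j := by
      rw [Finset.mul_sum]
      exact Finset.sum_congr rfl fun j _ => by rw [mul_pow]; ring
    rw [h1]
    have h2 := hgeo (L+1)
    calc M₀ * ∑ j ∈ Finset.range (L+1), (2*r)^j ≤ M₀ * (2*(2*r)^(L+1)) := by
          apply mul_le_mul_of_nonneg_left h2 hM₀
    _ = 2 * M₀ * (2*r)^(L+1) := by ring
  -- prefix bound along φ
  have hpre : ∀ L k : ℕ, k ≤ 2^L →
      ‖∑ t ∈ Finset.range k, z (φ t)‖ ≤ ∑ j ∈ Finset.range (L+1), 2^j * (M₀ * r^j) := by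
    intro L k hk
    have heq : ∑ t ∈ Finset.range k, z (φ t) = ∑ t ∈ Finset.range k, z ((ch L).1 0 t) :=
      Finset.sum_congr rfl fun t ht => by
        rw [hφeq L t (lt_of_lt_of_le (Finset.mem_range.1 ht) hk)]
    rw [heq]
    exact goodBlk_prefix hM₀ hr34 ((ch L).2.2.2.2 0) k hk
  -- final bound: for k ≥ 2, mean ≤ 8 M₀ r^(clog 2 k)
  have hbound : ∀ k : ℕ, 2 ≤ k →
      ‖(k:ℝ)⁻¹ • ∑ t ∈ Finset.range k, z (φ t)‖ ≤ 8 * M₀ * r^(Nat.clog 2 k) := by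
    intro k hk
    set L := Nat.clog 2 k with hLdef
    have hkL : k ≤ 2^L := Nat.le_pow_clog one_lt_two k
    have hL1 : 1 ≤ L := by
      by_contra h
      push_neg at h
      interval_cases L
      · simp at hkL; omega
    have hLlow : 2^(L-1) < k := Nat.pow_pred_clog_lt_self one_lt_two (by omega)
    obtain ⟨L', hL'⟩ : ∃ L', L = L' + 1 := ⟨L - 1, by omega⟩
    rw [hL'] at hkL hLlow ⊢
    have hL'low : (2:ℝ)^L' < (k:ℝ) := by
      have : (2:ℕ)^L' < k := by simpa using hLlow
      exact_mod_cast this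
    have hkpos : (0:ℝ) < k := by positivity
    have h2L'pos : (0:ℝ) < 2^L' := by positivity
    rw [norm_smul, Real.norm_eq_abs, abs_of_pos (inv_pos.2 hkpos)]
    have h1 := hpre (L'+1) k hkL
    have h2 := hT (L'+1)
    have hinv : (k:ℝ)⁻¹ ≤ ((2:ℝ)^L')⁻¹ := by
      apply inv_anti₀ h2L'pos hL'low.le
    have hsumnn : (0:ℝ) ≤ ‖∑ t ∈ Finset.range k, z (φ t)‖ := norm_nonneg _
    calc (k:ℝ)⁻¹ * ‖∑ t ∈ Finset.range k, z (φ t)‖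
        ≤ ((2:ℝ)^L')⁻¹ * (2 * M₀ * (2*r)^(L'+2)) := by
          apply mul_le_mul hinv (le_trans h1 h2) hsumnn (by positivity)
    _ = 8 * M₀ * r^(L'+2) := by
          rw [mul_pow]
          field_simp
          ring
    _ ≤ 8 * M₀ * r^(L'+1) := by
          apply mul_le_mul_of_nonneg_left _ (by positivity)
          apply pow_le_pow_of_le_one hr0 hr1.le (Nat.le_succ _)
  -- conclude
  rw [tendsto_zero_iff_norm_tendsto_zero]
  apply squeeze_zero' (Eventually.of_forall fun k => norm_nonneg _)
    (by filter_upwards [eventually_ge_atTop 2] with k hk using hbound k hk)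
  have hclog : Tendsto (fun k : ℕ => Nat.clog 2 k) atTop atTop := by
    apply Monotone.tendsto_atTop_atTop (Nat.clog_monotone 2)
    intro b
    exact ⟨2^b, by rw [Nat.clog_pow _ _ one_lt_two]⟩
  have hpow : Tendsto (fun L : ℕ => (8 * M₀) * r^L) atTop (𝓝 0) := by
    have := (tendsto_pow_atTop_nhds_zero_of_lt_one hr0 hr1).const_mul (8 * M₀)
    simpa using this
  have := hpow.comp hclog
  simpa [Function.comp_def, mul_assoc] using this

end KakutaniAux

theorem kakutani_banachSaks (X : Type*)
    [NormedAddCommGroup X] [NormedSpace ℝ X] [CompleteSpace X] [UniformConvexSpace X] :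
    HasBanachSaks X := by
  rintro x ⟨C, hC⟩
  obtain ⟨g, hg1, hgnorm⟩ := exists_norming_family (Set.range x) (countable_range x)
  obtain ⟨ψ, hψ, hconv⟩ := exists_subseq_tendsto_forall x C hC g
  choose c hc using hconv
  obtain ⟨u, hu⟩ := exists_mem_closure_convexHull_tails (fun n => x (ψ n)) C (fun n => hC _)
  set Y : Submodule ℝ X := (Submodule.span ℝ (Set.range x)).topologicalClosure with hY
  have hYcoe : (Y : Set X) = closure (Submodule.span ℝ (Set.range x) : Set X) := rfl
  have hxψY : ∀ n, x (ψ n) ∈ Y := fun n =>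
    Submodule.le_topologicalClosure _ (Submodule.subset_span (Set.mem_range_self _))
  have huY : u ∈ Y := by
    have h1 : convexHull ℝ ((fun n => x (ψ n)) '' Ici 0) ⊆ (Y : Set X) := by
      apply convexHull_min _ (Y.convex)
      rintro _ ⟨n, -, rfl⟩
      exact hxψY n
    have h2 : closure (convexHull ℝ ((fun n => x (ψ n)) '' Ici 0)) ⊆ (Y : Set X) :=
      closure_minimal h1 (Submodule.isClosed_topologicalClosure _)
    exact h2 (hu 0)
  -- the functionals recognize u as the limit
  have hgu : ∀ j, g j u = c j := by
    intro j
    have hkey : ∀ ε : ℝ, 0 < ε → |g j u - c j| ≤ ε := by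
      intro ε hε
      obtain ⟨m, hm⟩ := (Metric.tendsto_atTop.1 (hc j)) ε hε
      set A : Set X := (g j) ⁻¹' (Icc (c j - ε) (c j + ε)) with hA
      have hAconv : Convex ℝ A := (convex_Icc _ _).linear_preimage ((g j) : X →ₗ[ℝ] ℝ)
      have hAclosed : IsClosed A := isClosed_Icc.preimage (g j).continuous
      have hsub : closure (convexHull ℝ ((fun n => x (ψ n)) '' Ici m)) ⊆ A := by
        apply closure_minimal _ hAclosed
        apply convexHull_min _ hAconv
        rintro _ ⟨n, hn, rfl⟩
        have := hm n hn
        rw [Real.dist_eq] at this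
        have h2 := abs_le.1 this.le
        simp only [hA, mem_preimage, mem_Icc]
        constructor <;> linarith [h2.1, h2.2]
      have := hsub (hu m)
      rw [hA, mem_preimage, mem_Icc] at this
      rw [abs_le]
      constructor <;> linarith [this.1, this.2]
    by_contra h
    have habs : 0 < |g j u - c j| := abs_pos.2 (sub_ne_zero.2 h)
    have := hkey (|g j u - c j| / 2) (by linarith)
    linarith
  set z : ℕ → X := fun n => x (ψ n) - u with hz
  have hC0 : 0 ≤ C := le_trans (norm_nonneg _) (hC 0)
  set M₀ : ℝ := C + ‖u‖ with hM₀def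
  have hM₀ : 0 ≤ M₀ := by positivity
  have hznorm : ∀ n, ‖z n‖ ≤ M₀ := fun n =>
    le_trans (norm_sub_le _ _) (add_le_add_left (hC _) _)
  have hzweak : ∀ j, Tendsto (fun n => g j (z n)) atTop (𝓝 0) := by
    intro j
    have h1 : Tendsto (fun n => g j (x (ψ n)) - c j) atTop (𝓝 (c j - c j)) :=
      (hc j).sub tendsto_const_nhds
    rw [sub_self] at h1
    apply h1.congr
    intro n
    rw [hz]
    simp only [map_sub, hgu j]
  have hznorming : ∀ v ∈ closure (Submodule.span ℝ (Set.range z) : Set X),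
      ∀ ε : ℝ, 0 < ε → ∃ j, ‖v‖ - ε ≤ g j v := by
    intro v hv ε hε
    apply hgnorm v _ ε hε
    rw [← hYcoe]
    have h1 : Set.range z ⊆ (Y : Set X) := by
      rintro _ ⟨n, rfl⟩
      exact Y.sub_mem (hxψY n) huY
    have h2 : (Submodule.span ℝ (Set.range z) : Set X) ⊆ (Y : Set X) :=
      Submodule.span_le.2 h1
    exact closure_minimal h2 (Submodule.isClosed_topologicalClosure _) hv
  -- uniform convexity data
  obtain ⟨δ, hδpos, hδ1, hδ⟩ := uc_scaled (X := X) (show (0:ℝ) < 3/8 by norm_num)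
  set r : ℝ := max (3/4) (1 - δ/2) with hr
  have hr34 : 3/4 ≤ r := le_max_left _ _
  have hrδ : 2 - δ ≤ 2 * r := by
    have := le_max_right (3/4 : ℝ) (1 - δ/2)
    linarith
  have hr1 : r < 1 := by
    rw [hr]
    apply max_lt (by norm_num)
    linarith
  obtain ⟨φ', hφ'mono, hφ'tend⟩ :=
    cesaro_of_weak_null hδpos hδ hr34 hrδ hr1 hM₀ hznorm g hg1 hznorming hzweak
  refine ⟨ψ ∘ φ', hψ.comp hφ'mono, u, ?_⟩
  have heq : ∀ k : ℕ, 1 ≤ k →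
      (k:ℝ)⁻¹ • ∑ j ∈ Finset.range k, x ((ψ ∘ φ') j)
        = ((k:ℝ)⁻¹ • ∑ j ∈ Finset.range k, z (φ' j)) + u := by
    intro k hk
    have hkne : (k:ℝ) ≠ 0 := by positivity
    have h1 : ∑ j ∈ Finset.range k, x ((ψ ∘ φ') j)
        = (∑ j ∈ Finset.range k, z (φ' j)) + (k:ℝ) • u := by
      have h2 : ∀ j, x ((ψ ∘ φ') j) = z (φ' j) + u := fun j => by
        simp [hz]
      rw [Finset.sum_congr rfl fun j _ => h2 j, Finset.sum_add_distrib,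
        Finset.sum_const, Finset.card_range, ← Nat.cast_smul_eq_nsmul ℝ]
    rw [h1, smul_add, smul_smul, inv_mul_cancel₀ hkne, one_smul]
  have htend2 : Tendsto (fun k : ℕ => ((k:ℝ)⁻¹ • ∑ j ∈ Finset.range k, z (φ' j)) + u)
      atTop (𝓝 (0 + u)) := hφ'tend.add tendsto_const_nhds
  rw [zero_add] at htend2
  apply htend2.congr'
  filter_upwards [eventually_ge_atTop 1] with k hk
  exact (heq k hk).symm
end

section
/- If X is a Banach space with the Banach-Saks property, then every bounded sequence in X contains a subsequence all of whose further subsequences have norm-convergent Cesàro means (i.e., are Banach-Saks sequences). -/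
open Filter MeasureTheory Topology

namespace RBS

/-- `X` has a finite initial segment satisfying `P`. -/
def Hits (P : Finset ℕ → Prop) (X : Set ℕ) : Prop :=
  ∃ t : Finset ℕ, ↑t ⊆ X ∧ (∀ b ∈ X, b ∉ t → ∀ a ∈ t, a < b) ∧ P t

/-- Infinite sets beginning with `s` and continuing inside `M`. -/
def Ext (s : Finset ℕ) (M : Set ℕ) : Set (Set ℕ) :=
  {X | X.Infinite ∧ ↑s ⊆ X ∧ X ⊆ ↑s ∪ M ∧ ∀ b ∈ X, b ∉ s → ∀ a ∈ s, a < b}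

def Acc (P : Finset ℕ → Prop) (M : Set ℕ) (s : Finset ℕ) : Prop :=
  ∀ X ∈ Ext s M, Hits P X

def Rej (P : Finset ℕ → Prop) (M : Set ℕ) (s : Finset ℕ) : Prop :=
  ∀ N : Set ℕ, N ⊆ M → N.Infinite → ¬ Acc P N s

variable {P : Finset ℕ → Prop}

theorem acc_mono {M N : Set ℕ} {s : Finset ℕ} (hNM : N ⊆ M) (h : Acc P M s) :
    Acc P N s := by
  intro X hX
  exact h X ⟨hX.1, hX.2.1, fun b hb => (hX.2.2.1 hb).imp id (fun h' => hNM h'), hX.2.2.2⟩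

theorem rej_mono {M N : Set ℕ} {s : Finset ℕ} (hNM : N ⊆ M) (h : Rej P M s) :
    Rej P N s := fun W hW => h W (hW.trans hNM)

/-- The part of `M` lying above all of `s`. -/
def cut (s : Finset ℕ) (M : Set ℕ) : Set ℕ := {m ∈ M | ∀ a ∈ s, a < m}

theorem cut_subset (s : Finset ℕ) (M : Set ℕ) : cut s M ⊆ M := fun _ h => h.1

theorem cut_mono (s : Finset ℕ) {M N : Set ℕ} (h : N ⊆ M) : cut s N ⊆ cut s M :=
  fun _ hm => ⟨h hm.1, hm.2⟩

theorem cut_infinite {M : Set ℕ} (hM : M.Infinite) (s : Finset ℕ) : (cut s M).Infinite := by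
  apply ((hM.diff (Set.finite_Iic (s.sup id))).mono ?_)
  rintro m ⟨hm, hm'⟩
  refine ⟨hm, fun a ha => ?_⟩
  simp only [Set.mem_Iic, not_le] at hm'
  exact lt_of_le_of_lt (Finset.le_sup (f := id) ha) hm'

theorem ext_cut (s : Finset ℕ) (M : Set ℕ) : Ext s M = Ext s (cut s M) := by
  ext X
  constructor
  · rintro ⟨h1, h2, h3, h4⟩
    refine ⟨h1, h2, fun b hb => ?_, h4⟩
    rcases h3 hb with h | h
    · exact Or.inl h
    · by_cases hbs : b ∈ s
      · exact Or.inl hbs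
      · exact Or.inr ⟨h, h4 b hb hbs⟩
  · rintro ⟨h1, h2, h3, h4⟩
    exact ⟨h1, h2, fun b hb => (h3 hb).imp id (fun h => h.1), h4⟩

theorem acc_cut_iff (s : Finset ℕ) (M : Set ℕ) : Acc P M s ↔ Acc P (cut s M) s := by
  unfold Acc; rw [ext_cut]

/-- One step of deciding: any infinite set has an infinite subset deciding `s`. -/
theorem decide_step (s : Finset ℕ) {M : Set ℕ} (hM : M.Infinite) :
    ∃ N, N ⊆ M ∧ N.Infinite ∧ (Acc P N s ∨ Rej P N s) := by
  by_cases h : Rej P M s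
  · exact ⟨M, subset_rfl, hM, Or.inr h⟩
  · unfold Rej at h
    push_neg at h
    obtain ⟨N, hNM, hN, hacc⟩ := h
    exact ⟨N, hNM, hN, Or.inl hacc⟩

theorem decide_persists {M N : Set ℕ} {s : Finset ℕ} (hNM : N ⊆ M)
    (h : Acc P M s ∨ Rej P M s) : Acc P N s ∨ Rej P N s :=
  h.imp (acc_mono hNM) (rej_mono hNM)

theorem decide_finset (T : Finset (Finset ℕ)) {M : Set ℕ} (hM : M.Infinite) :
    ∃ N, N ⊆ M ∧ N.Infinite ∧ ∀ s ∈ T, Acc P N s ∨ Rej P N s := by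
  classical
  induction T using Finset.induction_on with
  | empty => exact ⟨M, subset_rfl, hM, by simp⟩
  | insert _ _ hnotmem ih =>
    obtain ⟨N, hNM, hN, hdec⟩ := ih
    obtain ⟨N', hN'N, hN', hdec'⟩ := decide_step (P := P) _ hN
    refine ⟨N', hN'N.trans hNM, hN', ?_⟩
    intro s hs
    rcases Finset.mem_insert.mp hs with rfl | hs
    · exact hdec'
    · exact decide_persists hN'N (hdec s hs)

/-- If `P t` holds then every set accepts `t`. -/
theorem acc_of_P {t : Finset ℕ} (hP : P t) (W : Set ℕ) : Acc P W t := by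
  intro X hX
  exact ⟨t, hX.2.1, fun b hb hbt => hX.2.2.2 b hb hbt, hP⟩

theorem not_P_of_rej {M : Set ℕ} (hM : M.Infinite) {t : Finset ℕ} (h : Rej P M t) :
    ¬ P t := fun hP =>
  h (cut t M) (cut_subset t M) (cut_infinite hM t) (acc_of_P hP _)

/-- Key finiteness: if `W` rejects `s`, only finitely many one-point extensions
are accepted by `W`. -/
theorem finite_accept_set {W : Set ℕ} {s : Finset ℕ} (hrej : Rej P W s) :
    {m ∈ cut s W | Acc P W (insert m s)}.Finite := by
  classical
  by_contra hinf
  replace hinf : Set.Infinite {m ∈ cut s W | Acc P W (insert m s)} := hinf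
  apply hrej {m ∈ cut s W | Acc P W (insert m s)}
    (fun m hm => (cut_subset s W) hm.1) hinf
  intro X hX
  obtain ⟨hXinf, hsX, hXsub, hinit⟩ := hX
  have hne : (X \ ↑s).Nonempty := ((hXinf.diff (s.finite_toSet)).nonempty)
  set m := sInf (X \ ↑s) with hm
  have hmX : m ∈ X \ ↑s := Nat.sInf_mem hne
  have hmA : m ∈ cut s W ∧ Acc P W (insert m s) := by
    rcases hXsub hmX.1 with h | h
    · exact absurd h hmX.2
    · exact h
  apply hmA.2 X
  refine ⟨hXinf, ?_, ?_, ?_⟩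
  · intro a ha
    rcases Finset.mem_insert.mp (by exact_mod_cast ha) with rfl | ha'
    · exact hmX.1
    · exact hsX ha'
  · intro b hb
    rcases hXsub hb with h | h
    · exact Or.inl (by exact_mod_cast Finset.mem_insert_of_mem (by exact_mod_cast h))
    · exact Or.inr (h.1.1)
  · intro b hb hbm a ha
    rcases Finset.mem_insert.mp ha with rfl | ha'
    · have hbs : b ∉ (s : Set ℕ) := by
        intro hbs
        exact hbm (by exact_mod_cast Finset.mem_insert_of_mem (by exact_mod_cast hbs))
      have : m ≤ b := Nat.sInf_le ⟨hb, hbs⟩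
      rcases lt_or_eq_of_le this with h | h
      · exact h
      · subst h; exact absurd (Finset.mem_insert_self m s) hbm
    · refine hinit b hb ?_ a ha'
      intro hbs
      exact hbm (by exact_mod_cast Finset.mem_insert_of_mem hbs)

section Fusion

variable (P : Finset ℕ → Prop)

theorem step_ex (B : Finset ℕ) {N : Set ℕ} (hN : N.Infinite) :
    ∃ p : ℕ × Set ℕ, p.1 ∈ N ∧ p.2 ⊆ N ∧ p.2.Infinite ∧ (∀ n ∈ p.2, p.1 < n) ∧
      ∀ s ∈ (insert p.1 B).powerset, Acc P p.2 s ∨ Rej P p.2 s := by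
  obtain ⟨b, hb⟩ := hN.nonempty
  have hplus : ({n ∈ N | b < n} : Set ℕ).Infinite := by
    apply (hN.diff (Set.finite_Iic b)).mono
    rintro n ⟨hn, hn'⟩
    simp only [Set.mem_Iic, not_le] at hn'
    exact ⟨hn, hn'⟩
  obtain ⟨N', hN'sub, hN', hdec⟩ := decide_finset (P := P) ((insert b B).powerset) hplus
  exact ⟨(b, N'), hb, hN'sub.trans (fun n hn => hn.1), hN',
    fun n hn => (hN'sub hn).2, hdec⟩

variable (M : Set ℕ)

/-- State for the fusion construction. -/
def FState : Type :=
  {p : Finset ℕ × Set ℕ // p.2.Infinite ∧ p.2 ⊆ M ∧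
    ∀ s ∈ p.1.powerset, Acc P p.2 s ∨ Rej P p.2 s}

variable {P M}

theorem fstep_ex (st : FState P M) :
    ∃ q : FState P M × ℕ, q.2 ∈ st.1.2 ∧ q.1.1.1 = insert q.2 st.1.1 ∧
      q.1.1.2 ⊆ st.1.2 ∧ ∀ n ∈ q.1.1.2, q.2 < n := by
  obtain ⟨⟨b, N'⟩, hb, hsub, hinf, hgt, hdec⟩ := step_ex P st.1.1 st.2.1
  exact ⟨(⟨(insert b st.1.1, N'), hinf, hsub.trans st.2.2.1, hdec⟩, b), hb, rfl, hsub, hgt⟩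

noncomputable def fstep (st : FState P M) : FState P M := (fstep_ex st).choose.1

noncomputable def fb (st : FState P M) : ℕ := (fstep_ex st).choose.2

theorem fstep_spec (st : FState P M) :
    fb st ∈ st.1.2 ∧ (fstep st).1.1 = insert (fb st) st.1.1 ∧
      (fstep st).1.2 ⊆ st.1.2 ∧ ∀ n ∈ (fstep st).1.2, fb st < n :=
  (fstep_ex st).choose_spec

variable (P)

theorem exists_deciding {M : Set ℕ} (hM : M.Infinite) :
    ∃ M₁, M₁ ⊆ M ∧ M₁.Infinite ∧
      ∀ s : Finset ℕ, ↑s ⊆ M₁ → (Acc P M₁ s ∨ Rej P M₁ s) := by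
  classical
  obtain ⟨N₀, hN₀M, hN₀, hdec₀⟩ := decide_finset (P := P) ((∅ : Finset ℕ).powerset) hM
  set init : FState P M := ⟨((∅ : Finset ℕ), N₀), hN₀, hN₀M, hdec₀⟩ with hinit
  set FS : ℕ → FState P M := fun k => Nat.rec init (fun _ st => fstep st) k with hFS
  have hFSsucc : ∀ k, FS (k + 1) = fstep (FS k) := fun k => rfl
  set Bk : ℕ → Finset ℕ := fun k => (FS k).1.1 with hBk
  set Nk : ℕ → Set ℕ := fun k => (FS k).1.2 with hNk
  set bk : ℕ → ℕ := fun k => fb (FS k) with hbk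
  have spec : ∀ k, bk k ∈ Nk k ∧ Bk (k+1) = insert (bk k) (Bk k) ∧
      Nk (k+1) ⊆ Nk k ∧ ∀ n ∈ Nk (k+1), bk k < n := fun k => fstep_spec (FS k)
  have Nmono : ∀ i j, i ≤ j → Nk j ⊆ Nk i := by
    intro i j hij
    induction j with
    | zero => cases Nat.le_zero.mp hij; exact subset_rfl
    | succ j ih =>
      rcases Nat.le_succ_iff_eq_or_le.mp hij with rfl | h
      · exact subset_rfl
      · exact (spec j).2.2.1.trans (ih h)
  have NsubM : ∀ k, Nk k ⊆ M := fun k => (FS k).2.2.1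
  have Ndec : ∀ k, ∀ s ∈ (Bk k).powerset, Acc P (Nk k) s ∨ Rej P (Nk k) s :=
    fun k => (FS k).2.2.2
  have bmem : ∀ k, bk k ∈ Nk k := fun k => (spec k).1
  have bmono : StrictMono bk := by
    apply strictMono_nat_of_lt_succ
    intro k
    exact (spec k).2.2.2 (bk (k+1)) (bmem (k+1))
  have bmemj : ∀ i k, i ≤ k → bk k ∈ Nk i := fun i k hik => Nmono i k hik (bmem k)
  have Bkeq : ∀ k, Bk k = Finset.image bk (Finset.range k) := by
    intro k
    induction k with
    | zero => simp [hBk, hFS, hinit]; rfl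
    | succ k ih => rw [(spec k).2.1, ih, Finset.range_add_one, Finset.image_insert]
  refine ⟨Set.range bk, ?_, Set.infinite_range_of_injective bmono.injective, ?_⟩
  · rintro _ ⟨k, rfl⟩
    exact NsubM k (bmem k)
  intro s hs
  -- find the right stage j with s ⊆ Bk j and cut s (range bk) ⊆ Nk j
  rcases s.eq_empty_or_nonempty with rfl | hne
  · have hcut : cut ∅ (Set.range bk) ⊆ Nk 0 := by
      rintro _ ⟨⟨k, rfl⟩, -⟩
      exact bmemj 0 k (Nat.zero_le k)
    have hdec := Ndec 0 ∅ (Finset.mem_powerset.mpr (by simp [Bkeq]))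
    rcases hdec with h | h
    · left
      rw [acc_cut_iff]
      exact acc_mono hcut h
    · right
      intro Y hY hYinf hacc
      have : Acc P (cut ∅ Y) ∅ := (acc_cut_iff _ _).mp hacc
      exact h (cut ∅ Y) ((cut_mono ∅ hY).trans hcut) (cut_infinite hYinf ∅) this
  · obtain ⟨j, hj⟩ : ∃ j, s.max' hne = bk j := by
      have := hs (s.max'_mem hne)
      exact ⟨this.choose, this.choose_spec.symm⟩
    have hsB : s ⊆ Bk (j + 1) := by
      intro a ha
      obtain ⟨i, hi⟩ : ∃ i, a = bk i := by
        have := hs ha; exact ⟨this.choose, this.choose_spec.symm⟩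
      have hile : i ≤ j := by
        by_contra hgt
        push_neg at hgt
        have : bk j < bk i := bmono hgt
        rw [← hj, ← hi] at this
        exact absurd (s.le_max' a ha) (not_le.mpr this)
      rw [Bkeq (j+1), hi]
      exact Finset.mem_image_of_mem bk (Finset.mem_range.mpr (Nat.lt_succ_of_le hile))
    have hcut : cut s (Set.range bk) ⊆ Nk (j + 1) := by
      rintro _ ⟨⟨k, rfl⟩, hgt⟩
      have : bk j < bk k := hgt _ (hj ▸ s.max'_mem hne)
      exact bmemj (j+1) k (Nat.succ_le_of_lt (bmono.lt_iff_lt.mp this))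
    rcases Ndec (j+1) s (Finset.mem_powerset.mpr hsB) with h | h
    · left
      rw [acc_cut_iff]
      exact acc_mono hcut h
    · right
      intro Y hY hYinf hacc
      have : Acc P (cut s Y) s := (acc_cut_iff _ _).mp hacc
      exact h (cut s Y) ((cut_mono s hY).trans hcut) (cut_infinite hYinf s) this

end Fusion

section Construction

variable (P : Finset ℕ → Prop)

theorem step2 {M₁ : Set ℕ} (hM₁ : M₁.Infinite)
    (hdec : ∀ s : Finset ℕ, ↑s ⊆ M₁ → (Acc P M₁ s ∨ Rej P M₁ s))
    (D : Finset ℕ) (hD : ↑D ⊆ M₁) (hrej : ∀ s ⊆ D, Rej P M₁ s) (bound : ℕ) :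
    ∃ c ∈ M₁, bound < c ∧ (∀ a ∈ D, a < c) ∧ ∀ s ⊆ D, Rej P M₁ (insert c s) := by
  classical
  have hBad : (⋃ s ∈ D.powerset, {m ∈ cut s M₁ | Acc P M₁ (insert m s)}).Finite := by
    apply Set.Finite.biUnion (D.powerset.finite_toSet)
    intro s hs
    exact finite_accept_set (hrej s (Finset.mem_powerset.mp hs))
  have : (M₁ \ ((⋃ s ∈ D.powerset, {m ∈ cut s M₁ | Acc P M₁ (insert m s)}) ∪
      Set.Iic (max bound (D.sup id)))).Infinite :=
    hM₁.diff (hBad.union (Set.finite_Iic _))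
  obtain ⟨c, hc⟩ := this.nonempty
  simp only [Set.mem_diff, Set.mem_union, not_or, Set.mem_Iic, not_le, lt_max_iff,
    sup_lt_iff, max_lt_iff] at hc
  obtain ⟨hcM, hcBad, hcb⟩ := hc
  have hcb1 : bound < c := hcb.1
  have hcD : ∀ a ∈ D, a < c := fun a ha =>
    lt_of_le_of_lt (Finset.le_sup (f := id) ha) hcb.2
  refine ⟨c, hcM, hcb1, hcD, ?_⟩
  intro s hsD
  have hscM : ↑(insert c s) ⊆ M₁ := by
    intro a ha
    rcases Finset.mem_insert.mp (by exact_mod_cast ha) with rfl | h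
    · exact hcM
    · exact hD (hsD h)
  rcases hdec (insert c s) hscM with h | h
  · exfalso
    apply hcBad
    rw [Set.mem_iUnion₂]
    refine ⟨s, Finset.mem_powerset.mpr hsD, ⟨hcM, fun a ha => hcD a (hsD ha)⟩, h⟩
  · exact h

variable (M₁ : Set ℕ)

def CState : Type :=
  {q : Finset ℕ × ℕ // ↑q.1 ⊆ M₁ ∧ (∀ a ∈ q.1, a ≤ q.2) ∧ ∀ s ⊆ q.1, Rej P M₁ s}

variable {P M₁}

theorem cstep_ex (hM₁ : M₁.Infinite)
    (hdec : ∀ s : Finset ℕ, ↑s ⊆ M₁ → (Acc P M₁ s ∨ Rej P M₁ s))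
    (st : CState P M₁) :
    ∃ q : CState P M₁ × ℕ, q.2 ∈ M₁ ∧ st.1.2 < q.2 ∧
      q.1.1.1 = insert q.2 st.1.1 ∧ q.1.1.2 = q.2 := by
  obtain ⟨c, hcM, hbc, hcD, hrej'⟩ := step2 P hM₁ hdec st.1.1 st.2.1 st.2.2.2 st.1.2
  refine ⟨(⟨(insert c st.1.1, c), ?_, ?_, ?_⟩, c), hcM, hbc, rfl, rfl⟩
  · intro a ha
    rcases Finset.mem_insert.mp (by exact_mod_cast ha) with rfl | h
    · exact hcM
    · exact st.2.1 h
  · intro a ha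
    rcases Finset.mem_insert.mp ha with rfl | h
    · exact le_rfl
    · exact le_of_lt (lt_of_le_of_lt (st.2.2.1 a h) hbc)
  · intro s hs
    classical
    by_cases hcs : c ∈ s
    · have : s = insert c (s.erase c) := by
        rw [Finset.insert_erase hcs]
      rw [this]
      apply hrej' (s.erase c)
      intro a ha
      have ha' := hs (Finset.mem_of_mem_erase ha)
      rcases Finset.mem_insert.mp ha' with rfl | h
      · exact absurd rfl (Finset.ne_of_mem_erase ha)
      · exact h
    · apply st.2.2.2
      intro a ha
      rcases Finset.mem_insert.mp (hs ha) with rfl | h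
      · exact absurd ha hcs
      · exact h

/-- Galvin's lemma: the open Ramsey dichotomy. -/
theorem galvin_dichotomy (P : Finset ℕ → Prop) {M : Set ℕ} (hM : M.Infinite) :
    (∃ N, N ⊆ M ∧ N.Infinite ∧ ∀ t : Finset ℕ, ↑t ⊆ N → ¬ P t) ∨
    (∃ N, N ⊆ M ∧ N.Infinite ∧ ∀ X : Set ℕ, X ⊆ N → X.Infinite → Hits P X) := by
  classical
  obtain ⟨M₁, hM₁M, hM₁, hdec⟩ := exists_deciding P hM
  rcases hdec ∅ (by simp) with hacc | hrej
  · right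
    refine ⟨M₁, hM₁M, hM₁, ?_⟩
    intro X hX hXinf
    exact hacc X ⟨hXinf, by simp, by simpa using hX, by simp⟩
  · left
    have hrej0 : ∀ s ⊆ (∅ : Finset ℕ), Rej P M₁ s := by
      intro s hs
      rw [Finset.subset_empty.mp hs]
      exact hrej
    set init : CState P M₁ := ⟨((∅ : Finset ℕ), 0), by simp, by simp, hrej0⟩ with hinit
    set CS : ℕ → CState P M₁ := fun k =>
      Nat.rec init (fun _ st => (cstep_ex hM₁ hdec st).choose.1) k with hCS
    set ck : ℕ → ℕ := fun k => (cstep_ex hM₁ hdec (CS k)).choose.2 with hck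
    have spec : ∀ k, ck k ∈ M₁ ∧ (CS k).1.2 < ck k ∧
        (CS (k+1)).1.1 = insert (ck k) (CS k).1.1 ∧ (CS (k+1)).1.2 = ck k :=
      fun k => (cstep_ex hM₁ hdec (CS k)).choose_spec
    have ckmono : StrictMono ck := by
      apply strictMono_nat_of_lt_succ
      intro k
      have h1 := (spec (k+1)).2.1
      rw [(spec k).2.2.2] at h1
      exact h1
    have Dkeq : ∀ k, (CS k).1.1 = Finset.image ck (Finset.range k) := by
      intro k
      induction k with
      | zero => simp [hCS, hinit]; rfl
      | succ k ih => rw [(spec k).2.2.1, ih, Finset.range_add_one, Finset.image_insert]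
    refine ⟨Set.range ck, ?_, Set.infinite_range_of_injective ckmono.injective, ?_⟩
    · rintro _ ⟨k, rfl⟩
      exact hM₁M ((spec k).1)
    intro t ht
    suffices h : Rej P M₁ t by exact not_P_of_rej hM₁ h
    rcases t.eq_empty_or_nonempty with rfl | hne
    · exact hrej
    · obtain ⟨j, hj⟩ : ∃ j, t.max' hne = ck j := by
        have := ht (t.max'_mem hne)
        exact ⟨this.choose, this.choose_spec.symm⟩
      have htD : t ⊆ (CS (j+1)).1.1 := by
        intro a ha
        obtain ⟨i, hi⟩ : ∃ i, a = ck i := by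
          have := ht ha; exact ⟨this.choose, this.choose_spec.symm⟩
        have hile : i ≤ j := by
          by_contra hgt
          push_neg at hgt
          have : ck j < ck i := ckmono hgt
          rw [← hj, ← hi] at this
          exact absurd (t.le_max' a ha) (not_le.mpr this)
        rw [Dkeq (j+1), hi]
        exact Finset.mem_image_of_mem ck (Finset.mem_range.mpr (Nat.lt_succ_of_le hile))
      exact (CS (j+1)).2.2.2 t htD

end Construction

section Enum

theorem enum_unique : ∀ (n : ℕ) (f g : ℕ → ℕ),
    (∀ a b, a < b → b < n → f a < f b) → (∀ a b, a < b → b < n → g a < g b) →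
    Finset.image f (Finset.range n) = Finset.image g (Finset.range n) →
    ∀ j, j < n → f j = g j := by
  intro n
  induction n with
  | zero => intro f g _ _ _ j hj; omega
  | succ n ih =>
    intro f g hf hg h j hj
    have hmax : ∀ (f : ℕ → ℕ), (∀ a b, a < b → b < n+1 → f a < f b) →
        ∀ y ∈ Finset.image f (Finset.range (n+1)), y ≤ f n := by
      intro f hf y hy
      simp only [Finset.mem_image, Finset.mem_range] at hy
      obtain ⟨a, ha, rfl⟩ := hy
      rcases Nat.lt_succ_iff_lt_or_eq.mp ha with h' | rfl
      · exact le_of_lt (hf a n h' (Nat.lt_succ_self n))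
      · exact le_rfl
    have hfg : f n = g n := by
      have h1 : f n ≤ g n := hmax g hg (f n)
        (h ▸ Finset.mem_image_of_mem f (Finset.mem_range.mpr (Nat.lt_succ_self n)))
      have h2 : g n ≤ f n := hmax f hf (g n)
        (h.symm ▸ Finset.mem_image_of_mem g (Finset.mem_range.mpr (Nat.lt_succ_self n)))
      omega
    have herase : ∀ (f : ℕ → ℕ), (∀ a b, a < b → b < n+1 → f a < f b) →
        Finset.image f (Finset.range n) = (Finset.image f (Finset.range (n+1))).erase (f n) := by
      intro f hf
      ext y
      simp only [Finset.mem_erase, Finset.mem_image, Finset.mem_range]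
      constructor
      · rintro ⟨a, ha, rfl⟩
        exact ⟨Nat.ne_of_lt (hf a n ha (Nat.lt_succ_self n)), a, Nat.lt_succ_of_lt ha, rfl⟩
      · rintro ⟨hne, a, ha, rfl⟩
        rcases Nat.lt_succ_iff_lt_or_eq.mp ha with h' | rfl
        · exact ⟨a, h', rfl⟩
        · exact absurd rfl hne
    have h' : Finset.image f (Finset.range n) = Finset.image g (Finset.range n) := by
      rw [herase f hf, herase g hg, h, hfg]
    rcases Nat.lt_succ_iff_lt_or_eq.mp hj with h'' | rfl
    · exact ih f g (fun a b hab hb => hf a b hab (Nat.lt_succ_of_lt hb))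
        (fun a b hab hb => hg a b hab (Nat.lt_succ_of_lt hb)) h' j h''
    · exact hfg

theorem initseg_image (ν : ℕ → ℕ) (hν : StrictMono ν) :
    ∀ (c : ℕ) (i : ℕ) (t : Finset ℕ), t.card = c → ↑t ⊆ ν '' Set.Ici i →
    (∀ b ∈ ν '' Set.Ici i, b ∉ t → ∀ a ∈ t, a < b) →
    t = Finset.image (fun j => ν (i + j)) (Finset.range c) := by
  intro c
  induction c with
  | zero =>
    intro i t hc _ _
    simp [Finset.card_eq_zero.mp hc]
  | succ c ih =>
    intro i t hc hsub hinit
    have hne : t.Nonempty := Finset.card_pos.mp (by omega)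
    have hνi : ν i ∈ t := by
      by_contra hni
      have h1 : ∀ a ∈ t, a < ν i := hinit (ν i) ⟨i, Set.mem_Ici.mpr le_rfl, rfl⟩ hni
      obtain ⟨a, ha⟩ := hne
      obtain ⟨j, hj, rfl⟩ := hsub ha
      exact absurd (h1 _ ha) (not_lt.mpr (hν.monotone hj))
    have h2 : t.erase (ν i) = Finset.image (fun j => ν (i + 1 + j)) (Finset.range c) := by
      apply ih
      · rw [Finset.card_erase_of_mem hνi, hc]
        omega
      · intro a ha
        obtain ⟨j, hj, rfl⟩ := hsub (Finset.mem_of_mem_erase ha)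
        have hj' : i ≤ j := hj
        refine ⟨j, ?_, rfl⟩
        have hji : j ≠ i := by
          intro hh
          exact (Finset.ne_of_mem_erase ha) (by rw [hh])
        exact Set.mem_Ici.mpr (by omega)
      · intro b hb hbt a ha
        obtain ⟨j, hj, rfl⟩ := hb
        have hj' : i + 1 ≤ j := hj
        have hbt' : ν j ∉ t := by
          intro hmem
          have hne' : ν j ≠ ν i := by
            intro hh
            have := hν.injective hh
            omega
          exact hbt (Finset.mem_erase.mpr ⟨hne', hmem⟩)
        exact hinit (ν j) ⟨j, Set.mem_Ici.mpr (by omega), rfl⟩ hbt' a (Finset.mem_of_mem_erase ha)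
    have h3 : t = insert (ν i) (t.erase (ν i)) := (Finset.insert_erase hνi).symm
    rw [h3, h2]
    ext y
    simp only [Finset.mem_insert, Finset.mem_image, Finset.mem_range]
    constructor
    · rintro (rfl | ⟨j, hj, rfl⟩)
      · exact ⟨0, Nat.succ_pos c, by simp⟩
      · exact ⟨j + 1, by omega, by rw [show i + (j+1) = i + 1 + j by omega]⟩
    · rintro ⟨j, hj, rfl⟩
      cases j with
      | zero => left; simp
      | succ j => right; exact ⟨j, by omega, by rw [show i + 1 + j = i + (j+1) by omega]⟩

end Enum

section Analysis

variable {E : Type*} [NormedAddCommGroup E] [NormedSpace ℝ E]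

/-- Average of `x` over a finite index set. -/
noncomputable def favg (x : ℕ → E) (F : Finset ℕ) : E := (F.card : ℝ)⁻¹ • ∑ a ∈ F, x a

/-- The bad coloring: `s` consists of a point `m` followed by two blocks of sizes
`k ≤ l` with `m ≤ k`, whose averages are more than `ε` apart. -/
def Pbad (x : ℕ → E) (ε : ℝ) (s : Finset ℕ) : Prop :=
  ∃ k l : ℕ, ∃ f : ℕ → ℕ, 1 ≤ k ∧ k ≤ l ∧
    (∀ a b, a < b → b < 1 + k + l → f a < f b) ∧
    s = Finset.image f (Finset.range (1 + k + l)) ∧ f 0 ≤ k ∧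
    ε < ‖(k : ℝ)⁻¹ • (∑ j ∈ Finset.Ico 1 (1 + k), x (f j)) -
        (l : ℝ)⁻¹ • (∑ j ∈ Finset.Ico (1 + k) (1 + k + l), x (f j))‖

theorem avg_close {x : ℕ → E} {ε : ℝ} {N : Set ℕ}
    (hP : ∀ t : Finset ℕ, ↑t ⊆ N → ¬ Pbad x ε t)
    {m : ℕ} (hm : m ∈ N) {F H : Finset ℕ} (hF : ↑F ⊆ N) (hH : ↑H ⊆ N)
    (hFne : F.Nonempty) (hcard : F.card ≤ H.card) (hmF : m ≤ F.card)
    (hmlt : ∀ a ∈ F, m < a) (hFH : ∀ a ∈ F, ∀ b ∈ H, a < b) :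
    ‖favg x F - favg x H‖ ≤ ε := by
  classical
  have hk1 : 1 ≤ F.card := Finset.card_pos.mpr hFne
  have hl1 : 1 ≤ H.card := le_trans hk1 hcard
  set f : ℕ → ℕ := fun j =>
    if j = 0 then m
    else if hj : j - 1 < F.card then F.orderEmbOfFin rfl ⟨j - 1, hj⟩
    else if hj' : j - 1 - F.card < H.card then H.orderEmbOfFin rfl ⟨j - 1 - F.card, hj'⟩
    else m + j with hfdef
  have hf0 : f 0 = m := by simp [hfdef]
  have hfF : ∀ j (h1 : 1 ≤ j) (h2 : j < 1 + F.card),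
      f j = F.orderEmbOfFin rfl ⟨j - 1, by omega⟩ := by
    intro j h1 h2
    simp only [hfdef]
    rw [if_neg (by omega), dif_pos (by omega)]
  have hfH : ∀ j (h1 : 1 + F.card ≤ j) (h2 : j < 1 + F.card + H.card),
      f j = H.orderEmbOfFin rfl ⟨j - 1 - F.card, by omega⟩ := by
    intro j h1 h2
    simp only [hfdef]
    rw [if_neg (by omega), dif_neg (by omega), dif_pos (by omega)]
  have hmono : ∀ a b, a < b → b < 1 + F.card + H.card → f a < f b := by
    intro a b hab hb
    rcases Nat.eq_zero_or_pos a with rfl | ha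
    · rw [hf0]
      rcases lt_or_ge b (1 + F.card) with h' | h'
      · rw [hfF b (by omega) h']
        exact hmlt _ (Finset.orderEmbOfFin_mem _ _ _)
      · rw [hfH b h' hb]
        obtain ⟨a₀, ha₀⟩ := hFne
        exact lt_trans (hmlt a₀ ha₀) (hFH a₀ ha₀ _ (Finset.orderEmbOfFin_mem _ _ _))
    · rcases lt_or_ge a (1 + F.card) with haF | haH
      · rcases lt_or_ge b (1 + F.card) with hbF | hbH
        · rw [hfF a ha haF, hfF b (by omega) hbF]
          exact (F.orderEmbOfFin rfl).strictMono (by rw [Fin.mk_lt_mk]; omega)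
        · rw [hfF a ha haF, hfH b hbH hb]
          exact hFH _ (Finset.orderEmbOfFin_mem _ _ _) _ (Finset.orderEmbOfFin_mem _ _ _)
      · rw [hfH a haH (by omega), hfH b (by omega) hb]
        exact (H.orderEmbOfFin rfl).strictMono (by rw [Fin.mk_lt_mk]; omega)
  have himgF : Finset.image (fun j => f (1 + j)) (Finset.range F.card) = F := by
    ext y
    simp only [Finset.mem_image, Finset.mem_range]
    constructor
    · rintro ⟨j, hj, rfl⟩
      rw [hfF (1 + j) (by omega) (by omega)]
      exact Finset.orderEmbOfFin_mem _ _ _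
    · intro hy
      have hy' : y ∈ Set.range (F.orderEmbOfFin rfl : Fin F.card ↪o ℕ) := by
        rw [Finset.range_orderEmbOfFin]; exact hy
      obtain ⟨i, rfl⟩ := hy'
      refine ⟨i, i.isLt, ?_⟩
      rw [hfF (1 + i) (by omega) (by omega)]
      congr 1
      ext
      simp only []
      omega
  have himgH : Finset.image (fun j => f (1 + F.card + j)) (Finset.range H.card) = H := by
    ext y
    simp only [Finset.mem_image, Finset.mem_range]
    constructor
    · rintro ⟨j, hj, rfl⟩
      rw [hfH (1 + F.card + j) (by omega) (by omega)]
      exact Finset.orderEmbOfFin_mem _ _ _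
    · intro hy
      have hy' : y ∈ Set.range (H.orderEmbOfFin rfl : Fin H.card ↪o ℕ) := by
        rw [Finset.range_orderEmbOfFin]; exact hy
      obtain ⟨i, rfl⟩ := hy'
      refine ⟨i, i.isLt, ?_⟩
      rw [hfH (1 + F.card + i) (by omega) (by omega)]
      congr 1
      ext
      simp only []
      omega
  have himg : insert m (F ∪ H) = Finset.image f (Finset.range (1 + F.card + H.card)) := by
    ext y
    simp only [Finset.mem_insert, Finset.mem_union, Finset.mem_image, Finset.mem_range]
    constructor
    · rintro (rfl | hy | hy)
      · exact ⟨0, by omega, hf0⟩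
      · rw [← himgF] at hy
        simp only [Finset.mem_image, Finset.mem_range] at hy
        obtain ⟨j, hj, rfl⟩ := hy
        exact ⟨1 + j, by omega, rfl⟩
      · rw [← himgH] at hy
        simp only [Finset.mem_image, Finset.mem_range] at hy
        obtain ⟨j, hj, rfl⟩ := hy
        exact ⟨1 + F.card + j, by omega, rfl⟩
    · rintro ⟨j, hj, rfl⟩
      rcases Nat.eq_zero_or_pos j with rfl | hj0
      · left; exact hf0
      rcases lt_or_ge j (1 + F.card) with h' | h'
      · right; left
        rw [hfF j hj0 h']
        exact Finset.orderEmbOfFin_mem _ _ _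
      · right; right
        rw [hfH j h' hj]
        exact Finset.orderEmbOfFin_mem _ _ _
  have hinj : ∀ (c : ℕ) (g : ℕ → ℕ), (∀ a ∈ Finset.range c, ∀ b ∈ Finset.range c,
      (∀ a' b', a' < b' → b' < c → g a' < g b') → True) → True := fun _ _ _ => trivial
  have hsumF : ∑ a ∈ F, x a = ∑ j ∈ Finset.range F.card, x (f (1 + j)) := by
    have hinjF : ∀ a ∈ Finset.range F.card, ∀ b ∈ Finset.range F.card,
        f (1 + a) = f (1 + b) → a = b := by
      intro a ha b hb hfab
      simp only [Finset.mem_range] at ha hb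
      rcases lt_trichotomy a b with h | h | h
      · exact absurd hfab (Nat.ne_of_lt (hmono (1+a) (1+b) (by omega) (by omega)))
      · exact h
      · exact absurd hfab.symm (Nat.ne_of_lt (hmono (1+b) (1+a) (by omega) (by omega)))
    have := Finset.sum_image (f := x) (g := fun j => f (1 + j)) hinjF
    rw [himgF] at this
    exact this
  have hsumH : ∑ a ∈ H, x a = ∑ j ∈ Finset.range H.card, x (f (1 + F.card + j)) := by
    have hinjH : ∀ a ∈ Finset.range H.card, ∀ b ∈ Finset.range H.card,
        f (1 + F.card + a) = f (1 + F.card + b) → a = b := by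
      intro a ha b hb hfab
      simp only [Finset.mem_range] at ha hb
      rcases lt_trichotomy a b with h | h | h
      · exact absurd hfab (Nat.ne_of_lt (hmono (1+F.card+a) (1+F.card+b) (by omega) (by omega)))
      · exact h
      · exact absurd hfab.symm (Nat.ne_of_lt (hmono (1+F.card+b) (1+F.card+a) (by omega) (by omega)))
    have := Finset.sum_image (f := x) (g := fun j => f (1 + F.card + j)) hinjH
    rw [himgH] at this
    exact this
  have hIcoF : ∑ j ∈ Finset.Ico 1 (1 + F.card), x (f j)
      = ∑ j ∈ Finset.range F.card, x (f (1 + j)) := by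
    have hc : 1 + F.card - 1 = F.card := by omega
    rw [Finset.sum_Ico_eq_sum_range, hc]
  have hIcoH : ∑ j ∈ Finset.Ico (1 + F.card) (1 + F.card + H.card), x (f j)
      = ∑ j ∈ Finset.range H.card, x (f (1 + F.card + j)) := by
    have hc : 1 + F.card + H.card - (1 + F.card) = H.card := by omega
    rw [Finset.sum_Ico_eq_sum_range, hc]
  by_contra hlt
  push_neg at hlt
  apply hP (insert m (F ∪ H)) ?_ 
  · refine ⟨F.card, H.card, f, hk1, hcard, hmono, himg, by rw [hf0]; exact hmF, ?_⟩
    rw [hIcoF, hIcoH, ← hsumF, ← hsumH]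
    exact hlt
  · intro a ha
    simp only [Finset.coe_insert, Set.mem_insert_iff, Finset.coe_union,
      Set.mem_union] at ha
    rcases ha with rfl | ha | ha
    · exact hm
    · exact hF ha
    · exact hH ha

end Analysis

section Right

variable {E : Type*} [NormedAddCommGroup E] [NormedSpace ℝ E]

theorem right_contradiction
    (h : ∀ z : ℕ → E, (∃ C : ℝ, ∀ n, ‖z n‖ ≤ C) →
      ∃ φ : ℕ → ℕ, StrictMono φ ∧ ∃ y : E,
        Filter.Tendsto (fun k : ℕ => (k : ℝ)⁻¹ • ∑ j ∈ Finset.range k, z (φ j))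
          Filter.atTop (nhds y))
    {x : ℕ → E} {C : ℝ} (hC : ∀ n, ‖x n‖ ≤ C)
    {ε : ℝ} (hε : 0 < ε) {N : Set ℕ} (hN : N.Infinite)
    (hacc : ∀ Y : Set ℕ, Y ⊆ N → Y.Infinite → Hits (Pbad x ε) Y) : False := by
  classical
  have hC0 : 0 ≤ C := le_trans (norm_nonneg (x 0)) (hC 0)
  have hstep : ∀ a : ℕ, ∃ b, b ∈ N ∧ a < b := by
    intro a
    obtain ⟨b, hb, hab⟩ := hN.exists_gt a
    exact ⟨b, hb, hab⟩
  set μ : ℕ → ℕ := fun j => Nat.rec (hstep 0).choose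
      (fun j prev => (hstep (max prev (2 ^ (j + 1)))).choose) j with hμ
  have hμ0 : μ 0 ∈ N ∧ 0 < μ 0 := (hstep 0).choose_spec
  have hμs : ∀ j, μ (j + 1) ∈ N ∧ max (μ j) (2 ^ (j + 1)) < μ (j + 1) :=
    fun j => (hstep (max (μ j) (2 ^ (j + 1)))).choose_spec
  have hμN : ∀ j, μ j ∈ N := by
    intro j
    cases j with
    | zero => exact hμ0.1
    | succ j => exact (hμs j).1
  have hμmono : StrictMono μ := strictMono_nat_of_lt_succ fun j =>
    lt_of_le_of_lt (le_max_left _ _) (hμs j).2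
  have hμpow : ∀ j, 2 ^ j ≤ μ j := by
    intro j
    cases j with
    | zero => exact hμ0.2
    | succ j => exact le_of_lt (lt_of_le_of_lt (le_max_right _ _) (hμs j).2)
  obtain ⟨σ, hσ, y, hy⟩ := h (fun j => x (μ j)) ⟨C, fun j => hC _⟩
  set ν : ℕ → ℕ := fun j => μ (σ j) with hνdef
  have hνmono : StrictMono ν := hμmono.comp hσ
  have hνN : ∀ j, ν j ∈ N := fun j => hμN _
  have hνpow : ∀ j, 2 ^ j ≤ ν j := fun j =>
    le_trans (Nat.pow_le_pow_right (by norm_num) hσ.le_apply) (hμpow (σ j))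
  set S : ℕ → E := fun t => ∑ j ∈ Finset.range t, x (ν j) with hS
  set A : ℕ → E := fun t => (t : ℝ)⁻¹ • S t with hA
  have hyA : Filter.Tendsto A Filter.atTop (nhds y) := hy
  have hSA : ∀ t : ℕ, S t = (t : ℝ) • A t := by
    intro t
    rcases Nat.eq_zero_or_pos t with rfl | ht
    · simp [hS, hA]
    · have htne : ((t : ℕ) : ℝ) ≠ 0 := Nat.cast_ne_zero.mpr (by omega)
      rw [hA]
      simp only []
      rw [smul_smul, mul_inv_cancel₀ htne, one_smul]
  have hAnorm : ∀ t : ℕ, ‖A t‖ ≤ C := by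
    intro t
    rcases Nat.eq_zero_or_pos t with rfl | ht
    · simp [hA, hS, hC0]
    · have h1 : ‖S t‖ ≤ (t : ℝ) * C := by
        calc ‖S t‖ ≤ ∑ j ∈ Finset.range t, ‖x (ν j)‖ := norm_sum_le _ _
        _ ≤ ∑ _j ∈ Finset.range t, C := Finset.sum_le_sum (fun j _ => hC _)
        _ = (t : ℝ) * C := by simp [mul_comm]
      have htpos : (0 : ℝ) < t := by exact_mod_cast ht
      calc ‖A t‖ = (t : ℝ)⁻¹ * ‖S t‖ := by
            rw [hA]; simp only []
            rw [norm_smul, Real.norm_eq_abs, abs_of_pos (by positivity)]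
      _ ≤ (t : ℝ)⁻¹ * ((t : ℝ) * C) := by
            apply mul_le_mul_of_nonneg_left h1 (by positivity)
      _ = C := by field_simp
  set C₂ : ℝ := C + ‖y‖ with hC₂
  have hC₂0 : 0 ≤ C₂ := by positivity
  have hAy : ∀ t, ‖A t - y‖ ≤ C₂ := fun t =>
    (norm_sub_le _ _).trans (add_le_add_left (hAnorm t) _)
  have hblock : ∀ a b : ℕ, 1 ≤ b →
      ‖(b : ℝ)⁻¹ • (S (a + b) - S a) - y‖ ≤
        ((a : ℝ) + b) / b * ‖A (a + b) - y‖ + (a : ℝ) / b * ‖A a - y‖ := by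
    intro a b hb
    have hbne : ((b : ℕ) : ℝ) ≠ 0 := Nat.cast_ne_zero.mpr (by omega)
    have hbpos : (0 : ℝ) < b := by exact_mod_cast hb
    have hid : (b : ℝ)⁻¹ • (S (a + b) - S a) - y
        = (b : ℝ)⁻¹ • (((a : ℝ) + b) • (A (a + b) - y) - (a : ℝ) • (A a - y)) := by
      have cancel : ∀ w : E, (b : ℝ) • ((b : ℝ)⁻¹ • w) = w := fun w => by
        rw [smul_smul, mul_inv_cancel₀ hbne, one_smul]
      apply smul_right_injective E hbne
      simp only []
      rw [smul_sub, cancel, cancel]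
      rw [hSA (a + b), hSA a]
      push_cast
      module
    rw [hid, norm_smul, Real.norm_eq_abs, abs_of_pos (by positivity)]
    have h2 : ‖((a : ℝ) + b) • (A (a + b) - y) - (a : ℝ) • (A a - y)‖ ≤
        ((a : ℝ) + b) * ‖A (a + b) - y‖ + (a : ℝ) * ‖A a - y‖ := by
      apply (norm_sub_le _ _).trans
      rw [norm_smul, norm_smul, Real.norm_eq_abs, Real.norm_eq_abs,
        abs_of_nonneg (by positivity), abs_of_nonneg (by positivity)]
    calc (b : ℝ)⁻¹ * ‖((a : ℝ) + b) • (A (a + b) - y) - (a : ℝ) • (A a - y)‖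
        ≤ (b : ℝ)⁻¹ * (((a : ℝ) + b) * ‖A (a + b) - y‖ + (a : ℝ) * ‖A a - y‖) :=
          mul_le_mul_of_nonneg_left h2 (by positivity)
      _ = ((a : ℝ) + b) / b * ‖A (a + b) - y‖ + (a : ℝ) / b * ‖A a - y‖ := by
          field_simp
  set δ : ℝ := ε / 15 with hδdef
  have hδ0 : 0 < δ := by positivity
  obtain ⟨T, hT⟩ := (Metric.tendsto_atTop.mp hyA) δ hδ0
  have hTn : ∀ t, T ≤ t → ‖A t - y‖ ≤ δ := fun t ht =>
    le_of_lt (by rw [← dist_eq_norm]; exact hT t ht)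
  have hsum : Summable (fun i : ℕ => ((i : ℝ) + 1) * (1 / 2) ^ i) := by
    have h1 := summable_pow_mul_geometric_of_norm_lt_one (R := ℝ) 1
      (r := 1 / 2) (by rw [Real.norm_eq_abs]; rw [abs_of_pos] <;> norm_num)
    have h2 : Summable (fun i : ℕ => ((1 : ℝ) / 2) ^ i) :=
      summable_geometric_of_lt_one (by norm_num) (by norm_num)
    apply (h1.add h2).congr
    intro i
    push_cast
    ring
  have hto0 : Filter.Tendsto (fun i : ℕ => ((i : ℝ) + 1) * (1 / 2) ^ i)
      Filter.atTop (nhds 0) := hsum.tendsto_atTop_zero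
  have hev1 : ∀ᶠ i : ℕ in Filter.atTop, ((i : ℝ) + 1) * (1 / 2) ^ i < δ / (C₂ + 1) :=
    hto0.eventually (gt_mem_nhds (by positivity))
  have hev2 : ∀ᶠ i : ℕ in Filter.atTop, T ≤ 2 ^ i :=
    Filter.eventually_atTop.mpr ⟨T, fun i hi => le_of_lt (lt_of_le_of_lt hi (Nat.lt_two_pow_self (n := i)))⟩
  obtain ⟨i, hri, hTi⟩ := (hev1.and hev2).exists
  -- basic facts about r = (i+1)/2^i
  have h2ipos : (0 : ℝ) < 2 ^ i := by positivity
  have hrdiv : ((i : ℝ) + 1) / 2 ^ i = ((i : ℝ) + 1) * (1 / 2) ^ i := by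
    rw [div_pow, one_pow]
    ring
  have hr1 : ((i : ℝ) + 1) / 2 ^ i ≤ 1 := by
    rw [div_le_one h2ipos]
    have : (i : ℕ) + 1 ≤ 2 ^ i := Nat.lt_two_pow_self (n := i)
    exact_mod_cast this
  have hrC : ((i : ℝ) + 1) / 2 ^ i * (C₂ + 1) < δ := by
    rw [hrdiv]
    rw [← lt_div_iff₀ (by positivity : (0:ℝ) < C₂ + 1)]
    exact hri
  -- apply the acceptance hypothesis to the tail of ν
  obtain ⟨t, htY, htinit, htP⟩ := hacc (ν '' Set.Ici i)
    (by rintro _ ⟨j, _, rfl⟩; exact hνN j)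
    ((Set.Ici_infinite i).image (hνmono.injective.injOn))
  have hts := initseg_image ν hνmono t.card i t rfl htY htinit
  obtain ⟨k, l, f, hk1, hkl, hfmono, hteq, hf0k, hnorm⟩ := htP
  have hfinj : ∀ a ∈ Finset.range (1 + k + l), ∀ b ∈ Finset.range (1 + k + l),
      f a = f b → a = b := by
    intro a ha b hb hfab
    simp only [Finset.mem_range] at ha hb
    rcases lt_trichotomy a b with h' | h' | h'
    · exact absurd hfab (Nat.ne_of_lt (hfmono a b h' hb))
    · exact h'
    · exact absurd hfab.symm (Nat.ne_of_lt (hfmono b a h' ha))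
  have hcard : t.card = 1 + k + l := by
    rw [hteq, Finset.card_image_of_injOn (by
      intro a ha b hb hab
      exact hfinj a (by exact_mod_cast ha) b (by exact_mod_cast hb) hab),
      Finset.card_range]
  have himg2 : Finset.image f (Finset.range (1 + k + l)) =
      Finset.image (fun j => ν (i + j)) (Finset.range (1 + k + l)) := by
    rw [← hteq, hts, hcard]
  have hfν : ∀ j, j < 1 + k + l → f j = ν (i + j) :=
    enum_unique (1 + k + l) f (fun j => ν (i + j)) hfmono
      (fun a b hab _ => hνmono (by omega)) himg2
  have hf0 : f 0 = ν i := by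
    have := hfν 0 (by omega)
    simpa using this
  have h2k : 2 ^ i ≤ k := le_trans (hνpow i) (by rw [← hf0]; exact hf0k)
  have h2l : 2 ^ i ≤ l := le_trans h2k hkl
  have hsum1 : ∑ j ∈ Finset.Ico 1 (1 + k), x (f j) = S (i + 1 + k) - S (i + 1) := by
    rw [hS]
    simp only []
    rw [← Finset.sum_Ico_eq_sub _ (by omega : i + 1 ≤ i + 1 + k),
      Finset.sum_Ico_eq_sum_range, Finset.sum_Ico_eq_sum_range]
    have hc1 : 1 + k - 1 = k := by omega
    have hc2 : i + 1 + k - (i + 1) = k := by omega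
    rw [hc1, hc2]
    apply Finset.sum_congr rfl
    intro j hj
    simp only [Finset.mem_range] at hj
    rw [hfν (1 + j) (by omega), show i + (1 + j) = i + 1 + j from by omega]
  have hsum2 : ∑ j ∈ Finset.Ico (1 + k) (1 + k + l), x (f j)
      = S (i + 1 + k + l) - S (i + 1 + k) := by
    rw [hS]
    simp only []
    rw [← Finset.sum_Ico_eq_sub _ (by omega : i + 1 + k ≤ i + 1 + k + l),
      Finset.sum_Ico_eq_sum_range, Finset.sum_Ico_eq_sum_range]
    have hc1 : 1 + k + l - (1 + k) = l := by omega
    have hc2 : i + 1 + k + l - (i + 1 + k) = l := by omega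
    rw [hc1, hc2]
    apply Finset.sum_congr rfl
    intro j hj
    simp only [Finset.mem_range] at hj
    rw [hfν (1 + k + j) (by omega), show i + (1 + k + j) = i + 1 + k + j from by omega]
  -- numeric bounds
  have hkpos : (0 : ℝ) < k := by
    have : (1 : ℕ) ≤ k := hk1
    exact_mod_cast Nat.lt_of_lt_of_le Nat.zero_lt_one this
  have hlpos : (0 : ℝ) < l := by
    have : (1 : ℕ) ≤ l := le_trans hk1 hkl
    exact_mod_cast Nat.lt_of_lt_of_le Nat.zero_lt_one this
  have h2kR : (2 : ℝ) ^ i ≤ k := by exact_mod_cast h2k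
  have h2lR : (2 : ℝ) ^ i ≤ l := by exact_mod_cast h2l
  have hklR : (k : ℝ) ≤ l := by exact_mod_cast hkl
  have hik : ((i : ℝ) + 1) / k ≤ ((i : ℝ) + 1) / 2 ^ i :=
    div_le_div_of_nonneg_left (by positivity) h2ipos h2kR
  have hil : ((i : ℝ) + 1) / l ≤ ((i : ℝ) + 1) / 2 ^ i :=
    div_le_div_of_nonneg_left (by positivity) h2ipos h2lR
  have hTk : T ≤ k := le_trans hTi h2k
  have hTl : T ≤ l := le_trans hTk hkl
  -- first block
  have hB1 := hblock (i + 1) k hk1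
  have hB2 := hblock (i + 1 + k) l (le_trans hk1 hkl)
  have hA1 : ‖A (i + 1 + k) - y‖ ≤ δ := hTn _ (by omega)
  have hA2 : ‖A (i + 1 + k + l) - y‖ ≤ δ := hTn _ (by omega)
  have hA3 : ‖A (i + 1) - y‖ ≤ C₂ := hAy _
  have hA1' : ‖A (i + 1 + k) - y‖ ≤ δ := hA1
  -- coefficients
  have hco1 : (((i + 1 : ℕ) : ℝ) + k) / k ≤ 2 := by
    push_cast
    rw [add_div, div_self (ne_of_gt hkpos)]
    have := hik.trans hr1
    linarith
  have hco2 : ((i + 1 : ℕ) : ℝ) / k * C₂ < δ := by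
    push_cast
    calc ((i : ℝ) + 1) / k * C₂ ≤ ((i : ℝ) + 1) / 2 ^ i * C₂ :=
          mul_le_mul_of_nonneg_right hik hC₂0
    _ ≤ ((i : ℝ) + 1) / 2 ^ i * (C₂ + 1) := by
          apply mul_le_mul_of_nonneg_left (by linarith) (by positivity)
    _ < δ := hrC
  have hbnd1 : ‖(k : ℝ)⁻¹ • (S (i + 1 + k) - S (i + 1)) - y‖ ≤ 3 * δ := by
    apply hB1.trans
    have e1 : (((i + 1 : ℕ) : ℝ) + k) / k * ‖A (i + 1 + k) - y‖ ≤ 2 * δ := by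
      apply mul_le_mul hco1 hA1 (norm_nonneg _) (by norm_num)
    have e2 : ((i + 1 : ℕ) : ℝ) / k * ‖A (i + 1) - y‖ ≤ δ := by
      calc ((i + 1 : ℕ) : ℝ) / k * ‖A (i + 1) - y‖
          ≤ ((i + 1 : ℕ) : ℝ) / k * C₂ := mul_le_mul_of_nonneg_left hA3 (by positivity)
      _ ≤ δ := le_of_lt hco2
    linarith
  have hco3 : (((i + 1 + k : ℕ) : ℝ) + l) / l ≤ 3 := by
    push_cast
    rw [add_div, add_div]
    have h1 := hil.trans hr1
    have h2 : (k : ℝ) / l ≤ 1 := by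
      rw [div_le_one hlpos]; exact hklR
    rw [div_self (ne_of_gt hlpos)]
    have h3 : (↑i:ℝ)/↑l + 1/↑l = ((i:ℝ)+1)/↑l := by ring
    linarith
  have hco4 : ((i + 1 + k : ℕ) : ℝ) / l ≤ 2 := by
    push_cast
    rw [add_div, add_div]
    have h1 := hil.trans hr1
    have h2 : (k : ℝ) / l ≤ 1 := by
      rw [div_le_one hlpos]; exact hklR
    have h3 : (↑i:ℝ)/↑l + 1/↑l = ((i:ℝ)+1)/↑l := by ring
    linarith
  have hbnd2 : ‖(l : ℝ)⁻¹ • (S (i + 1 + k + l) - S (i + 1 + k)) - y‖ ≤ 5 * δ := by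
    apply hB2.trans
    have e1 : (((i + 1 + k : ℕ) : ℝ) + l) / l * ‖A (i + 1 + k + l) - y‖ ≤ 3 * δ := by
      apply mul_le_mul hco3 hA2 (norm_nonneg _) (by norm_num)
    have e2 : ((i + 1 + k : ℕ) : ℝ) / l * ‖A (i + 1 + k) - y‖ ≤ 2 * δ := by
      apply mul_le_mul hco4 hA1' (norm_nonneg _) (by norm_num)
    linarith
  -- final contradiction
  rw [hsum1, hsum2] at hnorm
  have hfinal : ‖(k : ℝ)⁻¹ • (S (i + 1 + k) - S (i + 1)) -
      (l : ℝ)⁻¹ • (S (i + 1 + k + l) - S (i + 1 + k))‖ ≤ 8 * δ := by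
    have := norm_sub_le ((k : ℝ)⁻¹ • (S (i + 1 + k) - S (i + 1)) - y)
      ((l : ℝ)⁻¹ • (S (i + 1 + k + l) - S (i + 1 + k)) - y)
    have heq : (k : ℝ)⁻¹ • (S (i + 1 + k) - S (i + 1)) - y -
        ((l : ℝ)⁻¹ • (S (i + 1 + k + l) - S (i + 1 + k)) - y) =
        (k : ℝ)⁻¹ • (S (i + 1 + k) - S (i + 1)) -
        (l : ℝ)⁻¹ • (S (i + 1 + k + l) - S (i + 1 + k)) := by abel
    rw [heq] at this
    calc ‖_ - _‖ ≤ _ := this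
    _ ≤ 3 * δ + 5 * δ := add_le_add hbnd1 hbnd2
    _ = 8 * δ := by ring
  rw [hδdef] at hfinal
  have : ε < 8 * (ε / 15) := lt_of_lt_of_le hnorm hfinal
  linarith

end Right

section Key

variable {E : Type*} [NormedAddCommGroup E] [NormedSpace ℝ E]

theorem key
    (h : ∀ z : ℕ → E, (∃ C : ℝ, ∀ n, ‖z n‖ ≤ C) →
      ∃ φ : ℕ → ℕ, StrictMono φ ∧ ∃ y : E,
        Filter.Tendsto (fun k : ℕ => (k : ℝ)⁻¹ • ∑ j ∈ Finset.range k, z (φ j))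
          Filter.atTop (nhds y))
    {x : ℕ → E} {C : ℝ} (hC : ∀ n, ‖x n‖ ≤ C) {ε : ℝ} (hε : 0 < ε)
    {M : Set ℕ} (hM : M.Infinite) :
    ∃ N, N ⊆ M ∧ N.Infinite ∧ ∀ F H : Finset ℕ, ↑F ⊆ N → ↑H ⊆ N → F.Nonempty →
      F.card ≤ H.card → sInf N ≤ F.card → (∀ a ∈ F, sInf N < a) →
      (∀ a ∈ F, ∀ b ∈ H, a < b) → ‖favg x F - favg x H‖ ≤ ε := by
  rcases galvin_dichotomy (Pbad x ε) hM with ⟨N, hNM, hN, hno⟩ | ⟨N, hNM, hN, hacc⟩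
  · refine ⟨N, hNM, hN, ?_⟩
    intro F H hF hH hFne hcard hmF hmlt hFH
    exact avg_close hno (Nat.sInf_mem hN.nonempty) hF hH hFne hcard hmF hmlt hFH
  · exact (right_contradiction h hC hε hN hacc).elim

end Key

end RBS

theorem ramsey_banachSaks (X : Type*)
    [NormedAddCommGroup X] [NormedSpace ℝ X] [CompleteSpace X]
    (h : HasBanachSaks X) (x : ℕ → X) (hb : ∃ C : ℝ, ∀ n, ‖x n‖ ≤ C) :
    ∃ φ : ℕ → ℕ, StrictMono φ ∧ ∀ ψ : ℕ → ℕ, StrictMono ψ → ∃ y : X,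
      Tendsto (fun k : ℕ => (k : ℝ)⁻¹ • ∑ j ∈ Finset.range k, x (φ (ψ j))) atTop (𝓝 y) := by
  classical
  obtain ⟨C₀, hC₀⟩ := hb
  set C : ℝ := max C₀ 0 with hCdef
  have hC : ∀ n, ‖x n‖ ≤ C := fun n => (hC₀ n).trans (le_max_left _ _)
  have hC0 : 0 ≤ C := le_max_right _ _
  have hBS : ∀ z : ℕ → X, (∃ C : ℝ, ∀ n, ‖z n‖ ≤ C) →
      ∃ φ : ℕ → ℕ, StrictMono φ ∧ ∃ y : X,
        Tendsto (fun k : ℕ => (k : ℝ)⁻¹ • ∑ j ∈ Finset.range k, z (φ j)) atTop (𝓝 y) :=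
    fun z hz => h z hz
  -- the chain of refining sets
  have hstep : ∀ (i : ℕ) (M : Set ℕ), M.Infinite → ∃ N : Set ℕ,
      N ⊆ M \ {sInf M} ∧ N.Infinite ∧
      (∀ F H : Finset ℕ, ↑F ⊆ N → ↑H ⊆ N → F.Nonempty → F.card ≤ H.card →
        sInf N ≤ F.card → (∀ a ∈ F, sInf N < a) → (∀ a ∈ F, ∀ b ∈ H, a < b) →
        ‖RBS.favg x F - RBS.favg x H‖ ≤ (1/2 : ℝ)^i) := by
    intro i M hM
    have hM' : (M \ {sInf M}).Infinite := hM.diff (Set.finite_singleton _)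
    exact RBS.key hBS hC (pow_pos (by norm_num : (0:ℝ) < 1/2) i) hM'
  set G : ℕ → {N : Set ℕ // N.Infinite} := fun i => Nat.rec
      ⟨(hstep 0 Set.univ Set.infinite_univ).choose,
        (hstep 0 Set.univ Set.infinite_univ).choose_spec.2.1⟩
      (fun i prev => ⟨(hstep (i+1) prev.1 prev.2).choose,
        (hstep (i+1) prev.1 prev.2).choose_spec.2.1⟩) i with hGdef
  have hGsub : ∀ i, (G (i+1)).1 ⊆ (G i).1 \ {sInf (G i).1} :=
    fun i => (hstep (i+1) (G i).1 (G i).2).choose_spec.1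
  have hGQ : ∀ i, ∀ F H : Finset ℕ, ↑F ⊆ (G i).1 → ↑H ⊆ (G i).1 → F.Nonempty →
      F.card ≤ H.card → sInf (G i).1 ≤ F.card → (∀ a ∈ F, sInf (G i).1 < a) →
      (∀ a ∈ F, ∀ b ∈ H, a < b) → ‖RBS.favg x F - RBS.favg x H‖ ≤ (1/2 : ℝ)^i := by
    intro i
    cases i with
    | zero => exact (hstep 0 Set.univ Set.infinite_univ).choose_spec.2.2
    | succ i => exact (hstep (i+1) (G i).1 (G i).2).choose_spec.2.2
  have hGmono : ∀ i j, i ≤ j → (G j).1 ⊆ (G i).1 := by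
    intro i j hij
    induction j with
    | zero => cases Nat.le_zero.mp hij; exact subset_rfl
    | succ j ih =>
      rcases Nat.le_succ_iff_eq_or_le.mp hij with rfl | hij'
      · exact subset_rfl
      · exact ((hGsub j).trans Set.diff_subset).trans (ih hij')
  have hGgt : ∀ i, ∀ n ∈ (G (i+1)).1, sInf (G i).1 < n := by
    intro i n hn
    have h1 := hGsub i hn
    have h2 : sInf (G i).1 ≤ n := Nat.sInf_le h1.1
    have h3 : n ≠ sInf (G i).1 := by
      intro hh
      exact h1.2 (by simp [hh])
    omega
  -- the diagonal sequence
  have hd : ∀ (i a : ℕ), ∃ b, b ∈ (G i).1 ∧ a < b := by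
    intro i a
    obtain ⟨b, hb, hab⟩ := (G i).2.exists_gt a
    exact ⟨b, hb, hab⟩
  set d : ℕ → ℕ := fun i => Nat.rec (hd 0 0).choose (fun i prev => (hd (i+1) prev).choose) i
    with hddef
  have hd0 : d 0 ∈ (G 0).1 := (hd 0 0).choose_spec.1
  have hds : ∀ i, d (i+1) ∈ (G (i+1)).1 ∧ d i < d (i+1) :=
    fun i => (hd (i+1) (d i)).choose_spec
  have hdmem : ∀ i, d i ∈ (G i).1 := by
    intro i
    cases i with
    | zero => exact hd0
    | succ i => exact (hds i).1
  have hdmono : StrictMono d := strictMono_nat_of_lt_succ fun i => (hds i).2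
  refine ⟨d, hdmono, ?_⟩
  intro ψ hψ
  set z : ℕ → X := fun k => (k : ℝ)⁻¹ • ∑ j ∈ Finset.range k, x (d (ψ j)) with hzdef
  suffices hcauchy : CauchySeq z by
    obtain ⟨y, hy⟩ := cauchySeq_tendsto_of_complete hcauchy
    exact ⟨y, hy⟩
  -- helper: big finsets high up in any G i
  have hfin : ∀ (i : ℕ) (n B : ℕ), ∃ Hs : Finset ℕ, ↑Hs ⊆ (G i).1 ∧ Hs.card = n ∧
      ∀ b ∈ Hs, B < b := by
    intro i n
    induction n with
    | zero => intro B; exact ⟨∅, by simp, by simp, by simp⟩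
    | succ n ih =>
      intro B
      obtain ⟨Hs, h1, h2, h3⟩ := ih B
      obtain ⟨b, hbN, hbgt⟩ := (G i).2.exists_gt (max B (Hs.sup id))
      have hbHs : b ∉ Hs := by
        intro hmem
        exact absurd (lt_of_le_of_lt (le_max_of_le_right (Finset.le_sup (f := id) hmem)) hbgt)
          (lt_irrefl b)
      refine ⟨insert b Hs, ?_, ?_, ?_⟩
      · intro c hc
        rcases Finset.mem_insert.mp (by exact_mod_cast hc) with rfl | hc'
        · exact hbN
        · exact h1 hc'
      · rw [Finset.card_insert_of_notMem hbHs, h2]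
      · intro c hc
        rcases Finset.mem_insert.mp hc with rfl | hc'
        · exact lt_of_le_of_lt (le_max_left _ _) hbgt
        · exact h3 c hc'
  rw [Metric.cauchySeq_iff]
  intro ε hε
  obtain ⟨i, hi⟩ := exists_pow_lt_of_lt_one (show (0:ℝ) < ε/8 by positivity)
    (show (1:ℝ)/2 < 1 by norm_num)
  set i' : ℕ := i + 1 with hi'def
  set m₀ : ℕ := sInf (G i).1 with hm₀def
  obtain ⟨K₂, hK₂⟩ := exists_nat_gt (8 * C * (i' : ℝ) / ε)
  set K : ℕ := max (i' + m₀ + 2) (K₂ + 1) with hKdef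
  refine ⟨K, ?_⟩
  intro k hk l hl
  -- tail finsets
  set T : ℕ → Finset ℕ := fun k => Finset.image (fun j => d (ψ j)) (Finset.Ico i' k)
    with hTdef
  have hinj : ∀ (s : Finset ℕ), Set.InjOn (fun j => d (ψ j)) ↑s :=
    fun s => ((hdmono.comp hψ).injective).injOn
  have hTsub : ∀ k, ↑(T k) ⊆ (G i').1 := by
    intro k a ha
    simp only [hTdef, Finset.coe_image, Set.mem_image, Finset.mem_coe,
      Finset.mem_Ico] at ha
    obtain ⟨j, ⟨hj1, _⟩, rfl⟩ := ha
    exact hGmono i' (ψ j) (le_trans hj1 hψ.le_apply) (hdmem (ψ j))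
  have hTsubGi : ∀ k, ↑(T k) ⊆ (G i).1 := fun k =>
    (hTsub k).trans (((hGsub i).trans Set.diff_subset))
  have hTgt : ∀ k, ∀ a ∈ T k, m₀ < a := by
    intro k a ha
    exact hGgt i a ((hTsub k) (by exact_mod_cast ha))
  have hTcard : ∀ k, (T k).card = k - i' := by
    intro k
    rw [hTdef]
    simp only []
    rw [Finset.card_image_of_injOn (hinj _), Nat.card_Ico]
  have hTsum : ∀ k, ∑ a ∈ T k, x a = ∑ j ∈ Finset.Ico i' k, x (d (ψ j)) := by
    intro k
    rw [hTdef]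
    simp only []
    rw [Finset.sum_image (by
      intro a ha b hb hab
      exact hinj (Finset.Ico i' k) (by exact_mod_cast ha) (by exact_mod_cast hb) hab)]
  -- head estimate
  have hhead : ∀ k : ℕ, K ≤ k → ‖z k - RBS.favg x (T k)‖ ≤ 2 * C * (i' : ℝ) / k := by
    intro k hKk
    have hik : i' + 1 ≤ k := le_trans (le_trans (by omega) (le_max_left _ _)) hKk
    have hsplit : ∑ j ∈ Finset.range k, x (d (ψ j))
        = (∑ j ∈ Finset.range i', x (d (ψ j))) + ∑ j ∈ Finset.Ico i' k, x (d (ψ j)) :=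
      (Finset.sum_range_add_sum_Ico _ (by omega : i' ≤ k)).symm
    set Sh : X := ∑ j ∈ Finset.range i', x (d (ψ j)) with hSh
    set St : X := ∑ j ∈ Finset.Ico i' k, x (d (ψ j)) with hSt
    have ha0 : (0:ℝ) < (k:ℝ) := by exact_mod_cast (by omega : 0 < k)
    have hb0 : (0:ℝ) < ((k - i' : ℕ) : ℝ) := by exact_mod_cast (by omega : 0 < k - i')
    have hbcast : ((k - i' : ℕ) : ℝ) = (k : ℝ) - (i' : ℝ) := by
      rw [Nat.cast_sub (by omega : i' ≤ k)]
    have heq : z k - RBS.favg x (T k)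
        = (k:ℝ)⁻¹ • Sh + ((k:ℝ)⁻¹ - ((k - i' : ℕ):ℝ)⁻¹) • St := by
      have h1 : z k = (k:ℝ)⁻¹ • (Sh + St) := by
        rw [hzdef]
        simp only []
        rw [hsplit]
      have h2 : RBS.favg x (T k) = ((k - i' : ℕ):ℝ)⁻¹ • St := by
        simp only [RBS.favg]
        rw [hTcard, hTsum]
      rw [h1, h2, smul_add, sub_smul]
      abel
    have hSh_le : ‖Sh‖ ≤ (i' : ℝ) * C := by
      calc ‖Sh‖ ≤ ∑ j ∈ Finset.range i', ‖x (d (ψ j))‖ := norm_sum_le _ _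
      _ ≤ ∑ _j ∈ Finset.range i', C := Finset.sum_le_sum fun j _ => hC _
      _ = (i' : ℝ) * C := by simp [mul_comm]
    have hSt_le : ‖St‖ ≤ ((k - i' : ℕ) : ℝ) * C := by
      calc ‖St‖ ≤ ∑ j ∈ Finset.Ico i' k, ‖x (d (ψ j))‖ := norm_sum_le _ _
      _ ≤ ∑ _j ∈ Finset.Ico i' k, C := Finset.sum_le_sum fun j _ => hC _
      _ = ((k - i' : ℕ) : ℝ) * C := by
          rw [Finset.sum_const, Nat.card_Ico, nsmul_eq_mul]
    rw [heq]
    have h1 : ‖(k:ℝ)⁻¹ • Sh‖ ≤ (i' : ℝ) * C / k := by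
      rw [norm_smul, Real.norm_eq_abs, abs_of_pos (by positivity)]
      calc (k:ℝ)⁻¹ * ‖Sh‖ ≤ (k:ℝ)⁻¹ * ((i' : ℝ) * C) :=
            mul_le_mul_of_nonneg_left hSh_le (by positivity)
      _ = (i' : ℝ) * C / k := by ring
    have h2 : ‖((k:ℝ)⁻¹ - ((k - i' : ℕ):ℝ)⁻¹) • St‖ ≤ (i' : ℝ) * C / k := by
      rw [norm_smul, Real.norm_eq_abs]
      have habs : |(k:ℝ)⁻¹ - ((k - i' : ℕ):ℝ)⁻¹| = ((k - i' : ℕ):ℝ)⁻¹ - (k:ℝ)⁻¹ := by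
        rw [abs_sub_comm, abs_of_nonneg]
        apply sub_nonneg.mpr
        apply inv_anti₀ hb0
        rw [hbcast]
        have : (0:ℝ) ≤ (i' : ℝ) := by positivity
        linarith
      rw [habs]
      calc (((k - i' : ℕ):ℝ)⁻¹ - (k:ℝ)⁻¹) * ‖St‖
          ≤ (((k - i' : ℕ):ℝ)⁻¹ - (k:ℝ)⁻¹) * (((k - i' : ℕ) : ℝ) * C) := by
            apply mul_le_mul_of_nonneg_left hSt_le
            apply sub_nonneg.mpr
            apply inv_anti₀ hb0
            rw [hbcast]
            have : (0:ℝ) ≤ (i' : ℝ) := by positivity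
            linarith
      _ = (i' : ℝ) * C / k := by
            rw [hbcast]
            have hne1 : (k:ℝ) ≠ 0 := ne_of_gt ha0
            have hne2 : (k:ℝ) - (i':ℝ) ≠ 0 := by
              have h' := hb0
              rw [hbcast] at h'
              linarith
            field_simp
            ring
    calc ‖(k:ℝ)⁻¹ • Sh + ((k:ℝ)⁻¹ - ((k - i' : ℕ):ℝ)⁻¹) • St‖
        ≤ ‖(k:ℝ)⁻¹ • Sh‖ + ‖((k:ℝ)⁻¹ - ((k - i' : ℕ):ℝ)⁻¹) • St‖ := norm_add_le _ _
    _ ≤ (i' : ℝ) * C / k + (i' : ℝ) * C / k := add_le_add h1 h2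
    _ = 2 * C * (i' : ℝ) / k := by ring
  -- the common remote finset
  obtain ⟨Hs, hHs1, hHs2, hHs3⟩ := hfin i' (max k l - i') ((T (max k l)).sup id)
  have hHsGi : ↑Hs ⊆ (G i).1 := hHs1.trans ((hGsub i).trans Set.diff_subset)
  -- main middle estimate for any k' ≥ K
  have hmid : ∀ k' : ℕ, K ≤ k' → k' ≤ max k l →
      ‖RBS.favg x (T k') - RBS.favg x Hs‖ ≤ (1/2 : ℝ)^i := by
    intro k' hKk' hk'max
    apply hGQ i (T k') Hs (hTsubGi k') hHsGi
    · -- nonempty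
      rw [← Finset.card_pos, hTcard]
      have : i' + m₀ + 2 ≤ k' := le_trans (le_max_left _ _) hKk'
      omega
    · rw [hTcard, hHs2]
      omega
    · rw [hTcard]
      have h1 : i' + m₀ + 2 ≤ k' := le_trans (le_max_left _ _) hKk'
      omega
    · exact hTgt k'
    · intro a ha b hb
      have haT : a ∈ T (max k l) := by
        simp only [hTdef, Finset.mem_image, Finset.mem_Ico] at ha ⊢
        obtain ⟨j, ⟨hj1, hj2⟩, rfl⟩ := ha
        exact ⟨j, ⟨hj1, by omega⟩, rfl⟩
      exact lt_of_le_of_lt (Finset.le_sup (f := id) haT) (hHs3 b hb)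
  -- put it together
  have hkK : K ≤ k := hk
  have hlK : K ≤ l := hl
  have hdist : dist (z k) (z l) ≤ 2 * C * (i' : ℝ) / k + (1/2:ℝ)^i + (1/2:ℝ)^i
      + 2 * C * (i' : ℝ) / l := by
    rw [dist_eq_norm]
    have e1 := hhead k hkK
    have e2 := hmid k hkK (le_max_left _ _)
    have e3 := hmid l hlK (le_max_right _ _)
    have e4 := hhead l hlK
    calc ‖z k - z l‖ = ‖(z k - RBS.favg x (T k)) + (RBS.favg x (T k) - RBS.favg x Hs)
          + (RBS.favg x Hs - RBS.favg x (T l)) + (RBS.favg x (T l) - z l)‖ := by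
          congr 1
          abel
    _ ≤ ‖(z k - RBS.favg x (T k)) + (RBS.favg x (T k) - RBS.favg x Hs)
          + (RBS.favg x Hs - RBS.favg x (T l))‖ + ‖RBS.favg x (T l) - z l‖ := norm_add_le _ _
    _ ≤ ‖(z k - RBS.favg x (T k)) + (RBS.favg x (T k) - RBS.favg x Hs)‖
          + ‖RBS.favg x Hs - RBS.favg x (T l)‖ + ‖RBS.favg x (T l) - z l‖ := by
          apply add_le_add_left (norm_add_le _ _)
    _ ≤ ‖z k - RBS.favg x (T k)‖ + ‖RBS.favg x (T k) - RBS.favg x Hs‖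
          + ‖RBS.favg x Hs - RBS.favg x (T l)‖ + ‖RBS.favg x (T l) - z l‖ := by
          apply add_le_add_left (add_le_add_left (norm_add_le _ _) _)
    _ ≤ 2 * C * (i' : ℝ) / k + (1/2:ℝ)^i + (1/2:ℝ)^i + 2 * C * (i' : ℝ) / l := by
          apply add_le_add (add_le_add (add_le_add e1 e2) ?_) ?_
          · rw [norm_sub_rev]; exact e3
          · rw [norm_sub_rev]; exact e4
  -- numeric finish
  have hK2k : (K₂ : ℝ) ≤ k := by exact_mod_cast le_trans (by omega : K₂ ≤ K) hk
  have hK2l : (K₂ : ℝ) ≤ l := by exact_mod_cast le_trans (by omega : K₂ ≤ K) hl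
  have hK₂pos : (0:ℝ) < K₂ := lt_of_le_of_lt (by positivity) hK₂
  have hkpos : (0:ℝ) < (k:ℝ) := lt_of_lt_of_le hK₂pos hK2k
  have hlpos : (0:ℝ) < (l:ℝ) := lt_of_lt_of_le hK₂pos hK2l
  have hhk : 2 * C * (i' : ℝ) / k < ε / 4 := by
    rw [div_lt_iff₀ hkpos]
    have h1 : 8 * C * (i' : ℝ) / ε < k := lt_of_lt_of_le hK₂ hK2k
    rw [div_lt_iff₀ hε] at h1
    nlinarith [mul_le_mul_of_nonneg_left hK2k (le_of_lt hε)]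
  have hhl : 2 * C * (i' : ℝ) / l < ε / 4 := by
    rw [div_lt_iff₀ hlpos]
    have h1 : 8 * C * (i' : ℝ) / ε < l := lt_of_lt_of_le hK₂ hK2l
    rw [div_lt_iff₀ hε] at h1
    nlinarith [mul_le_mul_of_nonneg_left hK2l (le_of_lt hε)]
  calc dist (z k) (z l) ≤ 2 * C * (i' : ℝ) / k + (1/2:ℝ)^i + (1/2:ℝ)^i
      + 2 * C * (i' : ℝ) / l := hdist
  _ < ε / 4 + ε / 8 + ε / 8 + ε / 4 := by
      apply add_lt_add (add_lt_add (add_lt_add hhk hi) hi) hhl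
  _ ≤ ε := by linarith
end
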